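/- arXiv:1904.05174 — 8 statements merged into one kernel-verified Lean document; each statement's English description precedes it below -/
import Mathlib

section
/- Let p be an odd prime and n ≥ 1. In the holomorph Hol(D) of the dihedral group D = DihedralGroup(p^n) of order 2p^n, there exists a subgroup C that is cyclic of order 2p^n, acts regularly on D, and whose normalizer in Equiv.Perm D is contained in Hol(D). -/
/-- The holomorph of a group `X`: the normalizer in `Equiv.Perm X` of the image of the
left regular representation of `X`. -/
def Hol (X : Type*) [Group X] : Subgroup (Equiv.Perm X) :=
  Subgroup.normalizer ((MulAction.toPermHom X X).range : Set (Equiv.Perm X))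

/-- A subgroup `S` of `Equiv.Perm X` acts regularly on `X`: the action is transitive and
the stabilizer of every point is trivial. -/
def IsRegularSubgroup {X : Type*} (S : Subgroup (Equiv.Perm X)) : Prop :=
  (∀ x y : X, ∃ s ∈ S, s x = y) ∧ ∀ s ∈ S, ∀ x : X, s x = x → s = 1

namespace HolDihedralAux

open Equiv

/-- A `MulEquiv` between permutation groups induced by an equivalence of types. -/
def permMulEquiv {α β : Type*} (e : α ≃ β) : Equiv.Perm α ≃* Equiv.Perm β :=
  { e.permCongr with
    map_mul' := fun f g => Equiv.ext fun x => by
      simp [Equiv.Perm.mul_apply] }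

lemma permMulEquiv_apply {α β : Type*} (e : α ≃ β) (σ : Equiv.Perm α) (x : β) :
    permMulEquiv e σ x = e (σ (e.symm x)) := rfl

lemma zmod2_cases : ∀ x : ZMod 2, x = 0 ∨ x = 1 := by decide

lemma zmod2_add_add (x δ : ZMod 2) : x + δ + δ = x := by revert x δ; decide

variable {m : ℕ}

/-- The coordinate equivalence. -/
def eqv (m : ℕ) : (ZMod 2 × ZMod m) ≃ DihedralGroup m where
  toFun x := if x.1 = 0 then .r x.2 else .sr x.2
  invFun d := match d with
    | .r j => (0, j)
    | .sr j => (1, j)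
  left_inv := by
    rintro ⟨ε, j⟩
    rcases zmod2_cases ε with h | h <;> subst h <;>
      simp [(by decide : (1 : ZMod 2) ≠ 0)]
  right_inv := by
    rintro (j | j) <;> simp [(by decide : (1 : ZMod 2) ≠ 0)]

def sgn (m : ℕ) (ε : ZMod 2) : ZMod m := if ε = 0 then 1 else -1

lemma sgn_zero : sgn m 0 = 1 := if_pos rfl

lemma sgn_one : sgn m 1 = -1 := if_neg (by decide)

lemma sgn_add_mul (ε b : ZMod 2) : sgn m (ε + b) * sgn m b = sgn m ε := by
  rcases zmod2_cases ε with h | h <;> rcases zmod2_cases b with h' | h' <;>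
    subst h <;> subst h' <;>
    simp [sgn_zero, sgn_one, (by decide : (1 : ZMod 2) + 1 = 0)]

/-- The permutations corresponding to left translations of the dihedral group. -/
def mu (m : ℕ) (δ : ZMod 2) (a : ZMod m) : Equiv.Perm (ZMod 2 × ZMod m) where
  toFun x := (x.1 + δ, x.2 + sgn m x.1 * a)
  invFun x := (x.1 + δ, x.2 - sgn m (x.1 + δ) * a)
  left_inv := by
    rintro ⟨ε, j⟩
    simp only [zmod2_add_add]
    simp
  right_inv := by
    rintro ⟨ε, j⟩
    simp only [zmod2_add_add]
    simp

lemma mu_apply (δ : ZMod 2) (a : ZMod m) (ε : ZMod 2) (j : ZMod m) :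
    mu m δ a (ε, j) = (ε + δ, j + sgn m ε * a) := rfl

lemma phi_mu (δ : ZMod 2) (a : ZMod m) :
    permMulEquiv (eqv m) (mu m δ a)
      = MulAction.toPermHom (DihedralGroup m) (DihedralGroup m) (eqv m (δ, a)) := by
  ext x
  rcases zmod2_cases δ with h | h <;> subst h <;> rcases x with j | j <;>
    simp [permMulEquiv_apply, eqv, mu, sgn_zero, sgn_one, sgn,
      (by decide : (1 : ZMod 2) ≠ 0), (by decide : (1 : ZMod 2) + 1 = 0),
      smul_eq_mul, add_comm, sub_eq_add_neg]

def tau (m : ℕ) : Equiv.Perm (ZMod 2 × ZMod m) := Equiv.addLeft (1, 1)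

lemma smul_one_one (k : ℤ) :
    k • ((1, 1) : ZMod 2 × ZMod m) = ((k : ZMod 2), (k : ZMod m)) := by
  ext <;> simp [zsmul_eq_mul]

lemma addLeft_zpow' {α : Type*} [AddGroup α] (a : α) (k : ℤ) :
    Equiv.addLeft a ^ k = Equiv.addLeft (k • a) := by
  induction k using Int.induction_on with
  | zero => ext x; simp
  | succ i ih => rw [zpow_add_one, ih, add_zsmul, one_zsmul]; ext x; simp [add_assoc]
  | pred i ih =>
    rw [zpow_sub_one, ih, sub_zsmul, one_zsmul]; ext x
    simp [Equiv.Perm.inv_def, sub_eq_add_neg, add_assoc]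

lemma tau_zpow (k : ℤ) (x : ZMod 2 × ZMod m) :
    (tau m ^ k) x = ((k : ZMod 2), (k : ZMod m)) + x := by
  rw [tau, addLeft_zpow', ← smul_one_one]
  rfl

lemma exists_int [NeZero m] (hm : Odd m) (ε : ZMod 2) (j : ZMod m) :
    ∃ k : ℤ, (k : ZMod 2) = ε ∧ (k : ZMod m) = j := by
  refine ⟨((j.val + m * ((ε.val + j.val) % 2) : ℕ) : ℤ), ?_, ?_⟩
  · have h2 : ((m : ℕ) : ZMod 2) = 1 := by
      rw [← ZMod.natCast_mod, Nat.odd_iff.mp hm]; rfl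
    have h3 : ∀ a b : ZMod 2, b + (a + b) = a := by decide
    rw [Int.cast_natCast, Nat.cast_add, Nat.cast_mul, h2, one_mul, ZMod.natCast_mod,
      Nat.cast_add]
    simpa using h3 ε ((j.val : ZMod 2))
  · push_cast
    simp [ZMod.natCast_self, ZMod.natCast_val, ZMod.cast_id]

lemma conj_mu [NeZero m] (hm : Odd m) (f : Equiv.Perm (ZMod 2 × ZMod m))
    (hf : ∀ g, g ∈ Subgroup.zpowers (tau m) ↔ f * g * f⁻¹ ∈ Subgroup.zpowers (tau m))
    (δ : ZMod 2) (a : ZMod m) :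
    ∃ δ' a', f * mu m δ a * f⁻¹ = mu m δ' a' := by
  obtain ⟨u, hu⟩ := Subgroup.mem_zpowers_iff.mp ((hf (tau m)).mp (Subgroup.mem_zpowers _))
  have hconj : ∀ k : ℤ, f * tau m ^ k * f⁻¹ = tau m ^ (u * k) := by
    intro k
    rw [zpow_mul, hu, conj_zpow]
  have hpt : ∀ (k : ℤ) x, f ((tau m ^ k) x) = (tau m ^ (u * k)) (f x) := by
    intro k x
    have := congrArg (fun σ => σ (f x)) (hconj k)
    simpa [Equiv.Perm.mul_apply] using this
  set b := f (0, 0) with hb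
  have hfa : ∀ (ε : ZMod 2) (j : ZMod m),
      f (ε, j) = ((u : ZMod 2) * ε + b.1, (u : ZMod m) * j + b.2) := by
    intro ε j
    obtain ⟨k, hk1, hk2⟩ := exists_int hm ε j
    have h0 := hpt k (0, 0)
    rw [tau_zpow, tau_zpow] at h0
    rw [Prod.mk_add_mk, add_zero, add_zero, hk1, hk2] at h0
    rw [h0, ← hb, Int.cast_mul, Int.cast_mul, hk1, hk2]
    exact Prod.ext (by simp) (by simp)
  have hu2 : (u : ZMod 2) = 1 := by
    rcases zmod2_cases (u : ZMod 2) with h | h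
    · exfalso
      have h10 : f (1, 0) = f (0, 0) := by
        rw [hfa, hfa, h]
        simp
      have := f.injective h10
      exact (by decide : (1 : ZMod 2) ≠ 0) (congrArg Prod.fst this)
    · exact h
  refine ⟨δ, sgn m b.1 * (u : ZMod m) * a, ?_⟩
  rw [mul_inv_eq_iff_eq_mul]
  ext ⟨ε, j⟩
  · -- first components
    rw [Equiv.Perm.mul_apply, Equiv.Perm.mul_apply, mu_apply, hfa, hfa, mu_apply, hu2]
    simp only [one_mul, Prod.fst]
    ring
  · rw [Equiv.Perm.mul_apply, Equiv.Perm.mul_apply, mu_apply, hfa, hfa, mu_apply, hu2]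
    simp only [one_mul, Prod.snd]
    rw [show sgn m (ε + b.1) * (sgn m b.1 * (u : ZMod m) * a)
        = (sgn m (ε + b.1) * sgn m b.1) * ((u : ZMod m) * a) by ring, sgn_add_mul]
    ring

theorem main (m : ℕ) [NeZero m] (hm : Odd m) :
    ∃ C : Subgroup (Equiv.Perm (DihedralGroup m)),
      C ≤ Hol (DihedralGroup m) ∧ IsCyclic C ∧ Nat.card C = 2 * m ∧
      IsRegularSubgroup C ∧ Subgroup.normalizer (C : Set (Equiv.Perm (DihedralGroup m))) ≤ Hol (DihedralGroup m) := by
  classical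
  let Φ : Equiv.Perm (ZMod 2 × ZMod m) →* Equiv.Perm (DihedralGroup m) :=
    (permMulEquiv (eqv m)).toMonoidHom
  have hΦ : ∀ σ, Φ σ = permMulEquiv (eqv m) σ := fun _ => rfl
  have hinj : Function.Injective Φ := (permMulEquiv (eqv m)).injective
  have hsurj : Function.Surjective Φ := (permMulEquiv (eqv m)).surjective
  let T : Subgroup (Equiv.Perm (ZMod 2 × ZMod m)) := Subgroup.zpowers (tau m)
  let R : Subgroup (Equiv.Perm (DihedralGroup m)) :=
    (MulAction.toPermHom (DihedralGroup m) (DihedralGroup m)).range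
  let L : Subgroup (Equiv.Perm (ZMod 2 × ZMod m)) := R.comap Φ
  let C : Subgroup (Equiv.Perm (DihedralGroup m)) := T.map Φ
  have mem_L : ∀ σ, σ ∈ L ↔ ∃ δ a, σ = mu m δ a := by
    intro σ
    constructor
    · rintro ⟨d, hd⟩
      rcases d with j | j
      · refine ⟨0, j, hinj ?_⟩
        rw [← hd, hΦ, phi_mu]
        congr 1
      · refine ⟨1, j, hinj ?_⟩
        rw [← hd, hΦ, phi_mu]
        congr 1
    · rintro ⟨δ, a, rfl⟩
      exact ⟨eqv m (δ, a), (phi_mu δ a).symm⟩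
  have key : Subgroup.normalizer (T : Set (Equiv.Perm (ZMod 2 × ZMod m))) ≤ Subgroup.normalizer (L : Set (Equiv.Perm (ZMod 2 × ZMod m))) := by
    intro f hf
    have hfinv : f⁻¹ ∈ Subgroup.normalizer (T : Set (Equiv.Perm (ZMod 2 × ZMod m))) := (Subgroup.normalizer (T : Set (Equiv.Perm (ZMod 2 × ZMod m)))).inv_mem hf
    rw [Subgroup.mem_normalizer_iff] at hf hfinv ⊢
    intro g
    constructor
    · intro hg
      obtain ⟨δ, a, rfl⟩ := (mem_L g).mp hg
      obtain ⟨δ', a', h'⟩ := conj_mu hm f hf δ a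
      exact (mem_L _).mpr ⟨δ', a', h'⟩
    · intro hg
      obtain ⟨δ, a, hδ⟩ := (mem_L _).mp hg
      obtain ⟨δ', a', h'⟩ := conj_mu hm f⁻¹ hfinv δ a
      have hgg : g = f⁻¹ * (f * g * f⁻¹) * f⁻¹⁻¹ := by group
      rw [hgg, hδ, h']
      exact (mem_L _).mpr ⟨δ', a', rfl⟩
  have hnorm : Subgroup.normalizer (C : Set (Equiv.Perm (DihedralGroup m))) ≤ Hol (DihedralGroup m) := by
    have hTC : C.comap Φ = T := Subgroup.comap_map_eq_self_of_injective hinj T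
    have h1 : (Subgroup.normalizer (C : Set (Equiv.Perm (DihedralGroup m)))).comap Φ = Subgroup.normalizer (T : Set (Equiv.Perm (ZMod 2 × ZMod m))) := by
      rw [Subgroup.comap_normalizer_eq_of_surjective _ hsurj, hTC]
    have h2 : (Hol (DihedralGroup m)).comap Φ = Subgroup.normalizer (L : Set (Equiv.Perm (ZMod 2 × ZMod m))) := by
      rw [Hol, Subgroup.comap_normalizer_eq_of_surjective _ hsurj]
    have h3 : (Subgroup.normalizer (C : Set (Equiv.Perm (DihedralGroup m)))).comap Φ ≤ (Hol (DihedralGroup m)).comap Φ := by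
      rw [h1, h2]; exact key
    have h4 := Subgroup.map_mono (f := Φ) h3
    rwa [Subgroup.map_comap_eq_self_of_surjective hsurj,
      Subgroup.map_comap_eq_self_of_surjective hsurj] at h4
  have hreg : IsRegularSubgroup C := by
    constructor
    · intro x y
      obtain ⟨k, hk1, hk2⟩ := exists_int hm ((eqv m).symm y - (eqv m).symm x).1
        ((eqv m).symm y - (eqv m).symm x).2
      refine ⟨Φ (tau m ^ k),
        Subgroup.mem_map_of_mem Φ (Subgroup.zpow_mem _ (Subgroup.mem_zpowers _) k), ?_⟩
      show permMulEquiv (eqv m) (tau m ^ k) x = y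
      rw [permMulEquiv_apply, tau_zpow, hk1, hk2, Prod.mk.eta]
      simp
    · rintro s hs x hx
      obtain ⟨t, ht, rfl⟩ := hs
      obtain ⟨k, rfl⟩ := Subgroup.mem_zpowers_iff.mp ht
      have hx' : (tau m ^ k) ((eqv m).symm x) = (eqv m).symm x := by
        refine (eqv m).injective ?_
        rw [Equiv.apply_symm_apply]
        exact hx
      rw [tau_zpow] at hx'
      have hzero : ((k : ZMod 2), (k : ZMod m)) = (0 : ZMod 2 × ZMod m) :=
        add_eq_right.mp hx'
      have htk : tau m ^ k = 1 := by
        rw [tau, addLeft_zpow', smul_one_one, hzero, Equiv.addLeft_zero]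
      rw [htk, map_one]
  have hcard : Nat.card C = 2 * m := by
    have hbij : Function.Bijective
        (fun s : C => (s : Equiv.Perm (DihedralGroup m)) 1) := by
      constructor
      · rintro ⟨s, hs⟩ ⟨t, ht⟩ h
        simp only at h
        have hmem : s⁻¹ * t ∈ C := mul_mem (inv_mem hs) ht
        have h1 : (s⁻¹ * t) (1 : DihedralGroup m) = 1 := by
          rw [Equiv.Perm.mul_apply, ← h, Equiv.Perm.inv_def, Equiv.symm_apply_apply]
        have := hreg.2 _ hmem _ h1
        exact Subtype.ext (inv_mul_eq_one.mp this)
      · intro y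
        obtain ⟨s, hs, hy⟩ := hreg.1 1 y
        exact ⟨⟨s, hs⟩, hy⟩
    rw [Nat.card_eq_of_bijective _ hbij, Nat.card_eq_fintype_card, DihedralGroup.card]
  have hcyc : IsCyclic C := by
    have hzp : C = Subgroup.zpowers (Φ (tau m)) := MonoidHom.map_zpowers Φ (tau m)
    refine ⟨⟨Φ (tau m), hzp ▸ Subgroup.mem_zpowers _⟩, ?_⟩
    rintro ⟨x, hx⟩
    obtain ⟨k, hk⟩ := Subgroup.mem_zpowers_iff.mp (hzp ▸ hx)
    exact Subgroup.mem_zpowers_iff.mpr ⟨k, Subtype.ext (by simpa using hk)⟩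
  exact ⟨C, le_trans Subgroup.le_normalizer hnorm, hcyc, hcard, hreg, hnorm⟩

end HolDihedralAux

/-- In the holomorph of the dihedral group `D = DihedralGroup (p ^ n)` of order `2 p ^ n`
(`p` an odd prime, `n ≥ 1`) there is a cyclic subgroup of order `2 p ^ n` acting regularly
on `D` whose normalizer in `Equiv.Perm D` is contained in the holomorph. -/
theorem cyclic_regular_in_hol_dihedral (p n : ℕ) (hp : p.Prime) (hodd : Odd p) (hn : 1 ≤ n) :
    ∃ C : Subgroup (Equiv.Perm (DihedralGroup (p ^ n))),
      C ≤ Hol (DihedralGroup (p ^ n)) ∧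
      IsCyclic C ∧ Nat.card C = 2 * p ^ n ∧
      IsRegularSubgroup C ∧
      Subgroup.normalizer (C : Set (Equiv.Perm (DihedralGroup (p ^ n)))) ≤ Hol (DihedralGroup (p ^ n)) := by
  have : NeZero (p ^ n) := ⟨pow_ne_zero n hp.pos.ne'⟩
  exact HolDihedralAux.main (p ^ n) hodd.pow
end

section
/- (Theorem 3.1) Let p be an odd prime and n ≥ 1. Let G be a finite group and G' ≤ G a subgroup of index 2p^n, and let λ : G → Equiv.Perm (G ⧸ G') be the action by left translation on left cosets. If there exists a regular subgroup N of Equiv.Perm (G ⧸ G') isomorphic to the cyclic group of order 2p^n that is normalized by λ(G), then there exists a regular subgroup M of Equiv.Perm (G ⧸ G') isomorphic to DihedralGroup(p^n) that is normalized by λ(G). -/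
private def dihMap {X : Type*} (m : ℕ) (a b : Equiv.Perm X) : DihedralGroup m → Equiv.Perm X
  | .r i => a ^ (i.val : ℤ)
  | .sr i => b * a ^ (i.val : ℤ)

@[simp] private lemma dihMap_r {X : Type*} (m : ℕ) (a b : Equiv.Perm X) (i : ZMod m) :
    dihMap m a b (.r i) = a ^ (i.val : ℤ) := rfl
@[simp] private lemma dihMap_sr {X : Type*} (m : ℕ) (a b : Equiv.Perm X) (i : ZMod m) :
    dihMap m a b (.sr i) = b * a ^ (i.val : ℤ) := rfl

private lemma exists_dihedral_regular (p n : ℕ) (hp : p.Prime) (hodd : Odd p) (hn : 1 ≤ n)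
    (X : Type*) [Nonempty X]
    (N : Subgroup (Equiv.Perm X)) (hreg : IsRegularSubgroup N)
    (θ : ↥N ≃* Multiplicative (ZMod (2 * p ^ n))) :
    ∃ M : Subgroup (Equiv.Perm X), IsRegularSubgroup M ∧
      Nonempty (↥M ≃* DihedralGroup (p ^ n)) ∧ Subgroup.normalizer (N : Set (Equiv.Perm X)) ≤ Subgroup.normalizer (M : Set (Equiv.Perm X)) := by
  classical
  obtain ⟨htrans, hfree⟩ := hreg
  have hppos : 0 < p ^ n := pow_pos hp.pos n
  haveI : NeZero (p ^ n) := ⟨hppos.ne'⟩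
  haveI : NeZero (2 * p ^ n) := ⟨by positivity⟩
  have hpn_odd : Odd (p ^ n) := hodd.pow
  have hp3 : 3 ≤ p ^ n := by
    have hne2 : p ≠ 2 := by rintro rfl; exact (Nat.not_odd_iff_even.mpr even_two) hodd
    have h3 : 3 ≤ p := by have := hp.two_le; omega
    calc 3 ≤ p := h3
    _ ≤ p ^ n := Nat.le_self_pow (by omega) p
  -- a helper to prove identities in N
  have hid : ∀ a b : ↥N, Multiplicative.toAdd (θ a) = Multiplicative.toAdd (θ b) → a = b := by
    intro a b hab
    exact θ.injective (Multiplicative.toAdd.injective hab)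
  have hcomm : ∀ a b : ↥N, a * b = b * a := by
    intro a b; apply hid; simp only [map_mul, toAdd_mul]; ring
  set δ : ↥N := θ.symm (Multiplicative.ofAdd (1 : ZMod (2 * p ^ n))) with hδ
  have hδord : orderOf δ = 2 * p ^ n := by
    have h1 := orderOf_injective θ.toMonoidHom θ.injective δ
    rw [← h1]
    have h2 : θ.toMonoidHom δ = Multiplicative.ofAdd 1 := by simp [hδ]
    rw [h2, orderOf_ofAdd_eq_addOrderOf, ZMod.addOrderOf_one]
  have hgen : ∀ ν : ↥N, ∃ m : ℕ, ν = δ ^ m := by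
    intro ν
    refine ⟨(Multiplicative.toAdd (θ ν)).val, θ.injective ?_⟩
    rw [map_pow, hδ, MulEquiv.apply_symm_apply, ← ofAdd_nsmul]
    rw [nsmul_eq_mul, mul_one, ZMod.natCast_rightInverse]
    simp
  set τ : ↥N := δ ^ (p ^ n) with hτ
  set g : ↥N := δ ^ 2 with hg
  have hτ2 : τ * τ = 1 := by
    rw [hτ, ← pow_add, ← two_mul, ← hδord, pow_orderOf_eq_one]
  have hgord : orderOf g = p ^ n := by
    rw [hg, orderOf_pow' _ (by norm_num : (2:ℕ) ≠ 0), hδord]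
    have : Nat.gcd (2 * p ^ n) 2 = 2 := by
      rw [Nat.gcd_comm]; exact Nat.gcd_eq_left ⟨p ^ n, rfl⟩
    rw [this, Nat.mul_div_cancel_left _ (by norm_num)]
  have hτord : orderOf τ = 2 := by
    rw [hτ, orderOf_pow' _ hppos.ne', hδord]
    have : Nat.gcd (2 * p ^ n) (p ^ n) = p ^ n := by
      rw [Nat.gcd_comm]; exact Nat.gcd_eq_left ⟨2, by ring⟩
    rw [this, Nat.mul_div_cancel _ hppos]
  have hτne1 : τ ≠ 1 := by
    intro h; rw [h, orderOf_one] at hτord; omega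
  have hτpn : τ ^ (p ^ n) = τ := by
    obtain ⟨m, hm⟩ := hpn_odd
    rw [hm, pow_add, pow_mul, pow_one, sq, hτ2, one_pow, one_mul]
  have hτinv : τ⁻¹ = τ := inv_eq_of_mul_eq_one_right hτ2
  have hdecomp : ∀ ν : ↥N, (∃ k : ℕ, ν = g ^ k) ∨ (∃ k : ℕ, ν = τ * g ^ k) := by
    intro ν
    obtain ⟨m, rfl⟩ := hgen ν
    rcases Nat.even_or_odd m with ⟨t, ht⟩ | hm
    · exact Or.inl ⟨t, by rw [hg, ← pow_mul]; congr 1; omega⟩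
    · right
      obtain ⟨t, ht⟩ := hm.add_odd hpn_odd
      refine ⟨t, ?_⟩
      have h1 : τ * δ ^ m = g ^ t := by
        rw [hτ, ← pow_add, hg, ← pow_mul]
        congr 1; omega
      calc δ ^ m = (τ * τ) * δ ^ m := by rw [hτ2, one_mul]
      _ = τ * (τ * δ ^ m) := by rw [mul_assoc]
      _ = τ * g ^ t := by rw [h1]
  have hsqz : ∀ ν : ↥N, ∃ w : ℤ, ν * ν = g ^ w := by
    intro ν
    rcases hdecomp ν with ⟨k, rfl⟩ | ⟨k, rfl⟩
    · exact ⟨2 * k, by rw [← pow_add, ← zpow_natCast]; norm_cast; ring_nf⟩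
    · refine ⟨2 * k, ?_⟩
      have : τ * g ^ k * (τ * g ^ k) = τ * τ * (g ^ k * g ^ k) := by
        apply hid; simp only [map_mul, toAdd_mul]; ring
      rw [this, hτ2, one_mul, ← pow_add, ← zpow_natCast]; norm_cast; ring_nf
  have hgpow1 : ∀ z : ℤ, g ^ z = 1 ↔ ((p ^ n : ℕ) : ℤ) ∣ z := by
    intro z
    rw [← orderOf_dvd_iff_zpow_eq_one, hgord]
  have hτnotg : ∀ z : ℤ, τ ≠ g ^ z := by
    intro z h
    have h1 : τ ^ (p ^ n) = 1 := by
      have hg1 : g ^ (p ^ n) = 1 := by rw [← hgord]; exact pow_orderOf_eq_one g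
      rw [h, ← zpow_natCast, ← zpow_mul, mul_comm, zpow_mul, zpow_natCast, hg1, one_zpow]
    rw [hτpn] at h1
    exact hτne1 h1
  -- the identification of X with N
  obtain ⟨x₀⟩ := ‹Nonempty X›
  have hbij : Function.Bijective (fun ν : ↥N => (ν : Equiv.Perm X) x₀) := by
    constructor
    · intro ν μ hh
      have h1 : ((μ⁻¹ * ν : ↥N) : Equiv.Perm X) x₀ = x₀ := by
        simp only [Subgroup.coe_mul, Equiv.Perm.mul_apply, hh]
        rw [← Equiv.Perm.mul_apply, ← Subgroup.coe_mul, inv_mul_cancel]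
        rfl
      have h2 := hfree _ (μ⁻¹ * ν : ↥N).2 x₀ h1
      have h3 : (μ⁻¹ * ν : ↥N) = 1 := Subtype.ext h2
      rw [inv_mul_eq_one] at h3
      exact h3.symm
    · intro x
      obtain ⟨f, hf, hfx⟩ := htrans x₀ x
      exact ⟨⟨f, hf⟩, hfx⟩
  set e : ↥N ≃ X := Equiv.ofBijective _ hbij with he_def
  have he : ∀ ν : ↥N, e ν = (ν : Equiv.Perm X) x₀ := fun ν => rfl
  have hmul_e : ∀ ν μ : ↥N, (ν : Equiv.Perm X) (e μ) = e (ν * μ) := by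
    intro ν μ
    simp only [he, Subgroup.coe_mul, Equiv.Perm.mul_apply]
  -- the reflection s
  set s : Equiv.Perm X := (e.symm.trans (((Equiv.inv ↥N).trans (Equiv.mulLeft τ)).trans e)) with hs_def
  have hs_apply : ∀ ν : ↥N, s (e ν) = e (τ * ν⁻¹) := by
    intro ν
    simp [hs_def, Equiv.trans_apply]
  have hs_mul : ∀ ν : ↥N, s * (ν : Equiv.Perm X) = ((ν⁻¹ : ↥N) : Equiv.Perm X) * s := by
    intro ν
    ext x
    have hx : x = e (e.symm x) := (e.apply_symm_apply x).symm
    rw [hx]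
    set μ := e.symm x
    rw [Equiv.Perm.mul_apply, Equiv.Perm.mul_apply, hmul_e, hs_apply, hs_apply, hmul_e]
    congr 1
    apply hid; simp only [map_mul, map_inv, toAdd_mul, toAdd_inv, mul_inv_rev]; ring
  have hs_sq : s * s = 1 := by
    ext x
    have hx : x = e (e.symm x) := (e.apply_symm_apply x).symm
    rw [hx]
    set μ := e.symm x
    rw [Equiv.Perm.mul_apply, hs_apply, hs_apply, Equiv.Perm.one_apply]
    congr 1
    rw [mul_inv_rev, inv_inv, hτinv, ← mul_assoc, hcomm τ μ, mul_assoc, hτ2, mul_one]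
  -- the permutation gP
  set gP : Equiv.Perm X := (g : Equiv.Perm X) with hgP_def
  have cz : ∀ z : ℤ, ((g ^ z : ↥N) : Equiv.Perm X) = gP ^ z := by
    intro z; rw [hgP_def]; push_cast; ring
  have horderP : orderOf gP = p ^ n := by
    rw [hgP_def, ← hgord]
    exact orderOf_injective N.subtype Subtype.coe_injective g
  have hvali : ∀ i : ZMod (p ^ n), (((i.val : ℤ)) : ZMod (p ^ n)) = i := by
    intro i
    push_cast
    exact ZMod.natCast_rightInverse i
  have hu : ∀ z : ℤ, gP ^ (((z : ZMod (p ^ n)).val : ℤ)) = gP ^ z := by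
    intro z
    have h1 : ((((z : ZMod (p ^ n)).val : ℤ)) : ZMod (p ^ n)) = (z : ZMod (p ^ n)) := hvali _
    rw [ZMod.intCast_eq_intCast_iff] at h1
    have h2 : ((p ^ n : ℕ) : ℤ) ∣ ((z : ZMod (p ^ n)).val : ℤ) - z := Int.ModEq.dvd h1.symm
    have h3 : gP ^ (((z : ZMod (p ^ n)).val : ℤ) - z) = 1 := by
      rw [← orderOf_dvd_iff_zpow_eq_one, horderP]; exact h2
    rw [zpow_sub, mul_inv_eq_one] at h3
    exact h3
  have hsg : ∀ z : ℤ, s * gP ^ z = gP ^ (-z) * s := by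
    intro z
    have h1 := hs_mul (g ^ z)
    rw [cz, ← zpow_neg, cz] at h1
    exact h1
  have hgs : ∀ z : ℤ, gP ^ z * s = s * gP ^ (-z) := by
    intro z
    rw [hsg (-z), neg_neg]
  -- val arithmetic
  have hval2 : ∀ (z : ℤ) (k : ZMod (p ^ n)), k = (z : ZMod (p ^ n)) → gP ^ (k.val : ℤ) = gP ^ z := by
    intro z k hk
    rw [hk]; exact hu z
  have hkey_add : ∀ i j : ZMod (p ^ n), gP ^ (((i + j).val : ℤ)) = gP ^ ((i.val : ℤ) + (j.val : ℤ)) := by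
    intro i j
    refine hval2 _ _ ?_
    push_cast [hvali]
    rfl
  have hkey_sub : ∀ i j : ZMod (p ^ n), gP ^ (((i - j).val : ℤ)) = gP ^ ((i.val : ℤ) - (j.val : ℤ)) := by
    intro i j
    refine hval2 _ _ ?_
    push_cast [hvali]
    rfl
  -- the dihedral homomorphism
  have hfmul : ∀ a b : DihedralGroup (p ^ n), dihMap (p ^ n) gP s (a * b) =
      dihMap (p ^ n) gP s a * dihMap (p ^ n) gP s b := by
    intro a b
    rcases a with i | i <;> rcases b with j | j
    · rw [DihedralGroup.r_mul_r]
      simp only [dihMap_r]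
      rw [hkey_add, zpow_add]
    · rw [DihedralGroup.r_mul_sr]
      simp only [dihMap_r, dihMap_sr]
      calc s * gP ^ (((j - i).val : ℤ)) = s * (gP ^ (-(i.val : ℤ)) * gP ^ ((j.val : ℤ))) := by
            rw [hkey_sub, ← zpow_add]; congr 1; ring
      _ = (s * gP ^ (-(i.val : ℤ))) * gP ^ ((j.val : ℤ)) := by rw [mul_assoc]
      _ = (gP ^ ((i.val : ℤ)) * s) * gP ^ ((j.val : ℤ)) := by rw [hgs]
      _ = gP ^ ((i.val : ℤ)) * (s * gP ^ ((j.val : ℤ))) := by rw [mul_assoc]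
    · rw [DihedralGroup.sr_mul_r]
      simp only [dihMap_r, dihMap_sr]
      rw [hkey_add, zpow_add, mul_assoc]
    · rw [DihedralGroup.sr_mul_sr]
      simp only [dihMap_r, dihMap_sr]
      calc gP ^ (((j - i).val : ℤ)) = (s * s) * (gP ^ (-(i.val : ℤ)) * gP ^ ((j.val : ℤ))) := by
            rw [hs_sq, one_mul, hkey_sub, ← zpow_add]; congr 1; ring
      _ = s * ((s * gP ^ (-(i.val : ℤ))) * gP ^ ((j.val : ℤ))) := by
            rw [mul_assoc, mul_assoc]
      _ = s * ((gP ^ ((i.val : ℤ)) * s) * gP ^ ((j.val : ℤ))) := by rw [hgs]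
      _ = (s * gP ^ ((i.val : ℤ))) * (s * gP ^ ((j.val : ℤ))) := by
            rw [mul_assoc, mul_assoc]
  set φ : DihedralGroup (p ^ n) →* Equiv.Perm X := MonoidHom.mk' (dihMap (p ^ n) gP s) hfmul with hφ_def
  set M : Subgroup (Equiv.Perm X) := φ.range with hM_def
  have hφr : ∀ i : ZMod (p ^ n), φ (.r i) = gP ^ ((i.val : ℤ)) := fun i => rfl
  have hφsr : ∀ i : ZMod (p ^ n), φ (.sr i) = s * gP ^ ((i.val : ℤ)) := fun i => rfl
  have hmemg : ∀ z : ℤ, gP ^ z ∈ M := by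
    intro z
    exact ⟨.r (z : ZMod (p ^ n)), by rw [hφr]; exact hu z⟩
  have hmems : ∀ z : ℤ, s * gP ^ z ∈ M := by
    intro z
    exact ⟨.sr (z : ZMod (p ^ n)), by rw [hφsr, hu z]⟩
  -- injectivity of the dihedral homomorphism
  have hginj : ∀ i j : ZMod (p ^ n), gP ^ ((i.val : ℤ)) = gP ^ ((j.val : ℤ)) → i = j := by
    intro i j hij
    have h1 : gP ^ ((i.val : ℤ) - (j.val : ℤ)) = 1 := by
      rw [zpow_sub, hij]; group
    have h2 := orderOf_dvd_iff_zpow_eq_one.mpr h1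
    rw [horderP] at h2
    have h3 : ((j.val : ℤ) : ZMod (p ^ n)) = ((i.val : ℤ) : ZMod (p ^ n)) :=
      (ZMod.intCast_eq_intCast_iff _ _ _).mpr (Int.modEq_iff_dvd.mpr h2)
    rw [hvali, hvali] at h3
    exact h3.symm
  have hs_not : ∀ ν : ↥N, (ν : Equiv.Perm X) ≠ s := by
    intro ν hν
    have h1 : (ν : Equiv.Perm X) (e 1) = s (e 1) := by rw [hν]
    rw [hmul_e, hs_apply] at h1
    have h1' : ν = τ := by
      have := e.injective h1
      simpa using this
    have h2 : (ν : Equiv.Perm X) (e g) = s (e g) := by rw [hν]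
    rw [hmul_e, hs_apply] at h2
    have h3 : ν * g = τ * g⁻¹ := e.injective h2
    rw [h1'] at h3
    have h4 : g = g⁻¹ := mul_left_cancel h3
    have h5 : g ^ (2 : ℤ) = 1 := by
      rw [zpow_two]
      nth_rewrite 2 [h4]
      group
    have h6 : ((p ^ n : ℕ) : ℤ) ∣ 2 := (hgpow1 2).mp h5
    have h7 : (p ^ n : ℕ) ∣ 2 := by exact_mod_cast h6
    have := Nat.le_of_dvd (by norm_num) h7
    omega
  have hφinj : Function.Injective φ := by
    intro a b hab
    rcases a with i | i <;> rcases b with j | j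
    · rw [hφr, hφr] at hab
      rw [hginj _ _ hab]
    · exfalso
      rw [hφr, hφsr] at hab
      apply hs_not (g ^ ((i.val : ℤ) - (j.val : ℤ)))
      rw [cz, zpow_sub, hab]
      group
    · exfalso
      rw [hφr, hφsr] at hab
      apply hs_not (g ^ ((j.val : ℤ) - (i.val : ℤ)))
      rw [cz, zpow_sub, ← hab]
      group
    · rw [hφsr, hφsr] at hab
      rw [hginj _ _ (mul_left_cancel hab)]
  -- M is regular
  have htransM : ∀ x y : X, ∃ f ∈ M, f x = y := by
    intro x y
    obtain ⟨q, hq, hqx⟩ := htrans x y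
    set ν : ↥N := ⟨q, hq⟩ with hν_def
    have hq' : q = (ν : Equiv.Perm X) := rfl
    have hx : x = e (e.symm x) := (e.apply_symm_apply x).symm
    set μ := e.symm x with hμ_def
    rcases hdecomp ν with ⟨k, hk⟩ | ⟨k, hk⟩
    · refine ⟨gP ^ ((k : ℤ)), hmemg _, ?_⟩
      rw [← cz, zpow_natCast, ← hk, ← hq']
      exact hqx
    · obtain ⟨w, hw⟩ := hsqz μ
      refine ⟨s * gP ^ (-((k : ℤ) + w)), hmems _, ?_⟩
      rw [← hqx, hq', hx, Equiv.Perm.mul_apply, ← cz, hmul_e, hs_apply, hmul_e]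
      congr 1
      have h2 : (g ^ (-((k : ℤ) + w)) * μ)⁻¹ = g ^ ((k : ℤ)) * μ := by
        calc (g ^ (-((k : ℤ) + w)) * μ)⁻¹ = μ⁻¹ * (g ^ ((k : ℤ)) * g ^ w) := by
              rw [mul_inv_rev, ← zpow_neg, neg_neg, zpow_add]
        _ = μ⁻¹ * (g ^ ((k : ℤ)) * (μ * μ)) := by rw [hw]
        _ = g ^ ((k : ℤ)) * μ := by
              apply hid; simp only [map_mul, map_inv, toAdd_mul, toAdd_inv]; ring
      rw [h2, hk, mul_assoc, zpow_natCast]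
  have hfreeM : ∀ f ∈ M, ∀ x : X, f x = x → f = 1 := by
    intro f hf x hx
    obtain ⟨d, rfl⟩ := hf
    rcases d with i | i
    · rw [hφr] at hx ⊢
      refine hfree _ ?_ x hx
      rw [← cz]
      exact (g ^ ((i.val : ℤ))).2
    · exfalso
      rw [hφsr] at hx
      have hx' : x = e (e.symm x) := (e.apply_symm_apply x).symm
      rw [hx'] at hx
      set μ := e.symm x with hμ_def
      rw [Equiv.Perm.mul_apply, ← cz, hmul_e, hs_apply] at hx
      have h1 : τ * (g ^ ((i.val : ℤ)) * μ)⁻¹ = μ := e.injective hx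
      obtain ⟨w, hw⟩ := hsqz μ
      apply hτnotg ((i.val : ℤ) + w)
      rw [mul_inv_eq_iff_eq_mul] at h1
      calc τ = μ * (g ^ ((i.val : ℤ)) * μ) := h1
      _ = g ^ ((i.val : ℤ)) * (μ * μ) := by
            apply hid; simp only [map_mul, toAdd_mul]; ring
      _ = g ^ ((i.val : ℤ) + w) := by rw [hw, ← zpow_add]
  -- classification lemmas inside N
  have hCH : ∀ ν : ↥N, ν ^ (p ^ n) = 1 → ∃ z : ℤ, ν = g ^ z := by
    intro ν hν1
    rcases hdecomp ν with ⟨k, rfl⟩ | ⟨k, rfl⟩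
    · exact ⟨k, (zpow_natCast g k).symm⟩
    · exfalso
      have hsplit : (τ * g ^ k) ^ (p ^ n) = τ ^ (p ^ n) * (g ^ k) ^ (p ^ n) := by
        apply hid; simp only [map_mul, map_pow, toAdd_mul, toAdd_pow]; ring
      have hgk : (g ^ k) ^ (p ^ n) = 1 := by
        rw [← pow_mul, mul_comm, pow_mul, ← hgord, pow_orderOf_eq_one, one_pow]
      rw [hsplit, hτpn, hgk, mul_one] at hν1
      exact hτne1 hν1
  have hgk1 : ∀ k : ℕ, g ^ k * g ^ k = 1 → g ^ k = 1 := by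
    intro k hk
    have h1 : g ^ (2 * k) = 1 := by rw [two_mul, pow_add, hk]
    have h2 : p ^ n ∣ 2 * k := by rw [← hgord]; exact orderOf_dvd_of_pow_eq_one h1
    have h3 : p ^ n ∣ k := (Nat.Coprime.dvd_of_dvd_mul_left (Odd.coprime_two_right hpn_odd) h2)
    rw [← hgord] at h3
    exact orderOf_dvd_iff_pow_eq_one.mp h3
  have hun : ∀ ν : ↥N, ν * ν = 1 → ν ≠ 1 → ν = τ := by
    intro ν h2 hne
    rcases hdecomp ν with ⟨k, rfl⟩ | ⟨k, rfl⟩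
    · exact absurd (hgk1 k h2) hne
    · have h3 : (τ * g ^ k) * (τ * g ^ k) = (τ * τ) * (g ^ k * g ^ k) := by
        apply hid; simp only [map_mul, toAdd_mul]; ring
      rw [h3, hτ2, one_mul] at h2
      rw [hgk1 k h2, mul_one]
  -- the normalizer of N is contained in the normalizer of M
  have hconjM : ∀ h ∈ Subgroup.normalizer (N : Set (Equiv.Perm X)), ∀ q ∈ M, h * q * h⁻¹ ∈ M := by
    intro h hh q hq
    have hcN : ∀ r : Equiv.Perm X, r ∈ N ↔ h * r * h⁻¹ ∈ N := Subgroup.mem_normalizer_iff.mp hh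
    have hmemc : ∀ κ : ↥N, h * ↑κ * h⁻¹ ∈ N := fun κ => (hcN ↑κ).mp κ.2
    set ch : ↥N → ↥N := fun κ => ⟨h * ↑κ * h⁻¹, hmemc κ⟩ with hch_def
    have hch_coe : ∀ κ : ↥N, ((ch κ : ↥N) : Equiv.Perm X) = h * ↑κ * h⁻¹ := fun κ => rfl
    -- conjugate of gP
    have hgc : ∃ z : ℤ, h * gP * h⁻¹ = gP ^ z := by
      have hgP1 : gP ^ (p ^ n) = 1 := by rw [← horderP]; exact pow_orderOf_eq_one gP
      have hpow : (ch g) ^ (p ^ n) = 1 := by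
        apply Subtype.ext
        push_cast [hch_coe]
        calc (h * gP * h⁻¹) ^ (p ^ n) = (MulAut.conj h) (gP ^ (p ^ n)) := by rw [map_pow]; rfl
        _ = 1 := by rw [hgP1, map_one]
      obtain ⟨z, hz⟩ := hCH (ch g) hpow
      refine ⟨z, ?_⟩
      rw [← hch_coe, hz, cz]
    obtain ⟨zg, hzg⟩ := hgc
    have hgcz : ∀ z : ℤ, h * gP ^ z * h⁻¹ = gP ^ (zg * z) := by
      intro z
      calc h * gP ^ z * h⁻¹ = (MulAut.conj h) (gP ^ z) := rfl
      _ = ((MulAut.conj h) gP) ^ z := by rw [map_zpow]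
      _ = (gP ^ zg) ^ z := by rw [MulAut.conj_apply, hzg]
      _ = gP ^ (zg * z) := by rw [← zpow_mul]
    -- conjugate of τ
    have hτc : h * (τ : Equiv.Perm X) * h⁻¹ = (τ : Equiv.Perm X) := by
      have h2 : ch τ * ch τ = 1 := by
        apply Subtype.ext
        calc ((ch τ * ch τ : ↥N) : Equiv.Perm X) = (h * ↑τ * h⁻¹) * (h * ↑τ * h⁻¹) := by
              push_cast [hch_coe]; rfl
        _ = h * (↑τ * ↑τ) * h⁻¹ := by group
        _ = 1 := by rw [← Subgroup.coe_mul, hτ2, Subgroup.coe_one, mul_one, mul_inv_cancel]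
      have h3 : ch τ ≠ 1 := by
        intro hbad
        have h4 : h * ↑τ * h⁻¹ = 1 := by rw [← hch_coe, hbad, Subgroup.coe_one]
        have h5 : (τ : Equiv.Perm X) = 1 := by
          have := congrArg (fun r => h⁻¹ * r * h) h4
          simpa [mul_assoc] using this
        exact hτne1 (Subtype.ext h5)
      have h6 := hun (ch τ) h2 h3
      rw [← hch_coe, h6]
    -- conjugate of s
    set μ₀ : ↥N := e.symm (h (e 1)) with hμ₀_def
    have hact : ∀ κ : ↥N, h (e κ) = e (ch κ * μ₀) := by
      intro κ
      calc h (e κ) = h ((κ : Equiv.Perm X) (e 1)) := by rw [hmul_e, mul_one]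
      _ = ((ch κ : ↥N) : Equiv.Perm X) (h (e 1)) := by
            rw [hch_coe]; simp [Equiv.Perm.mul_apply]
      _ = ((ch κ : ↥N) : Equiv.Perm X) (e μ₀) := by rw [hμ₀_def, e.apply_symm_apply]
      _ = e (ch κ * μ₀) := hmul_e _ _
    obtain ⟨w0, hw0⟩ := hsqz μ₀
    have hchmul : ∀ ν : ↥N, ch (τ * ν⁻¹) = τ * (ch ν)⁻¹ := by
      intro ν
      apply Subtype.ext
      calc ((ch (τ * ν⁻¹) : ↥N) : Equiv.Perm X) = h * (↑τ * (↑ν)⁻¹) * h⁻¹ := by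
            rw [hch_coe]; push_cast; rfl
      _ = (h * ↑τ * h⁻¹) * (h * (↑ν)⁻¹ * h⁻¹) := by group
      _ = ↑τ * (h * ↑ν * h⁻¹)⁻¹ := by rw [hτc]; group
      _ = ((τ * (ch ν)⁻¹ : ↥N) : Equiv.Perm X) := by push_cast [hch_coe]; rfl
    have hkey : h * s = (((μ₀ * μ₀ : ↥N) : Equiv.Perm X) * s) * h := by
      ext x
      have hx : x = e (e.symm x) := (e.apply_symm_apply x).symm
      rw [hx]
      set ν := e.symm x with hν_def
      rw [Equiv.Perm.mul_apply, Equiv.Perm.mul_apply, Equiv.Perm.mul_apply,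
        hs_apply, hact (τ * ν⁻¹), hact ν, hs_apply, hmul_e]
      congr 1
      rw [hchmul ν]
      apply hid; simp only [map_mul, map_inv, toAdd_mul, toAdd_inv]; ring
    have hsc : h * s * h⁻¹ = gP ^ w0 * s := by
      have h7 : ((μ₀ * μ₀ : ↥N) : Equiv.Perm X) = gP ^ w0 := by rw [hw0, cz]
      rw [hkey, h7]
      group
    -- now conjugate the elements of M
    obtain ⟨d, rfl⟩ := hq
    rcases d with i | i
    · rw [hφr, hgcz]
      exact hmemg _
    · rw [hφsr]
      have hcalc : h * (s * gP ^ ((i.val : ℤ))) * h⁻¹ = s * gP ^ (-w0 + zg * (i.val : ℤ)) := by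
        calc h * (s * gP ^ ((i.val : ℤ))) * h⁻¹
            = (h * s * h⁻¹) * (h * gP ^ ((i.val : ℤ)) * h⁻¹) := by group
        _ = (gP ^ w0 * s) * gP ^ (zg * (i.val : ℤ)) := by rw [hsc, hgcz]
        _ = s * gP ^ (-w0 + zg * (i.val : ℤ)) := by rw [hgs, mul_assoc, ← zpow_add]
      rw [hcalc]
      exact hmems _
  have hnormM : Subgroup.normalizer (N : Set (Equiv.Perm X)) ≤ Subgroup.normalizer (M : Set (Equiv.Perm X)) := by
    intro h hh
    rw [Subgroup.mem_normalizer_iff]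
    intro q
    constructor
    · exact fun hq => hconjM h hh q hq
    · intro hq'
      have h2 := hconjM h⁻¹ (Subgroup.inv_mem (Subgroup.normalizer (N : Set (Equiv.Perm X))) hh) _ hq'
      have h3 : h⁻¹ * (h * q * h⁻¹) * h⁻¹⁻¹ = q := by group
      rwa [h3] at h2
  exact ⟨M, ⟨htransM, hfreeM⟩, ⟨(MonoidHom.ofInjective hφinj).symm⟩, hnormM⟩

/-- Theorem 3.1: if a separable extension of degree `2 p ^ n` (Galois data `(G, G')`,
`p` an odd prime) has a Hopf Galois structure of cyclic type, then it has one of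
dihedral type. -/
theorem cyclic_type_implies_dihedral_type (p n : ℕ) (hp : p.Prime) (hodd : Odd p)
    (hn : 1 ≤ n) (G : Type*) [Group G] [Finite G] (G' : Subgroup G)
    (hindex : G'.index = 2 * p ^ n)
    (h : ∃ N : Subgroup (Equiv.Perm (G ⧸ G')),
        IsRegularSubgroup N ∧
        Nonempty (↥N ≃* Multiplicative (ZMod (2 * p ^ n))) ∧
        ∀ g : G, MulAction.toPermHom G (G ⧸ G') g ∈ Subgroup.normalizer (N : Set (Equiv.Perm (G ⧸ G')))) :
    ∃ M : Subgroup (Equiv.Perm (G ⧸ G')),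
        IsRegularSubgroup M ∧
        Nonempty (↥M ≃* DihedralGroup (p ^ n)) ∧
        ∀ g : G, MulAction.toPermHom G (G ⧸ G') g ∈ Subgroup.normalizer (M : Set (Equiv.Perm (G ⧸ G'))) := by
  haveI : Nonempty (G ⧸ G') := ⟨QuotientGroup.mk 1⟩
  obtain ⟨N, hregN, ⟨θ⟩, hnorm⟩ := h
  obtain ⟨M, hregM, hiso, hle⟩ := exists_dihedral_regular p n hp hodd hn (G ⧸ G') N hregN θ
  exact ⟨M, hregM, hiso, fun g => hle (hnorm g)⟩
end

section
/- Let p be an odd prime and n ≥ 1, and let D = DihedralGroup(p^n). Every subgroup T of the holomorph Hol(D) ≤ Equiv.Perm D whose induced action on D is transitive contains an element of order p^n. -/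
open DihedralGroup Finset MulAction

section Lemmas
lemma hol_apply_mul {X : Type*} [Group X] {h : Equiv.Perm X} (hh : h ∈ Hol X) (x y : X) :
    h (x * y) = h x * (h 1)⁻¹ * h y := by
  have hmem : h * (MulAction.toPermHom X X x) * h⁻¹ ∈ (MulAction.toPermHom X X).range := by
    rw [← Subgroup.mem_normalizer_iff.mp hh]
    exact ⟨x, rfl⟩
  obtain ⟨z, hz⟩ := hmem
  have key : ∀ w : X, z * w = h (x * h⁻¹ w) := by
    intro w
    have := congrArg (fun e : Equiv.Perm X => e w) hz
    simpa [MulAction.toPermHom_apply, MulAction.toPerm_apply, Equiv.Perm.mul_apply] using this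
  have h1 : z = h x * (h 1)⁻¹ := by
    have h0 := key (h 1)
    simp only [Equiv.Perm.inv_def, Equiv.symm_apply_apply, mul_one] at h0
    rw [← h0]; group
  have h2 := key (h y)
  simp only [Equiv.Perm.inv_def, Equiv.symm_apply_apply] at h2
  rw [h1] at h2; rw [← h2]

def IsRot {m : ℕ} (x : DihedralGroup m) : Prop := ∃ i, x = r i

variable {m : ℕ}

lemma isRot_or (x : DihedralGroup m) : IsRot x ∨ ∃ i, x = sr i := by
  cases x with
  | r i => exact Or.inl ⟨i, rfl⟩
  | sr i => exact Or.inr ⟨i, rfl⟩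

lemma two_unit (hm : Odd m) : ∃ w : ZMod m, w + w = 1 := by
  have : NeZero m := ⟨hm.pos.ne'⟩
  have h2 : IsUnit (2 : ZMod m) := by
    have := (ZMod.isUnit_iff_coprime 2 m).mpr (hm.coprime_two_left)
    simpa using this
  obtain ⟨u, hu⟩ := h2
  exact ⟨↑u⁻¹, by rw [← two_mul, ← hu, Units.mul_inv_eq_iff_eq_mul, one_mul]⟩

lemma isRot_iff_sq (hm : Odd m) (x : DihedralGroup m) : IsRot x ↔ ∃ y, y * y = x := by
  constructor
  · rintro ⟨i, rfl⟩
    obtain ⟨w, hw⟩ := two_unit hm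
    exact ⟨r (w * i), by rw [r_mul_r, ← add_mul, hw, one_mul]⟩
  · rintro ⟨y, rfl⟩
    cases y with
    | r i => exact ⟨i + i, by rw [r_mul_r]⟩
    | sr i => exact ⟨0, by rw [sr_mul_sr, sub_self]⟩

lemma rot_mul_rot {a b : DihedralGroup m} (ha : IsRot a) (hb : IsRot b) : IsRot (a * b) := by
  obtain ⟨i, rfl⟩ := ha; obtain ⟨j, rfl⟩ := hb; exact ⟨i + j, by rw [r_mul_r]⟩

lemma notRot_mul_notRot {a b : DihedralGroup m} (ha : ¬ IsRot a) (hb : ¬ IsRot b) :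
    IsRot (a * b) := by
  obtain ⟨i, rfl⟩ := (isRot_or a).resolve_left ha
  obtain ⟨j, rfl⟩ := (isRot_or b).resolve_left hb
  exact ⟨j - i, by rw [sr_mul_sr]⟩

lemma one_isRot : IsRot (1 : DihedralGroup m) := ⟨0, one_def⟩
section HolDih
variable {m : ℕ} {h : Equiv.Perm (DihedralGroup m)}

lemma phi_mul (hh : h ∈ Hol (DihedralGroup m)) (x y : DihedralGroup m) :
    h (x * y) * (h 1)⁻¹ = (h x * (h 1)⁻¹) * (h y * (h 1)⁻¹) := by
  rw [hol_apply_mul hh]; group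

lemma phi_rot (hm : Odd m) (hh : h ∈ Hol (DihedralGroup m)) {x : DihedralGroup m}
    (hx : IsRot x) : IsRot (h x * (h 1)⁻¹) := by
  obtain ⟨y, rfl⟩ := (isRot_iff_sq hm x).mp hx
  rw [phi_mul hh]
  exact (isRot_iff_sq hm _).mpr ⟨_, rfl⟩

lemma phi_notRot (hm : Odd m) (hh : h ∈ Hol (DihedralGroup m)) {x : DihedralGroup m}
    (hx : ¬ IsRot x) : ¬ IsRot (h x * (h 1)⁻¹) := by
  intro ⟨w, hw⟩
  obtain ⟨j, rfl⟩ := (isRot_or x).resolve_left hx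
  have hsq : (h (sr j) * (h 1)⁻¹) * (h (sr j) * (h 1)⁻¹) = 1 := by
    rw [← phi_mul hh, sr_mul_sr, sub_self, ← DihedralGroup.one_def, mul_inv_cancel]
  rw [hw, r_mul_r] at hsq
  obtain ⟨v, hv⟩ := two_unit hm
  have hw0 : w = 0 := by
    have : w + w = 0 := by
      rw [DihedralGroup.one_def] at hsq
      exact r.inj hsq
    calc w = (v + v) * w := by rw [hv, one_mul]
    _ = v * (w + w) := by ring
    _ = 0 := by rw [this, mul_zero]
  rw [hw0, ← DihedralGroup.one_def] at hw
  have heq : h (sr j) = h 1 := by rwa [mul_inv_eq_one] at hw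
  exact hx (by rw [h.injective heq]; exact one_isRot)

lemma hol_rot_of_rot (hm : Odd m) (hh : h ∈ Hol (DihedralGroup m)) (h1 : IsRot (h 1))
    {x : DihedralGroup m} (hx : IsRot x) : IsRot (h x) := by
  have := rot_mul_rot (phi_rot hm hh hx) h1
  simpa using this

lemma hol_rot_of_notRot (hm : Odd m) (hh : h ∈ Hol (DihedralGroup m)) (h1 : ¬ IsRot (h 1))
    {x : DihedralGroup m} (hx : ¬ IsRot x) : IsRot (h x) := by
  have := notRot_mul_notRot (phi_notRot hm hh hx) h1
  simpa using this

lemma hol_isRot_one_of_sq (hm : Odd m) {g : Equiv.Perm (DihedralGroup m)}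
    (hg : g ∈ Hol (DihedralGroup m)) : IsRot ((g * g) 1) := by
  rw [Equiv.Perm.mul_apply]
  by_cases h1 : IsRot (g 1)
  · exact hol_rot_of_rot hm hg h1 h1
  · exact hol_rot_of_notRot hm hg h1 h1

lemma hol_isRot_one_of_odd (hm : Odd m) (hh : h ∈ Hol (DihedralGroup m))
    (ho : Odd (orderOf h)) (hpos : 0 < orderOf h) : IsRot (h 1) := by
  set o := orderOf h with hodef
  obtain ⟨k, hk⟩ := ho
  have hgg : h ^ (k + 1) * h ^ (k + 1) = h := by
    rw [← pow_add]
    have : k + 1 + (k + 1) = o + 1 := by omega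
    rw [this, pow_succ, pow_orderOf_eq_one, one_mul]
  have := hol_isRot_one_of_sq hm (Subgroup.pow_mem _ hh (k+1))
  rwa [hgg] at this

variable {m : ℕ}

lemma r_pow (a : ZMod m) (k : ℕ) : (r a) ^ k = r ((k : ZMod m) * a) := by
  induction k with
  | zero => simp
  | succ k ih => rw [pow_succ, ih, r_mul_r]; congr 1; push_cast; ring

lemma affine_form [NeZero m] (hm : Odd m) {t : Equiv.Perm (DihedralGroup m)}
    (hh : t ∈ Hol (DihedralGroup m)) (h1 : t 1 = r 1) :
    ∃ u c : ZMod m, (∀ i, t (r i) = r (u * i + 1)) ∧ (∀ i, t (sr i) = sr (u * i + c)) := by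
  set φ : DihedralGroup m →* DihedralGroup m :=
    { toFun := fun x => t x * (t 1)⁻¹
      map_one' := by simp
      map_mul' := fun x y => by simp only [hol_apply_mul hh x y]; group } with hφ
  have hφdef : ∀ x, φ x = t x * (t 1)⁻¹ := fun _ => rfl
  obtain ⟨u, hu⟩ : IsRot (φ (r 1)) := phi_rot hm hh ⟨1, rfl⟩
  obtain ⟨c0, hc0⟩ : ∃ j, φ (sr 0) = sr j := by
    have hnr : ¬ IsRot (sr (0 : ZMod m)) := by rintro ⟨i, hi⟩; cases hi
    exact (isRot_or (φ (sr 0))).resolve_left (phi_notRot hm hh hnr)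
  have hrφ : ∀ i, φ (r i) = r (u * i) := by
    intro i
    have : (r i : DihedralGroup m) = (r 1) ^ i.val := by
      rw [r_one_pow, ZMod.natCast_val, ZMod.cast_id]
    rw [this, map_pow, hu, _root_.r_pow, ZMod.natCast_val, ZMod.cast_id, mul_comm]
  have hsφ : ∀ i, φ (sr i) = sr (c0 + u * i) := by
    intro i
    have : (sr i : DihedralGroup m) = sr 0 * r i := by rw [sr_mul_r, zero_add]
    rw [this, map_mul, hc0, hrφ, sr_mul_r]
  have happ : ∀ x, t x = φ x * r 1 := by
    intro x; rw [hφdef, h1]; group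
  refine ⟨u, c0 + 1, fun i => ?_, fun i => ?_⟩
  · rw [happ, hrφ, r_mul_r]
  · rw [happ, hsφ, sr_mul_r]; congr 1; ring

lemma affine_pow {t : Equiv.Perm (DihedralGroup m)} {u c : ZMod m}
    (hr : ∀ i, t (r i) = r (u * i + 1)) (hs : ∀ i, t (sr i) = sr (u * i + c)) :
    ∀ k : ℕ, (∀ i, (t ^ k) (r i) = r (u ^ k * i + ∑ j ∈ range k, u ^ j)) ∧
      (∀ i, (t ^ k) (sr i) = sr (u ^ k * i + c * ∑ j ∈ range k, u ^ j)) := by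
  intro k
  induction k with
  | zero => constructor <;> intro i <;> simp
  | succ k ih =>
    have hmul : ∀ x, (t ^ (k+1)) x = (t ^ k) (t x) := by
      intro x; rw [pow_succ, Equiv.Perm.mul_apply]
    constructor <;> intro i
    · rw [hmul, hr, ih.1, sum_range_succ]; congr 1; ring
    · rw [hmul, hs, ih.2, sum_range_succ]; congr 1; ring

-- (i) binomial-ish
lemma pow_one_add (q s : ℤ) : ∀ i : ℕ, ∃ X : ℤ, (1 + q * s) ^ i = 1 + i * q * s + q ^ 2 * X := by
  intro i
  induction i with
  | zero => exact ⟨0, by ring⟩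
  | succ i ih =>
    obtain ⟨X, hX⟩ := ih
    refine ⟨X + i * s ^ 2 + q * s * X, ?_⟩
    rw [pow_succ, hX]; push_cast; ring

-- (ii)
lemma pow_pow_sub_one_dvd {p : ℕ} (hp : 2 ≤ p) {U : ℤ} (hU : (p : ℤ) ∣ U - 1) :
    ∀ j : ℕ, ((p : ℤ)) ^ (j + 1) ∣ U ^ p ^ j - 1 := by
  intro j
  induction j with
  | zero => simpa using hU
  | succ j ih =>
    obtain ⟨s, hs⟩ := ih
    have hUp : U ^ p ^ j = 1 + (p : ℤ) ^ (j+1) * s := by linarith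
    obtain ⟨X, hX⟩ := pow_one_add ((p:ℤ)^(j+1)) s p
    have : U ^ p ^ (j+1) = (U ^ p ^ j) ^ p := by rw [← pow_mul, pow_succ]
    rw [this, hUp, hX]
    refine ⟨s + (p:ℤ)^j * X, ?_⟩
    ring

-- gauss
lemma gauss_sum {p : ℕ} (hodd : Odd p) : ∃ e : ℤ, ∑ i ∈ range p, (i : ℤ) = p * e := by
  obtain ⟨k, hk⟩ : ∃ k, p - 1 = 2 * k := by
    obtain ⟨k, hk⟩ := hodd; exact ⟨k, by omega⟩
  have h2 : (∑ i ∈ range p, i) * 2 = p * (p - 1) := Finset.sum_range_id_mul_two p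
  have h3 : (∑ i ∈ range p, i) * 2 = (p * k) * 2 := by rw [h2, hk]; ring
  have : (∑ i ∈ range p, i) = p * k := Nat.eq_of_mul_eq_mul_right (by norm_num) h3
  refine ⟨k, ?_⟩
  have := congrArg (fun x : ℕ => (x : ℤ)) this
  push_cast at this
  simpa using this

-- sum of powers of (1+qs)
lemma sum_pow_one_add (q s : ℤ) (b : ℕ) :
    ∃ X : ℤ, ∑ i ∈ range b, (1 + q * s) ^ i
      = b + q * s * (∑ i ∈ range b, (i : ℤ)) + q ^ 2 * X := by
  induction b with
  | zero => exact ⟨0, by simp⟩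
  | succ b ih =>
    obtain ⟨X, hX⟩ := ih
    obtain ⟨Y, hY⟩ := pow_one_add q s b
    refine ⟨X + Y, ?_⟩
    rw [sum_range_succ, hX, hY, sum_range_succ]
    push_cast; ring

-- geometric splitting
lemma geom_split (x : ℤ) (a : ℕ) : ∀ b : ℕ, ∑ i ∈ range (a * b), x ^ i
    = (∑ i ∈ range a, x ^ i) * ∑ i ∈ range b, (x ^ a) ^ i := by
  intro b
  induction b with
  | zero => simp
  | succ b ih =>
    have : a * (b + 1) = a * b + a := by ring
    rw [this, Finset.sum_range_add, ih, sum_range_succ, mul_add]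
    congr 1
    rw [← pow_mul, mul_comm (∑ i ∈ range a, x ^ i), Finset.mul_sum]
    refine Finset.sum_congr rfl fun i _ => ?_
    rw [← pow_add]

-- (iv) main valuation lemma
lemma geom_sum_pp {p : ℕ} (hp : 2 ≤ p) (hodd : Odd p) {U : ℤ} (hU : (p : ℤ) ∣ U - 1) :
    ∀ j : ℕ, ∃ w : ℤ, ∑ i ∈ range (p ^ j), U ^ i = (p:ℤ) ^ j + (p:ℤ) ^ (j + 1) * w := by
  intro j
  induction j with
  | zero => exact ⟨0, by simp⟩
  | succ j ih =>
    obtain ⟨w, hw⟩ := ih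
    obtain ⟨s, hs⟩ := pow_pow_sub_one_dvd hp hU j
    have hA : U ^ p ^ j = 1 + (p:ℤ) ^ (j+1) * s := by linarith
    obtain ⟨e, he⟩ := gauss_sum hodd
    obtain ⟨X, hX⟩ := sum_pow_one_add ((p:ℤ)^(j+1)) s p
    have hsplit := geom_split U (p ^ j) p
    have hpj1 : p ^ (j+1) = p ^ j * p := by rw [pow_succ]
    have hinner : ∑ i ∈ range p, (U ^ p ^ j) ^ i
        = (p:ℤ) + (p:ℤ)^(j+2) * (s * e + (p:ℤ) ^ j * X) := by
      rw [hA, hX, he]; ring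
    refine ⟨(p:ℤ)^j * (s * e + (p:ℤ)^j * X) + w + (p:ℤ)^(j+1) * w * (s * e + (p:ℤ)^j * X), ?_⟩
    rw [hpj1, hsplit, hinner, hw]
    push_cast
    ring

lemma order_of_translation (p n : ℕ) (hp : p.Prime) (hodd : Odd p) (hn : 1 ≤ n)
    {t : Equiv.Perm (DihedralGroup (p ^ n))} (hh : t ∈ Hol (DihedralGroup (p ^ n)))
    (h1 : t 1 = r 1) (hpk : ∃ k, t ^ (p ^ k) = 1) : orderOf t = p ^ n := by
  haveI : Fact p.Prime := ⟨hp⟩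
  haveI : NeZero (p ^ n) := ⟨pow_ne_zero n hp.pos.ne'⟩
  have hoddm : Odd (p ^ n) := hodd.pow
  obtain ⟨u, c, hr, hs⟩ := affine_form hoddm hh h1
  have hpow := affine_pow hr hs
  obtain ⟨k, hk⟩ := hpk
  -- u ^ p ^ k = 1
  have hS0 : ∑ j ∈ range (p ^ k), u ^ j = 0 := by
    have := (hpow (p ^ k)).1 0
    rw [hk] at this
    simp only [Equiv.Perm.one_apply, mul_zero, zero_add] at this
    exact (r.inj this.symm)
  have huk : u ^ p ^ k = 1 := by
    have := (hpow (p ^ k)).1 1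
    rw [hk] at this
    simp only [Equiv.Perm.one_apply, mul_one, hS0, add_zero] at this
    exact (r.inj this.symm)
  -- cast to ZMod p : u ≡ 1 mod p
  have hdvd : (p : ℕ) ∣ p ^ n := dvd_pow_self p (by omega)
  set v : ZMod p := ZMod.castHom hdvd (ZMod p) u with hv
  have hv1 : v = 1 := by
    have hvk : v ^ p ^ k = 1 := by
      rw [hv, ← map_pow, huk, map_one]
    have hstep : ∀ j : ℕ, v ^ p ^ j = v := by
      intro j
      induction j with
      | zero => simp
      | succ j ih => rw [pow_succ, pow_mul, ih, ZMod.pow_card]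
    rw [← hstep k, hvk]
  -- the integer lift
  set U : ℤ := (u.val : ℤ) with hU
  have hcastU : ((U : ℤ) : ZMod (p ^ n)) = u := by
    rw [hU, Int.cast_natCast, ZMod.natCast_val, ZMod.cast_id]
  have hUdvd : (p : ℤ) ∣ U - 1 := by
    have : ((U - 1 : ℤ) : ZMod p) = 0 := by
      push_cast
      have : ((u.val : ℤ) : ZMod p) = v := by
        rw [hv, ZMod.castHom_apply, Int.cast_natCast, ZMod.natCast_val]
      rw [this, hv1, sub_self]
    exact (ZMod.intCast_zmod_eq_zero_iff_dvd _ _).mp this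
  have hcast_sum : ∀ j : ℕ, ((∑ i ∈ range j, U ^ i : ℤ) : ZMod (p ^ n))
      = ∑ i ∈ range j, u ^ i := by
    intro j; push_cast [hcastU]; rfl
  -- u ^ p ^ n = 1 and S (p ^ n) = 0
  have hun : u ^ p ^ n = 1 := by
    obtain ⟨s, hs'⟩ := pow_pow_sub_one_dvd hp.two_le hUdvd n
    have : ((U ^ p ^ n - 1 : ℤ) : ZMod (p ^ n)) = 0 := by
      rw [hs']
      have : ((p : ℤ) ^ (n + 1) : ℤ) = (p : ℤ) ^ n * p := by ring
      rw [this]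
      have hz : ((p : ZMod (p ^ n))) ^ n = 0 := by
        rw [← Nat.cast_pow, ZMod.natCast_self]
      push_cast
      rw [hz]; ring
    have h2 : (u ^ p ^ n - 1 : ZMod (p ^ n)) = 0 := by
      have := this; push_cast [hcastU] at this; exact this
    linear_combination h2
  have hSn : ∑ i ∈ range (p ^ n), u ^ i = 0 := by
    obtain ⟨w, hw⟩ := geom_sum_pp hp.two_le hodd hUdvd n
    have hc : ((∑ i ∈ range (p ^ n), U ^ i : ℤ) : ZMod (p ^ n)) = 0 := by
      rw [hw]
      have hz : ((p : ZMod (p ^ n))) ^ n = 0 := by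
        rw [← Nat.cast_pow, ZMod.natCast_self]
      push_cast
      rw [pow_succ, hz]; ring
    rw [hcast_sum] at hc; exact hc
  have hmain : t ^ p ^ n = 1 := by
    apply Equiv.ext
    intro x
    cases x with
    | r i => rw [(hpow (p ^ n)).1 i, hun, hSn]; simp
    | sr i => rw [(hpow (p ^ n)).2 i, hun, hSn]; simp
  have hnot : t ^ p ^ (n - 1) ≠ 1 := by
    intro hteq
    have hS : ∑ i ∈ range (p ^ (n - 1)), u ^ i = 0 := by
      have h0 := (hpow (p ^ (n - 1))).1 0
      rw [hteq] at h0
      simp only [Equiv.Perm.one_apply, mul_zero, zero_add] at h0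
      exact (r.inj h0.symm)
    obtain ⟨w, hw⟩ := geom_sum_pp hp.two_le hodd hUdvd (n - 1)
    have hcast0 : ((∑ i ∈ range (p ^ (n - 1)), U ^ i : ℤ) : ZMod (p ^ n)) = 0 := by
      rw [hcast_sum, hS]
    have hdd : ((p : ℤ)) ^ n ∣ ∑ i ∈ range (p ^ (n - 1)), U ^ i := by
      have h2 := (ZMod.intCast_zmod_eq_zero_iff_dvd _ (p ^ n)).mp hcast0
      push_cast at h2
      exact h2
    rw [hw, show (n - 1) + 1 = n by omega] at hdd
    have hdd2 : ((p : ℤ)) ^ n ∣ (p : ℤ) ^ (n - 1) := by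
      have h3 := dvd_sub hdd (Dvd.intro w rfl)
      simpa using h3
    have hle : ((p : ℤ)) ^ n ≤ (p : ℤ) ^ (n - 1) :=
      Int.le_of_dvd (pow_pos (by exact_mod_cast hp.pos) _) hdd2
    have hlt : ((p : ℤ)) ^ (n - 1) < (p : ℤ) ^ n := by
      have h1p : (1 : ℤ) < p := by exact_mod_cast hp.one_lt
      exact pow_lt_pow_right₀ h1p (by omega)
    linarith
  have hfin : t ^ p ^ ((n - 1) + 1) = 1 := by
    rw [show (n - 1) + 1 = n by omega]; exact hmain
  have := orderOf_eq_prime_pow hnot hfin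
  rwa [show (n - 1) + 1 = n by omega] at this

theorem find_translation (p n : ℕ) (hp : p.Prime) (hodd : Odd p) (hn : 1 ≤ n)
    (T : Subgroup (Equiv.Perm (DihedralGroup (p ^ n))))
    (hT : T ≤ Hol (DihedralGroup (p ^ n)))
    (htrans : ∀ x y : DihedralGroup (p ^ n), ∃ t ∈ T, t x = y) :
    ∃ t ∈ T, (∃ k, t ^ p ^ k = 1) ∧ t 1 = r 1 := by
  haveI : Fact p.Prime := ⟨hp⟩
  haveI : NeZero (p ^ n) := ⟨pow_ne_zero n hp.pos.ne'⟩
  have hoddm : Odd (p ^ n) := hodd.pow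
  -- Sylow subgroup of T, pushed into Perm D
  obtain ⟨P⟩ : Nonempty (Sylow p ↥T) := inferInstance
  set Q : Subgroup (Equiv.Perm (DihedralGroup (p ^ n))) := Subgroup.map T.subtype P.toSubgroup with hQ
  have hQT : Q ≤ T := Subgroup.map_subtype_le _
  have hQp : IsPGroup p ↥Q := P.isPGroup'.map T.subtype
  -- each element of Q has p-power order
  have hQpow : ∀ g : Equiv.Perm (DihedralGroup (p ^ n)), g ∈ Q → ∃ k, g ^ p ^ k = 1 := by
    intro g hg
    obtain ⟨k, hk⟩ := hQp ⟨g, hg⟩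
    exact ⟨k, by simpa [← Subtype.coe_inj] using hk⟩
  -- each element of Q sends 1 to a rotation
  have hQrot : ∀ g : Equiv.Perm (DihedralGroup (p ^ n)), g ∈ Q → IsRot (g 1) := by
    intro g hg
    obtain ⟨k, hk⟩ := hQpow g hg
    have hdvd : orderOf g ∣ p ^ k := orderOf_dvd_of_pow_eq_one hk
    obtain ⟨i, _, hi⟩ := (Nat.dvd_prime_pow hp).mp hdvd
    have hordodd : Odd (orderOf g) := hi ▸ hodd.pow
    have hordpos : 0 < orderOf g := by
      rw [hi]; exact pow_pos hp.pos i
    exact hol_isRot_one_of_odd hoddm (hT (hQT hg)) hordodd hordpos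
  -- cardinalities
  have hcardT : Nat.card ↥T = 2 * p ^ n * Nat.card ↥(stabilizer ↥T (1 : (DihedralGroup (p ^ n)))) := by
    have horb : MulAction.orbit ↥T (1 : (DihedralGroup (p ^ n))) = Set.univ := by
      refine Set.eq_univ_iff_forall.mpr fun y => ?_
      obtain ⟨t, ht, h⟩ := htrans 1 y
      exact ⟨⟨t, ht⟩, h⟩
    have := MulAction.index_stabilizer ↥T (1 : (DihedralGroup (p ^ n)))
    rw [horb, Set.ncard_univ] at this
    have hcd : Nat.card (DihedralGroup (p ^ n)) = 2 * p ^ n := DihedralGroup.nat_card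
    rw [← Subgroup.index_mul_card (stabilizer ↥T (1 : (DihedralGroup (p ^ n)))), this, hcd]
  have hstab_ne : Nat.card ↥(stabilizer ↥T (1 : DihedralGroup (p ^ n))) ≠ 0 :=
    Nat.card_pos.ne'
  have hp2 : p ≠ 2 := by rintro rfl; exact (by decide : ¬ Odd 2) hodd
  set a := (Nat.card ↥(stabilizer ↥T (1 : DihedralGroup (p ^ n)))).factorization p with ha
  have hcardQ : Nat.card ↥Q = p ^ (n + a) := by
    have h1 : Nat.card ↥Q = Nat.card ↥P.toSubgroup :=
      (Nat.card_congr (Subgroup.equivMapOfInjective _ _ T.subtype_injective).toEquiv).symm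
    rw [h1, Sylow.card_eq_multiplicity P, hcardT]
    congr 1
    rw [Nat.factorization_mul (Nat.mul_ne_zero (by norm_num) (pow_ne_zero _ hp.pos.ne'))
        hstab_ne, Finsupp.add_apply,
      Nat.factorization_mul (by norm_num) (pow_ne_zero _ hp.pos.ne'), Finsupp.add_apply,
      Nat.Prime.factorization_pow, Finsupp.single_apply, if_pos rfl,
      Nat.factorization_eq_zero_of_not_dvd
        (fun hdvd => hp2 ((Nat.prime_dvd_prime_iff_eq hp Nat.prime_two).mp hdvd))]
    omega
    exact hp
  -- stabilizer of Q is a p-group embedding in the stabilizer of T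
  obtain ⟨b, hb⟩ : ∃ b, Nat.card ↥(stabilizer ↥Q (1 : DihedralGroup (p ^ n))) = p ^ b :=
    IsPGroup.iff_card.mp (hQp.to_subgroup _)
  have hstabmem : ∀ g : ↥(stabilizer ↥Q (1 : DihedralGroup (p ^ n))),
      (⟨((g : ↥Q) : Equiv.Perm (DihedralGroup (p ^ n))), hQT (g : ↥Q).2⟩ : ↥T)
        ∈ stabilizer ↥T (1 : DihedralGroup (p ^ n)) := by
    intro g
    have hmem := g.2
    rw [MulAction.mem_stabilizer_iff] at hmem ⊢
    exact hmem
  set f : ↥(stabilizer ↥Q (1 : DihedralGroup (p ^ n))) →*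
      ↥(stabilizer ↥T (1 : DihedralGroup (p ^ n))) :=
    { toFun := fun g => ⟨_, hstabmem g⟩
      map_one' := rfl
      map_mul' := fun x y => rfl } with hfdef
  have hfinj : Function.Injective f := by
    intro x y hxy
    have h1 : ((f x : ↥T) : Equiv.Perm (DihedralGroup (p ^ n)))
        = ((f y : ↥T) : Equiv.Perm (DihedralGroup (p ^ n))) := by rw [hxy]
    exact Subtype.ext (Subtype.ext h1)
  have hba : b ≤ a := by
    have hdvd : p ^ b ∣ Nat.card ↥(stabilizer ↥T (1 : DihedralGroup (p ^ n))) :=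
      hb ▸ Subgroup.card_dvd_of_injective f hfinj
    exact (Nat.Prime.pow_dvd_iff_le_factorization hp hstab_ne).mp hdvd
  have hidx : (stabilizer ↥Q (1 : DihedralGroup (p ^ n))).index * p ^ b = p ^ (n + a) := by
    rw [← hb, Subgroup.index_mul_card, hcardQ]
  have hpn_le : p ^ n ≤ (stabilizer ↥Q (1 : DihedralGroup (p ^ n))).index := by
    have h2 : p ^ n * p ^ b ≤ (stabilizer ↥Q (1 : DihedralGroup (p ^ n))).index * p ^ b := by
      rw [hidx, ← pow_add]
      exact Nat.pow_le_pow_right hp.pos (by omega)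
    exact Nat.le_of_mul_le_mul_right h2 (pow_pos hp.pos b)
  have horbQ : (orbit ↥Q (1 : DihedralGroup (p ^ n))).ncard
      = (stabilizer ↥Q (1 : DihedralGroup (p ^ n))).index :=
    (index_stabilizer _ _).symm
  have hrinj : Function.Injective (r : ZMod (p ^ n) → DihedralGroup (p ^ n)) := by
    intro i j h; injection h
  have hRotcard : (Set.range (r : ZMod (p ^ n) → DihedralGroup (p ^ n))).ncard = p ^ n := by
    rw [← Nat.card_coe_set_eq, Nat.card_range_of_injective hrinj, Nat.card_zmod]
  have hsub : orbit ↥Q (1 : DihedralGroup (p ^ n))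
      ⊆ Set.range (r : ZMod (p ^ n) → DihedralGroup (p ^ n)) := by
    rintro y ⟨g, rfl⟩
    obtain ⟨i, hi⟩ := hQrot g g.2
    exact ⟨i, hi.symm⟩
  have heq : orbit ↥Q (1 : DihedralGroup (p ^ n))
      = Set.range (r : ZMod (p ^ n) → DihedralGroup (p ^ n)) :=
    Set.eq_of_subset_of_ncard_le hsub (by rw [hRotcard, horbQ]; exact hpn_le)
      (Set.toFinite _)
  have hr1 : r 1 ∈ orbit ↥Q (1 : DihedralGroup (p ^ n)) := heq ▸ ⟨1, rfl⟩
  obtain ⟨g, hg⟩ := hr1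
  exact ⟨(g : Equiv.Perm (DihedralGroup (p ^ n))), hQT g.2, hQpow _ g.2, hg⟩
end HolDih
end Lemmas

/-- Every transitive subgroup of the holomorph of `DihedralGroup (p ^ n)` (`p` an odd
prime, `n ≥ 1`) contains an element of order `p ^ n`. -/
theorem transitive_subgroup_hol_dihedral_has_elem_order_p_pow (p n : ℕ) (hp : p.Prime)
    (hodd : Odd p) (hn : 1 ≤ n)
    (T : Subgroup (Equiv.Perm (DihedralGroup (p ^ n))))
    (hT : T ≤ Hol (DihedralGroup (p ^ n)))
    (htrans : ∀ x y : DihedralGroup (p ^ n), ∃ t ∈ T, t x = y) :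
    ∃ t ∈ T, orderOf t = p ^ n := by
  obtain ⟨t, ht, hpk, h1⟩ := find_translation p n hp hodd hn T hT htrans
  exact ⟨t, ht, order_of_translation p n hp hodd hn (hT ht) h1 hpk⟩
end

section
/- Let p be an odd prime and n ≥ 1, and let P be a Sylow p-subgroup of the holomorph Hol(DihedralGroup(p^n)). Then P has order p^(3n-1), and the set of elements of P of order at most p^(n-1) is a subgroup of P of order p^(3n-3). -/
namespace HolAux

variable {X : Type*} [Group X]

lemma toPermHom_apply (x y : X) : MulAction.toPermHom X X x y = x * y := rfl

/-- The permutation `y ↦ σ y * b`. -/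
def holPerm (σ : MulAut X) (b : X) : Equiv.Perm X :=
  σ.toEquiv.trans (Equiv.mulRight b)

@[simp] lemma holPerm_apply (σ : MulAut X) (b : X) (y : X) : holPerm σ b y = σ y * b := rfl

lemma holPerm_mul (σ σ' : MulAut X) (b b' : X) :
    holPerm σ b * holPerm σ' b' = holPerm (σ * σ') (σ b' * b) := by
  ext y
  simp only [Equiv.Perm.mul_apply, holPerm_apply, MulAut.mul_apply, map_mul, mul_assoc]

lemma holPerm_one : holPerm (1 : MulAut X) (1 : X) = 1 := by
  ext y; simp

lemma holPerm_inv (σ : MulAut X) (b : X) :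
    (holPerm σ b)⁻¹ = holPerm σ⁻¹ (σ⁻¹ b⁻¹) := by
  rw [eq_comm, eq_inv_iff_mul_eq_one, holPerm_mul]
  simp only [inv_mul_cancel, map_inv]
  convert holPerm_one using 2
  simp

lemma holPerm_conj (σ : MulAut X) (b : X) (x : X) :
    holPerm σ b * MulAction.toPermHom X X x * (holPerm σ b)⁻¹ =
      MulAction.toPermHom X X (σ x) := by
  ext y
  simp only [Equiv.Perm.mul_apply, holPerm_apply, toPermHom_apply, holPerm_inv, map_mul,
    MulAut.inv_def, mul_assoc]
  simp [mul_assoc]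

lemma holPerm_mem_Hol (σ : MulAut X) (b : X) : holPerm σ b ∈ Hol X := by
  rw [Hol, Subgroup.mem_normalizer_iff]
  intro g
  constructor
  · rintro ⟨x, rfl⟩
    exact ⟨σ x, (holPerm_conj σ b x).symm⟩
  · rintro ⟨x, hx⟩
    refine ⟨σ⁻¹ x, ?_⟩
    have h := holPerm_conj σ⁻¹ (σ⁻¹ b⁻¹) x
    rw [← holPerm_inv, inv_inv] at h
    have := congrArg (fun q => (holPerm σ b)⁻¹ * q * holPerm σ b) hx
    simp only [mul_assoc, inv_mul_cancel_left, inv_mul_cancel, mul_inv_cancel, mul_one]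
      at this h ⊢
    rw [← h, this]

lemma exists_holPerm_of_mem_Hol {η : Equiv.Perm X} (hη : η ∈ Hol X) :
    ∃ (σ : MulAut X) (b : X), η = holPerm σ b := by
  rw [Hol, Subgroup.mem_normalizer_iff] at hη
  have key : ∀ x : X, η * MulAction.toPermHom X X x * η⁻¹ =
      MulAction.toPermHom X X (η (x * η⁻¹ 1)) := by
    intro x
    obtain ⟨z, hz⟩ := (hη (MulAction.toPermHom X X x)).mp ⟨x, rfl⟩
    have h1 : z = η (x * η⁻¹ 1) := by
      have := congrFun (congrArg (fun (q : Equiv.Perm X) => (q : X → X)) hz) 1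
      simpa [toPermHom_apply] using this
    rw [← hz, h1]
  have keyval : ∀ x y : X, η (x * y) = η (x * η⁻¹ 1) * η y := by
    intro x y
    have := congrFun (congrArg (fun (q : Equiv.Perm X) => (q : X → X)) (key x)) (η y)
    simpa [toPermHom_apply] using this
  set τ : X → X := fun x => η (x * η⁻¹ 1) with hτ
  have τmul : ∀ x y : X, τ (x * y) = τ x * τ y := by
    intro x y
    have h2 := keyval x (y * η⁻¹ 1)
    simp only [hτ, mul_assoc] at h2 ⊢
    exact h2
  have τleft : Function.LeftInverse (fun x => η⁻¹ (x * η 1)) τ := by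
    intro x
    have := keyval x 1
    simp only [mul_one] at this
    simp only [hτ]
    rw [← this]
    simp
  have τright : Function.RightInverse (fun x => η⁻¹ (x * η 1)) τ := by
    intro x
    have := keyval (η⁻¹ (x * η 1)) 1
    simp only [mul_one] at this
    simp only [hτ]
    have h2 : η (η⁻¹ (x * η 1) * η⁻¹ 1) * η 1 = x * η 1 := by
      rw [← this]; simp
    exact mul_right_cancel h2
  refine ⟨MulEquiv.mk (Equiv.mk τ (fun x => η⁻¹ (x * η 1)) τleft τright) τmul, η 1, ?_⟩
  ext y
  have := keyval y 1
  simp only [mul_one] at this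
  simpa [holPerm, hτ] using this

/-- Parametrization of the holomorph. -/
noncomputable def holParam : MulAut X × X ≃ ↥(Hol X) := by
  refine Equiv.ofBijective (fun q => ⟨holPerm q.1 q.2, holPerm_mem_Hol q.1 q.2⟩) ⟨?_, ?_⟩
  · rintro ⟨σ, b⟩ ⟨σ', b'⟩ h
    simp only [Subtype.mk_eq_mk] at h
    have hb : b = b' := by
      have := congrFun (congrArg (fun (q : Equiv.Perm X) => (q : X → X)) h) 1
      simpa using this
    subst hb
    have hσ : σ = σ' := by
      ext x
      have := congrFun (congrArg (fun (q : Equiv.Perm X) => (q : X → X)) h) x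
      simpa using this
    simp [hσ]
  · rintro ⟨η, hη⟩
    obtain ⟨σ, b, rfl⟩ := exists_holPerm_of_mem_Hol hη
    exact ⟨(σ, b), rfl⟩

lemma card_Hol : Nat.card ↥(Hol X) = Nat.card (MulAut X) * Nat.card X := by
  rw [← Nat.card_congr (holParam (X := X)), Nat.card_prod]


open DihedralGroup


variable {m : ℕ}

/-- The automorphism of the dihedral group: `r i ↦ r (k i)`, `sr i ↦ sr (k i + t)`. -/
def dihAut (k : (ZMod m)ˣ) (t : ZMod m) : MulAut (DihedralGroup m) where
  toFun x := match x with
    | r i => r ((k : ZMod m) * i)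
    | sr i => sr ((k : ZMod m) * i + t)
  invFun x := match x with
    | r i => r ((k⁻¹ : (ZMod m)ˣ) * i)
    | sr i => sr ((k⁻¹ : (ZMod m)ˣ) * (i - t))
  left_inv := by
    rintro (i | i) <;> simp [← mul_assoc, ← Units.val_mul]
  right_inv := by
    rintro (i | i) <;> simp [← mul_assoc, ← Units.val_mul]
  map_mul' := by
    rintro (i | i) (j | j) <;>
      simp only [r_mul_r, r_mul_sr, sr_mul_r, sr_mul_sr, mul_add, mul_sub] <;> ring_nf

@[simp] lemma dihAut_r (k : (ZMod m)ˣ) (t : ZMod m) (i : ZMod m) :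
    dihAut k t (r i) = r ((k : ZMod m) * i) := rfl

@[simp] lemma dihAut_sr (k : (ZMod m)ˣ) (t : ZMod m) (i : ZMod m) :
    dihAut k t (sr i) = sr ((k : ZMod m) * i + t) := rfl

lemma dihAut_mul (k k' : (ZMod m)ˣ) (t t' : ZMod m) :
    dihAut k t * dihAut k' t' = dihAut (k * k') ((k : ZMod m) * t' + t) := by
  ext x
  rcases x with i | i <;>
    simp [MulAut.mul_apply, mul_add, mul_assoc, add_assoc]

lemma dihAut_one : dihAut (1 : (ZMod m)ˣ) (0 : ZMod m) = 1 := by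
  ext x; rcases x with i | i <;> simp

lemma dihAut_inj {k k' : (ZMod m)ˣ} {t t' : ZMod m}
    (h : dihAut k t = dihAut k' t') : k = k' ∧ t = t' := by
  have h1 := congrArg (fun σ : MulAut (DihedralGroup m) => σ (r 1)) h
  have h2 := congrArg (fun σ : MulAut (DihedralGroup m) => σ (sr 0)) h
  simp only [dihAut_r, dihAut_sr, mul_one, mul_zero, zero_add, r.injEq, sr.injEq] at h1 h2
  exact ⟨Units.ext h1, h2⟩

lemma dihAut_inv (k : (ZMod m)ˣ) (t : ZMod m) :
    (dihAut k t)⁻¹ = dihAut k⁻¹ (-((k⁻¹ : (ZMod m)ˣ) * t)) := by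
  rw [eq_comm, eq_inv_iff_mul_eq_one, dihAut_mul, ← dihAut_one]
  congr 1
  · simp
  · simp [mul_assoc, ← Units.val_mul]

/-- Every automorphism of an odd dihedral group has the form `dihAut k t`. -/
lemma exists_dihAut (hm1 : 1 < m) (hmodd : Odd m) (σ : MulAut (DihedralGroup m)) :
    ∃ (k : (ZMod m)ˣ) (t : ZMod m), σ = dihAut k t := by
  haveI : NeZero m := ⟨by omega⟩
  have hm2 : m ≠ 2 := by rintro rfl; exact (Nat.not_odd_iff_even.mpr (by decide)) hmodd
  -- the image of r 1 is a rotation r u with u a unit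
  have horder : orderOf (σ (r 1)) = m := by
    rw [MulEquiv.orderOf_eq σ (r 1), orderOf_r_one]
  rcases hr1 : σ (r 1) with u | u
  swap
  · rw [hr1, orderOf_sr] at horder; omega
  rw [hr1, orderOf_r] at horder
  have hgcd : Nat.gcd m u.val = 1 := by
    have hd := Nat.gcd_dvd_left m u.val
    rcases (Nat.div_eq_self.mp horder) with h0 | h1
    · omega
    · exact h1
  set k : (ZMod m)ˣ := ZMod.unitOfCoprime u.val (Nat.coprime_comm.mp hgcd) with hk
  have hku : (k : ZMod m) = u := by
    rw [hk, ZMod.coe_unitOfCoprime, ZMod.natCast_zmod_val]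
  -- the image of sr 0 is a reflection
  have horder2 : orderOf (σ (sr 0)) = 2 := by
    rw [MulEquiv.orderOf_eq σ (sr 0), orderOf_sr]
  rcases hsr0 : σ (sr 0) with t | t
  · exfalso
    rw [hsr0, orderOf_r] at horder2
    have : 2 ∣ m := by
      refine ⟨Nat.gcd m t.val, ?_⟩
      rw [← horder2, Nat.div_mul_cancel (Nat.gcd_dvd_left m t.val)]
    have h2 := Nat.odd_iff.mp hmodd
    omega
  refine ⟨k, t, ?_⟩
  have hri : ∀ i : ZMod m, σ (r i) = r (u * i) := by
    intro i
    have : (r i : DihedralGroup m) = (r 1) ^ i.val := by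
      rw [r_one_pow, ZMod.natCast_zmod_val]
    rw [this, map_pow, hr1, show (r u : DihedralGroup m) = (r 1) ^ u.val by
      rw [r_one_pow, ZMod.natCast_zmod_val], ← pow_mul, r_one_pow]
    congr 1
    push_cast
    rw [ZMod.natCast_zmod_val, ZMod.natCast_zmod_val]
  ext x
  rcases x with i | i
  · simp [hri i, hku]
  · have h3 : (sr i : DihedralGroup m) = sr 0 * r i := by rw [sr_mul_r, zero_add]
    rw [h3, map_mul, hsr0, hri i]
    simp [hku, add_comm]



variable {m : ℕ}


lemma card_mulAut_dihedral (hm1 : 1 < m) (hmodd : Odd m) :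
    Nat.card (MulAut (DihedralGroup m)) = m.totient * m := by
  haveI : NeZero m := ⟨by omega⟩
  have e : ((ZMod m)ˣ × ZMod m) ≃ MulAut (DihedralGroup m) := by
    refine Equiv.ofBijective (fun q => dihAut q.1 q.2) ⟨?_, ?_⟩
    · rintro ⟨k, t⟩ ⟨k', t'⟩ h
      obtain ⟨h1, h2⟩ := dihAut_inj h
      exact Prod.ext h1 h2
    · intro σ
      obtain ⟨k, t, rfl⟩ := exists_dihAut hm1 hmodd σ
      exact ⟨(k, t), rfl⟩
  rw [← Nat.card_congr e, Nat.card_prod, Nat.card_eq_fintype_card, ZMod.card_units_eq_totient,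
    Nat.card_zmod]

lemma card_Hol_dihedral (hm1 : 1 < m) (hmodd : Odd m) :
    Nat.card ↥(Hol (DihedralGroup m)) = m.totient * m * (2 * m) := by
  haveI : NeZero m := ⟨by omega⟩
  rw [card_Hol, card_mulAut_dihedral hm1 hmodd, DihedralGroup.nat_card]



lemma binom_aux (x : ℤ) (e : ℕ) : ∃ c : ℤ, (1 + x) ^ e = 1 + e * x + x ^ 2 * c := by
  induction e with
  | zero => exact ⟨0, by ring⟩
  | succ e ih =>
    obtain ⟨c, hc⟩ := ih
    exact ⟨c + e + x * c, by rw [pow_succ, hc]; push_cast; ring⟩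

lemma geom_aux (x : ℤ) (q : ℕ) :
    ∃ c : ℤ, ∑ l ∈ Finset.range q, (1 + x) ^ l =
      q + (∑ l ∈ Finset.range q, (l : ℤ)) * x + x ^ 2 * c := by
  induction q with
  | zero => exact ⟨0, by simp⟩
  | succ q ih =>
    obtain ⟨c, hc⟩ := ih
    obtain ⟨d, hd⟩ := binom_aux x q
    refine ⟨c + d, ?_⟩
    rw [Finset.sum_range_succ, hc, hd, Finset.sum_range_succ]
    push_cast
    ring

lemma sum_range_id_dvd_odd_prime {p : ℕ} (hp : p.Prime) (hodd : Odd p) :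
    (p : ℤ) ∣ ∑ l ∈ Finset.range p, (l : ℤ) := by
  have h2 : (∑ l ∈ Finset.range p, l) * 2 = p * (p - 1) := Finset.sum_range_id_mul_two p
  have hdvd : p ∣ (∑ l ∈ Finset.range p, l) * 2 := ⟨p - 1, h2⟩
  have := (Nat.Coprime.dvd_of_dvd_mul_right ?_ hdvd)
  · have h3 : (p : ℤ) ∣ ((∑ l ∈ Finset.range p, l : ℕ) : ℤ) := Int.natCast_dvd_natCast.mpr this
    simpa using h3
  · have : ¬ (2 ∣ p) := by
      rw [Nat.odd_iff] at hodd; omega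
    exact (Nat.coprime_primes hp Nat.prime_two).mpr (by rintro rfl; exact this ⟨1, rfl⟩)

lemma pow_prime_pow_sub_one {p : ℕ} {K : ℤ} (hK : (p : ℤ) ∣ K - 1) (j : ℕ) :
    (p : ℤ) ^ (j + 1) ∣ K ^ p ^ j - 1 := by
  induction j with
  | zero => simpa using hK
  | succ j ih =>
    obtain ⟨e, he⟩ := ih
    have hKe : K ^ p ^ j = 1 + (p : ℤ) ^ (j + 1) * e := by linarith
    obtain ⟨c, hc⟩ := binom_aux ((p : ℤ) ^ (j + 1) * e) p
    have hKp : K ^ p ^ (j + 1) = (K ^ p ^ j) ^ p := by rw [← pow_mul, pow_succ]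
    refine ⟨e + (p : ℤ) ^ j * e ^ 2 * c, ?_⟩
    rw [hKp, hKe, hc]
    push_cast
    ring

lemma sum_pow_mul (x : ℤ) (a b : ℕ) :
    ∑ i ∈ Finset.range (a * b), x ^ i =
      (∑ i ∈ Finset.range a, x ^ i) * (∑ l ∈ Finset.range b, (x ^ a) ^ l) := by
  induction b with
  | zero => simp
  | succ b ih =>
    rw [Nat.mul_succ, Finset.sum_range_add, ih, Finset.sum_range_succ, mul_add]
    congr 1
    rw [Finset.sum_mul]
    refine Finset.sum_congr rfl fun i _ => ?_
    rw [← pow_mul, ← pow_add, Nat.add_comm]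

lemma geom_sum_prime_pow {p : ℕ} (hp : p.Prime) (hodd : Odd p) {K : ℤ}
    (hK : (p : ℤ) ∣ K - 1) (j : ℕ) :
    (p : ℤ) ^ (j + 1) ∣ (∑ i ∈ Finset.range (p ^ j), K ^ i) - p ^ j := by
  induction j with
  | zero => simp
  | succ j ih =>
    have hsplit : ∑ i ∈ Finset.range (p ^ (j + 1)), K ^ i =
        (∑ i ∈ Finset.range (p ^ j), K ^ i) *
          (∑ l ∈ Finset.range p, (K ^ p ^ j) ^ l) := by
      rw [pow_succ, sum_pow_mul]
    obtain ⟨A, hA⟩ := ih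
    obtain ⟨e, he⟩ := pow_prime_pow_sub_one hK j
    have hS : ∑ i ∈ Finset.range (p ^ j), K ^ i = p ^ j + (p : ℤ) ^ (j + 1) * A := by
      linarith
    have hM : K ^ p ^ j = 1 + (p : ℤ) ^ (j + 1) * e := by linarith
    obtain ⟨c, hc⟩ := geom_aux ((p : ℤ) ^ (j + 1) * e) p
    obtain ⟨w, hw⟩ := sum_range_id_dvd_odd_prime hp hodd
    rw [hsplit, hS, hM, hc, hw]
    refine ⟨A + (p:ℤ)^j*w*e + (p:ℤ)^(2*j)*e^2*c + (p:ℤ)^(j+1)*A*w*e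
      + (p:ℤ)^(2*j+1)*A*e^2*c, ?_⟩
    push_cast
    ring




section

variable {p n : ℕ}

/-- The kernel of the reduction map on units, i.e. units `≡ 1 mod p`. -/
def UU (p n : ℕ) (h : p ∣ p ^ n) : Subgroup (ZMod (p ^ n))ˣ :=
  (ZMod.unitsMap h).ker

lemma mem_UU_iff {h : p ∣ p ^ n} {k : (ZMod (p ^ n))ˣ} :
    k ∈ UU p n h ↔ ZMod.castHom h (ZMod p) (k : ZMod (p ^ n)) = 1 := by
  rw [UU, MonoidHom.mem_ker, ZMod.unitsMap_def, Units.ext_iff]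
  rfl

lemma card_UU (hp : p.Prime) (hn : 1 ≤ n) (h : p ∣ p ^ n) :
    Nat.card ↥(UU p n h) = p ^ (n - 1) := by
  haveI : Fact p.Prime := ⟨hp⟩
  haveI : NeZero (p ^ n) := ⟨pow_ne_zero n hp.ne_zero⟩
  have hsurj := ZMod.unitsMap_surjective (n := p) (m := p ^ n) h
  have e := QuotientGroup.quotientKerEquivOfSurjective _ hsurj
  have hcard := Subgroup.card_eq_card_quotient_mul_card_subgroup (UU p n h)
  rw [UU] at hcard ⊢
  rw [Nat.card_congr e.toEquiv] at hcard
  have h1 : Nat.card (ZMod (p ^ n))ˣ = p ^ (n - 1) * (p - 1) := by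
    rw [Nat.card_eq_fintype_card, ZMod.card_units_eq_totient,
      Nat.totient_prime_pow hp (by omega)]
  have h2 : Nat.card (ZMod p)ˣ = p - 1 := by
    rw [Nat.card_eq_fintype_card, ZMod.card_units_eq_totient, Nat.totient_prime hp]
  rw [h1, h2] at hcard
  have hpos : 0 < p - 1 := by have := hp.two_le; omega
  have : (p - 1) * p ^ (n - 1) = (p - 1) * Nat.card (ZMod.unitsMap h).ker := by
    rw [mul_comm (p-1)] at hcard ⊢
    linarith [hcard]
  exact (Nat.eq_of_mul_eq_mul_left hpos this).symm

lemma int_dvd_of_mem_UU (hp : p.Prime) {h : p ∣ p ^ n} {k : (ZMod (p ^ n))ˣ}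
    (hk : k ∈ UU p n h) :
    (p : ℤ) ∣ (((k : ZMod (p ^ n)).val : ℤ) - 1) := by
  haveI : NeZero (p ^ n) := ⟨pow_ne_zero n hp.ne_zero⟩
  rw [mem_UU_iff] at hk
  have h1 : (((k : ZMod (p ^ n)).val : ℤ) : ZMod p) - 1 = 0 := by
    push_cast
    rw [ZMod.natCast_val, ← ZMod.castHom_apply (h := h), hk, sub_self]
  have : ((((k : ZMod (p ^ n)).val : ℤ) - 1 : ℤ) : ZMod p) = 0 := by push_cast at h1 ⊢; exact h1
  exact (ZMod.intCast_zmod_eq_zero_iff_dvd _ _).mp this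

end



-- assume earlier parts

section
variable {p n : ℕ}

lemma geom_sum_eq (hp : p.Prime) (hodd : Odd p) (hn : 1 ≤ n) {h : p ∣ p ^ n}
    {k : (ZMod (p ^ n))ˣ} (hk : k ∈ UU p n h) :
    (∑ i ∈ Finset.range (p ^ (n - 1)), ((k : ZMod (p ^ n))) ^ i) =
      ((p : ZMod (p ^ n)) ^ (n - 1)) := by
  haveI : NeZero (p ^ n) := ⟨pow_ne_zero n hp.ne_zero⟩
  set K : ℤ := ((k : ZMod (p ^ n)).val : ℤ) with hKdef
  have hK : (p : ℤ) ∣ K - 1 := int_dvd_of_mem_UU hp hk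
  have hdvd := geom_sum_prime_pow hp hodd hK (n - 1)
  rw [Nat.sub_add_cancel hn] at hdvd
  have hcast : ((K : ℤ) : ZMod (p ^ n)) = (k : ZMod (p ^ n)) := by
    rw [hKdef]
    push_cast
    rw [ZMod.natCast_zmod_val]
  have h0 : (((∑ i ∈ Finset.range (p ^ (n - 1)), K ^ i) - (p : ℤ) ^ (n - 1) : ℤ) :
      ZMod (p ^ n)) = 0 := by
    rw [ZMod.intCast_zmod_eq_zero_iff_dvd]
    exact_mod_cast hdvd
  push_cast at h0
  rw [sub_eq_zero] at h0
  rw [hcast] at h0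
  exact h0

lemma pow_eq_one_of_mem_UU (hp : p.Prime) (hn : 1 ≤ n) {h : p ∣ p ^ n}
    {k : (ZMod (p ^ n))ˣ} (hk : k ∈ UU p n h) :
    k ^ (p ^ (n - 1)) = 1 := by
  haveI : NeZero (p ^ n) := ⟨pow_ne_zero n hp.ne_zero⟩
  set K : ℤ := ((k : ZMod (p ^ n)).val : ℤ) with hKdef
  have hK : (p : ℤ) ∣ K - 1 := int_dvd_of_mem_UU hp hk
  have hdvd := pow_prime_pow_sub_one hK (n - 1)
  rw [Nat.sub_add_cancel hn] at hdvd
  have hcast : ((K : ℤ) : ZMod (p ^ n)) = (k : ZMod (p ^ n)) := by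
    rw [hKdef]; push_cast; rw [ZMod.natCast_zmod_val]
  have h0 : ((K ^ (p ^ (n - 1)) - 1 : ℤ) : ZMod (p ^ n)) = 0 := by
    rw [ZMod.intCast_zmod_eq_zero_iff_dvd]
    exact_mod_cast hdvd
  push_cast at h0
  rw [sub_eq_zero, hcast] at h0
  ext
  push_cast
  exact h0

lemma pow_mul_eq_zero_iff (hp : p.Prime) (hn : 1 ≤ n) (a : ZMod (p ^ n)) :
    (p : ZMod (p ^ n)) ^ (n - 1) * a = 0 ↔ ∃ b : ZMod (p ^ n), a = p * b := by
  haveI : NeZero (p ^ n) := ⟨pow_ne_zero n hp.ne_zero⟩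
  constructor
  · intro hzero
    have h1 : ((p ^ (n - 1) * a.val : ℕ) : ZMod (p ^ n)) = 0 := by
      push_cast
      rw [ZMod.natCast_zmod_val]
      exact hzero
    rw [ZMod.natCast_eq_zero_iff] at h1
    have h2 : p ^ (n - 1) * p ∣ p ^ (n - 1) * a.val := by
      rw [← pow_succ, Nat.sub_add_cancel hn]
      exact h1
    have h3 : p ∣ a.val := (Nat.mul_dvd_mul_iff_left (pow_pos hp.pos (n - 1))).mp h2
    obtain ⟨c, hc⟩ := h3
    refine ⟨(c : ZMod (p ^ n)), ?_⟩
    rw [← ZMod.natCast_zmod_val a, hc]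
    push_cast
    ring
  · rintro ⟨b, rfl⟩
    rw [← mul_assoc, ← pow_succ, Nat.sub_add_cancel hn]
    have : ((p : ZMod (p ^ n)) ^ n) = 0 := by
      have : (((p ^ n : ℕ)) : ZMod (p ^ n)) = 0 := ZMod.natCast_self _
      push_cast at this
      exact this
    rw [this, zero_mul]

end


variable {m : ℕ}

lemma holPerm_dihAut_one' : holPerm (dihAut (1 : (ZMod m)ˣ) (0 : ZMod m)) (r 0) = 1 := by
  rw [dihAut_one, show (r 0 : DihedralGroup m) = 1 from (one_def).symm, holPerm_one]

lemma holPerm_dihAut_mul (k k' : (ZMod m)ˣ) (t t' a a' : ZMod m) :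
    holPerm (dihAut k t) (r a) * holPerm (dihAut k' t') (r a') =
      holPerm (dihAut (k * k') ((k : ZMod m) * t' + t)) (r ((k : ZMod m) * a' + a)) := by
  rw [holPerm_mul, dihAut_mul]
  congr 1

lemma holPerm_dihAut_inv (k : (ZMod m)ˣ) (t a : ZMod m) :
    (holPerm (dihAut k t) (r a))⁻¹ =
      holPerm (dihAut k⁻¹ (-((k⁻¹ : (ZMod m)ˣ) * t))) (r (-((k⁻¹ : (ZMod m)ˣ) * a))) := by
  rw [holPerm_inv, dihAut_inv]
  congr 1
  rw [show (r a : DihedralGroup m)⁻¹ = r (-a) from rfl, dihAut_r, mul_neg]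

lemma holPerm_dihAut_inj {k k' : (ZMod m)ˣ} {t t' a a' : ZMod m}
    (h : holPerm (dihAut k t) (r a) = holPerm (dihAut k' t') (r a')) :
    a = a' ∧ t = t' ∧ k = k' := by
  have e0 := congrFun (congrArg (fun (q : Equiv.Perm (DihedralGroup m)) => (q : _ → _)) h) (r 0)
  have e1 := congrFun (congrArg (fun (q : Equiv.Perm (DihedralGroup m)) => (q : _ → _)) h) (r 1)
  have e2 := congrFun (congrArg (fun (q : Equiv.Perm (DihedralGroup m)) => (q : _ → _)) h) (sr 0)
  simp only [holPerm_apply, dihAut_r, dihAut_sr, mul_zero, mul_one, r_mul_r, sr_mul_r,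
    zero_add, add_zero, r.injEq, sr.injEq] at e0 e1 e2
  refine ⟨e0, ?_, ?_⟩
  · have := e2
    rwa [e0, add_left_inj] at this
  · refine Units.ext ?_
    have := e1
    rwa [e0, add_left_inj] at this

lemma holPerm_dihAut_pow (k : (ZMod m)ˣ) (t a : ZMod m) (j : ℕ) :
    (holPerm (dihAut k t) (r a)) ^ j =
      holPerm (dihAut (k ^ j) ((∑ i ∈ Finset.range j, ((k : ZMod m)) ^ i) * t))
        (r ((∑ i ∈ Finset.range j, ((k : ZMod m)) ^ i) * a)) := by
  induction j with
  | zero => simp [dihAut_one, holPerm_one]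
  | succ j ih =>
    have hS : ∑ i ∈ Finset.range (j + 1), ((k : ZMod m)) ^ i
        = 1 + (k : ZMod m) * ∑ i ∈ Finset.range j, ((k : ZMod m)) ^ i := by
      rw [Finset.sum_range_succ', pow_zero, Finset.mul_sum, add_comm]
      congr 1
      exact Finset.sum_congr rfl fun i _ => pow_succ' _ _
    rw [pow_succ', ih, holPerm_dihAut_mul, hS]
    congr 1
    · congr 1
      · exact (pow_succ' k j).symm
      · ring
    · congr 1
      ring


variable {p n : ℕ}

/-- The explicit Sylow `p`-subgroup of the holomorph. -/
def Hsub (p n : ℕ) (h : p ∣ p ^ n) : Subgroup (Equiv.Perm (DihedralGroup (p ^ n))) where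
  carrier := {f | ∃ (a t : ZMod (p ^ n)) (k : (ZMod (p ^ n))ˣ), k ∈ UU p n h ∧
    f = holPerm (dihAut k t) (r a)}
  one_mem' := ⟨0, 0, 1, one_mem _, holPerm_dihAut_one'.symm⟩
  mul_mem' := by
    rintro f g ⟨a, t, k, hk, rfl⟩ ⟨a', t', k', hk', rfl⟩
    exact ⟨(k : ZMod (p ^ n)) * a' + a, (k : ZMod (p ^ n)) * t' + t, k * k',
      mul_mem hk hk', holPerm_dihAut_mul k k' t t' a a'⟩
  inv_mem' := by
    rintro f ⟨a, t, k, hk, rfl⟩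
    exact ⟨-((k⁻¹ : (ZMod (p ^ n))ˣ) * a), -((k⁻¹ : (ZMod (p ^ n))ˣ) * t), k⁻¹,
      inv_mem hk, holPerm_dihAut_inv k t a⟩

/-- The subgroup of elements of order dividing `p ^ (n-1)`. -/
def Qsub (p n : ℕ) (h : p ∣ p ^ n) : Subgroup (Equiv.Perm (DihedralGroup (p ^ n))) where
  carrier := {f | ∃ (a t : ZMod (p ^ n)) (k : (ZMod (p ^ n))ˣ), k ∈ UU p n h ∧
    (∃ b, a = p * b) ∧ (∃ b, t = p * b) ∧ f = holPerm (dihAut k t) (r a)}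
  one_mem' := ⟨0, 0, 1, one_mem _, ⟨0, by ring⟩, ⟨0, by ring⟩, holPerm_dihAut_one'.symm⟩
  mul_mem' := by
    rintro f g ⟨a, t, k, hk, ⟨b1, rfl⟩, ⟨b2, rfl⟩, rfl⟩
      ⟨a', t', k', hk', ⟨b1', rfl⟩, ⟨b2', rfl⟩, rfl⟩
    refine ⟨(k : ZMod (p ^ n)) * (p * b1') + p * b1, (k : ZMod (p ^ n)) * (p * b2') + p * b2,
      k * k', mul_mem hk hk', ⟨(k : ZMod (p ^ n)) * b1' + b1, by ring⟩,
      ⟨(k : ZMod (p ^ n)) * b2' + b2, by ring⟩,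
      holPerm_dihAut_mul k k' (p * b2) (p * b2') (p * b1) (p * b1')⟩
  inv_mem' := by
    rintro f ⟨a, t, k, hk, ⟨b1, rfl⟩, ⟨b2, rfl⟩, rfl⟩
    exact ⟨-((k⁻¹ : (ZMod (p ^ n))ˣ) * (p * b1)), -((k⁻¹ : (ZMod (p ^ n))ˣ) * (p * b2)), k⁻¹,
      inv_mem hk, ⟨-((k⁻¹ : (ZMod (p ^ n))ˣ) * b1), by ring⟩,
      ⟨-((k⁻¹ : (ZMod (p ^ n))ˣ) * b2), by ring⟩, holPerm_dihAut_inv k (p * b2) (p * b1)⟩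

lemma Qsub_le_Hsub (h : p ∣ p ^ n) : Qsub p n h ≤ Hsub p n h := by
  rintro f ⟨a, t, k, hk, _, _, rfl⟩
  exact ⟨a, t, k, hk, rfl⟩

lemma Hsub_le_Hol (h : p ∣ p ^ n) : Hsub p n h ≤ Hol (DihedralGroup (p ^ n)) := by
  rintro f ⟨a, t, k, hk, rfl⟩
  exact holPerm_mem_Hol _ _

lemma card_Hsub (hp : p.Prime) (hn : 1 ≤ n) (h : p ∣ p ^ n) :
    Nat.card ↥(Hsub p n h) = p ^ (3 * n - 1) := by
  haveI : NeZero (p ^ n) := ⟨pow_ne_zero n hp.ne_zero⟩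
  have e : (ZMod (p ^ n) × ZMod (p ^ n) × ↥(UU p n h)) ≃ ↥(Hsub p n h) := by
    refine Equiv.ofBijective
      (fun q => ⟨holPerm (dihAut q.2.2.1 q.2.1) (r q.1), q.1, q.2.1, q.2.2.1, q.2.2.2, rfl⟩)
      ⟨?_, ?_⟩
    · rintro ⟨a, t, k⟩ ⟨a', t', k'⟩ hq
      simp only [Subtype.mk_eq_mk] at hq
      obtain ⟨h1, h2, h3⟩ := holPerm_dihAut_inj (congrArg Subtype.val hq)
      simp only [Prod.mk.injEq]
      exact ⟨h1, h2, Subtype.ext h3⟩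
    · rintro ⟨f, a, t, k, hk, rfl⟩
      exact ⟨⟨a, t, k, hk⟩, rfl⟩
  rw [← Nat.card_congr e, Nat.card_prod, Nat.card_prod, Nat.card_zmod, card_UU hp hn h,
    ← pow_add, ← pow_add]
  congr 1
  omega

/-- The embedding of multiples of `p`. -/
def iota (p n : ℕ) (b : ZMod (p ^ (n - 1))) : ZMod (p ^ n) := ((p * b.val : ℕ) : ZMod (p ^ n))

lemma iota_inj (hp : p.Prime) (hn : 1 ≤ n) : Function.Injective (iota p n) := by
  haveI : NeZero (p ^ n) := ⟨pow_ne_zero n hp.ne_zero⟩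
  haveI : NeZero (p ^ (n - 1)) := ⟨pow_ne_zero _ hp.ne_zero⟩
  intro b b' hbb
  have hb : p * b.val < p ^ n := by
    have h1 := ZMod.val_lt b
    have h2 : p * p ^ (n - 1) = p ^ n := by rw [← pow_succ', Nat.sub_add_cancel hn]
    have h3 := mul_lt_mul_of_pos_left h1 hp.pos
    omega
  have hb' : p * b'.val < p ^ n := by
    have h1 := ZMod.val_lt b'
    have h2 : p * p ^ (n - 1) = p ^ n := by rw [← pow_succ', Nat.sub_add_cancel hn]
    have h3 := mul_lt_mul_of_pos_left h1 hp.pos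
    omega
  have := congrArg ZMod.val hbb
  rw [iota, iota, ZMod.val_natCast, ZMod.val_natCast, Nat.mod_eq_of_lt hb,
    Nat.mod_eq_of_lt hb'] at this
  have hval : b.val = b'.val := by
    have hp0 := hp.pos
    exact Nat.eq_of_mul_eq_mul_left hp0 this
  exact ZMod.val_injective _ hval

lemma iota_mul (b : ZMod (p ^ (n - 1))) :
    iota p n b = p * ((b.val : ℕ) : ZMod (p ^ n)) := by
  rw [iota]
  push_cast
  rfl

lemma iota_surj (hp : p.Prime) (hn : 1 ≤ n) (a : ZMod (p ^ n)) (hmult : ∃ b, a = p * b) :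
    ∃ c, iota p n c = a := by
  haveI : NeZero (p ^ n) := ⟨pow_ne_zero n hp.ne_zero⟩
  haveI : NeZero (p ^ (n - 1)) := ⟨pow_ne_zero _ hp.ne_zero⟩
  obtain ⟨b, rfl⟩ := hmult
  refine ⟨((b.val : ℕ) : ZMod (p ^ (n - 1))), ?_⟩
  rw [iota, ZMod.val_natCast]
  have hmod : p * (b.val % p ^ (n - 1)) ≡ p * b.val [MOD p * p ^ (n - 1)] :=
    Nat.ModEq.mul_left' p (Nat.mod_modEq b.val (p ^ (n - 1)))
  rw [← pow_succ', Nat.sub_add_cancel hn] at hmod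
  calc ((p * (b.val % p ^ (n - 1)) : ℕ) : ZMod (p ^ n))
      = ((p * b.val : ℕ) : ZMod (p ^ n)) := (ZMod.natCast_eq_natCast_iff _ _ _).mpr hmod
    _ = p * b := by push_cast; rw [ZMod.natCast_zmod_val]

lemma card_Qsub (hp : p.Prime) (hn : 1 ≤ n) (h : p ∣ p ^ n) :
    Nat.card ↥(Qsub p n h) = p ^ (3 * n - 3) := by
  haveI : NeZero (p ^ n) := ⟨pow_ne_zero n hp.ne_zero⟩
  have e : (ZMod (p ^ (n - 1)) × ZMod (p ^ (n - 1)) × ↥(UU p n h)) ≃ ↥(Qsub p n h) := by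
    refine Equiv.ofBijective (fun q =>
      ⟨holPerm (dihAut q.2.2.1 (iota p n q.2.1)) (r (iota p n q.1)),
        iota p n q.1, iota p n q.2.1, q.2.2.1, q.2.2.2,
        ⟨_, iota_mul q.1⟩, ⟨_, iota_mul q.2.1⟩, rfl⟩) ⟨?_, ?_⟩
    · rintro ⟨a, t, k⟩ ⟨a', t', k'⟩ hq
      simp only [Subtype.mk_eq_mk] at hq
      obtain ⟨h1, h2, h3⟩ := holPerm_dihAut_inj (congrArg Subtype.val hq)
      simp only [Prod.mk.injEq]
      exact ⟨iota_inj hp hn h1, iota_inj hp hn h2, Subtype.ext h3⟩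
    · rintro ⟨f, a, t, k, hk, ha, ht, rfl⟩
      obtain ⟨ca, hca⟩ := iota_surj hp hn a ha
      obtain ⟨ct, hct⟩ := iota_surj hp hn t ht
      exact ⟨⟨ca, ct, k, hk⟩, by simp only [hca, hct]⟩
  rw [← Nat.card_congr e, Nat.card_prod, Nat.card_prod, Nat.card_zmod, card_UU hp hn h,
    ← pow_add, ← pow_add]
  congr 1
  omega

lemma pow_eq_one_iff_params (hp : p.Prime) (hodd : Odd p) (hn : 1 ≤ n) {h : p ∣ p ^ n}
    {k : (ZMod (p ^ n))ˣ} (hk : k ∈ UU p n h) (t a : ZMod (p ^ n)) :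
    (holPerm (dihAut k t) (r a)) ^ (p ^ (n - 1)) = 1 ↔
      (∃ b, a = p * b) ∧ (∃ b, t = p * b) := by
  haveI : NeZero (p ^ n) := ⟨pow_ne_zero n hp.ne_zero⟩
  rw [holPerm_dihAut_pow, geom_sum_eq hp hodd hn hk, pow_eq_one_of_mem_UU hp hn hk]
  constructor
  · intro h1
    rw [← holPerm_dihAut_one'] at h1
    obtain ⟨ha, ht, -⟩ := holPerm_dihAut_inj h1
    exact ⟨(pow_mul_eq_zero_iff hp hn a).mp ha, (pow_mul_eq_zero_iff hp hn t).mp ht⟩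
  · rintro ⟨ha, ht⟩
    rw [(pow_mul_eq_zero_iff hp hn a).mpr ha, (pow_mul_eq_zero_iff hp hn t).mpr ht,
      holPerm_dihAut_one']

lemma orderOf_le_iff_pow_eq_one {G : Type*} [Group G] {p M : ℕ} (c : ℕ) (hp : p.Prime)
    (hcard : Nat.card G = p ^ M) (x : G) : orderOf x ≤ p ^ c ↔ x ^ (p ^ c) = 1 := by
  constructor
  · intro hle
    have hdvd : orderOf x ∣ p ^ M := hcard ▸ orderOf_dvd_natCard x
    obtain ⟨i, hiM, hi⟩ := (Nat.dvd_prime_pow hp).mp hdvd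
    rw [← orderOf_dvd_iff_pow_eq_one, hi]
    refine pow_dvd_pow p ?_
    rw [hi] at hle
    exact (pow_le_pow_iff_right₀ hp.one_lt).mp hle
  · exact fun h1 => orderOf_le_of_pow_eq_one (pow_pos hp.pos _) h1

lemma transfer_subgroup {A B : Type*} [Group A] [Group B] (e : A ≃* B) {c q : ℕ}
    (QA : Subgroup A) (h1 : (QA : Set A) = {x | orderOf x ≤ c}) (h2 : Nat.card QA = q) :
    ∃ QB : Subgroup B, (QB : Set B) = {x | orderOf x ≤ c} ∧ Nat.card QB = q := by
  refine ⟨QA.map e.toMonoidHom, ?_, ?_⟩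
  · ext y
    simp only [Subgroup.coe_map, Set.mem_image, SetLike.mem_coe, Set.mem_setOf_eq]
    constructor
    · rintro ⟨x, hx, rfl⟩
      have hxs : x ∈ {x : A | orderOf x ≤ c} := by rw [← h1]; exact hx
      simpa [MulEquiv.orderOf_eq] using hxs
    · intro hy
      refine ⟨e.symm y, ?_, by simp⟩
      have hoy : orderOf (e.symm y) ≤ c := by
        rw [MulEquiv.orderOf_eq e.symm y]
        exact hy
      rw [← SetLike.mem_coe, h1]
      exact hoy
  · rw [← h2]
    exact (Nat.card_congr (Subgroup.equivMapOfInjective QA e.toMonoidHom e.injective).toEquiv).symm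

end HolAux


/-- A Sylow `p`-subgroup of the holomorph of `DihedralGroup (p ^ n)` (`p` an odd prime,
`n ≥ 1`) has order `p ^ (3n - 1)`, and its elements of order at most `p ^ (n-1)` form a
subgroup of order `p ^ (3n - 3)`. -/
theorem sylow_hol_dihedral (p n : ℕ) (hp : p.Prime) (hodd : Odd p) (hn : 1 ≤ n)
    (P : Sylow p ↥(Hol (DihedralGroup (p ^ n)))) :
    Nat.card ↥P.toSubgroup = p ^ (3 * n - 1) ∧
    ∃ Q : Subgroup ↥P.toSubgroup,
      (Q : Set ↥P.toSubgroup) = {x : ↥P.toSubgroup | orderOf x ≤ p ^ (n - 1)} ∧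
      Nat.card ↥Q = p ^ (3 * n - 3) := by
  classical
  haveI : Fact p.Prime := ⟨hp⟩
  haveI : NeZero (p ^ n) := ⟨pow_ne_zero n hp.ne_zero⟩
  have h : p ∣ p ^ n := dvd_pow_self p (by omega)
  have hm1 : 1 < p ^ n := Nat.one_lt_pow (by omega) hp.one_lt
  have hmodd : Odd (p ^ n) := hodd.pow
  set G := DihedralGroup (p ^ n) with hG
  set H' : Subgroup ↥(Hol G) := (HolAux.Hsub p n h).subgroupOf (Hol G) with hH'
  have eH : ↥H' ≃* ↥(HolAux.Hsub p n h) := Subgroup.subgroupOfEquivOfLe (HolAux.Hsub_le_Hol h)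
  have hcardH' : Nat.card ↥H' = p ^ (3 * n - 1) := by
    rw [Nat.card_congr eH.toEquiv, HolAux.card_Hsub hp hn h]
  have hpg : IsPGroup p ↥H' := IsPGroup.of_card hcardH'
  obtain ⟨Q, hQle⟩ := hpg.exists_le_sylow
  have hcardHol : Nat.card ↥(Hol G) = p ^ (3 * n - 1) * (2 * (p - 1)) := by
    rw [HolAux.card_Hol_dihedral hm1 hmodd, Nat.totient_prime_pow hp (by omega),
      show 3 * n - 1 = (n - 1) + n + n by omega, pow_add, pow_add]
    ring
  obtain ⟨j, hj⟩ := IsPGroup.iff_card.mp Q.isPGroup'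
  have hdvd : (p : ℕ) ^ j ∣ p ^ (3 * n - 1) * (2 * (p - 1)) := by
    rw [← hj, ← hcardHol]
    exact Subgroup.card_subgroup_dvd_card _
  have hp3 : 3 ≤ p := by
    have h2 := hp.two_le
    rcases Nat.odd_iff.mp hodd with h1
    omega
  have hnotdvd : ¬ p ∣ 2 * (p - 1) := by
    intro hd
    rcases (Nat.Prime.dvd_mul hp).mp hd with h2 | h3
    · have := Nat.le_of_dvd (by omega) h2
      omega
    · have := Nat.le_of_dvd (by omega) h3
      omega
  have hcop : Nat.Coprime (p ^ j) (2 * (p - 1)) :=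
    Nat.Coprime.pow_left j ((Nat.Prime.coprime_iff_not_dvd hp).mpr hnotdvd)
  have hdvd2 : p ^ j ∣ p ^ (3 * n - 1) := Nat.Coprime.dvd_of_dvd_mul_right hcop hdvd
  have hcardQle : Nat.card ↥Q.toSubgroup ≤ Nat.card ↥H' := by
    rw [hj, hcardH']
    exact Nat.le_of_dvd (pow_pos hp.pos _) hdvd2
  have hHQ : H' = Q.toSubgroup := Subgroup.eq_of_le_of_card_ge hQle hcardQle
  obtain ⟨g, hg⟩ := MulAction.exists_smul_eq ↥(Hol G) Q P
  have e : ↥(HolAux.Hsub p n h) ≃* ↥P.toSubgroup :=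
    eH.symm.trans ((MulEquiv.subgroupCongr hHQ).trans
      ((Q.equivSMul g).trans (MulEquiv.subgroupCongr (congrArg Sylow.toSubgroup hg))))
  constructor
  · rw [← Nat.card_congr e.toEquiv, HolAux.card_Hsub hp hn h]
  · set QH := (HolAux.Qsub p n h).subgroupOf (HolAux.Hsub p n h) with hQH
    have hset : (QH : Set ↥(HolAux.Hsub p n h)) = {x | orderOf x ≤ p ^ (n - 1)} := by
      ext x
      rw [SetLike.mem_coe, Subgroup.mem_subgroupOf, Set.mem_setOf_eq,
        HolAux.orderOf_le_iff_pow_eq_one (n - 1) hp (HolAux.card_Hsub hp hn h) x]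
      obtain ⟨a, t, k, hk, hrep⟩ := x.2
      have hcoe : ((x ^ (p ^ (n - 1)) : ↥(HolAux.Hsub p n h)) : Equiv.Perm G) =
          ((x : Equiv.Perm G)) ^ (p ^ (n - 1)) := rfl
      constructor
      · intro hmem
        obtain ⟨a', t', k', hk', ha', ht', hrep'⟩ := hmem
        have heq : HolAux.holPerm (HolAux.dihAut k t) (DihedralGroup.r a) =
            HolAux.holPerm (HolAux.dihAut k' t') (DihedralGroup.r a') := by rw [← hrep, ← hrep']
        obtain ⟨haa, htt, hkk⟩ := HolAux.holPerm_dihAut_inj heq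
        have : ((x : Equiv.Perm G)) ^ (p ^ (n - 1)) = 1 := by
          rw [hrep, HolAux.pow_eq_one_iff_params hp hodd hn hk t a]
          exact ⟨haa ▸ ha', htt ▸ ht'⟩
        ext1
        rw [hcoe, this]
        rfl
      · intro hone
        have h1 : ((x : Equiv.Perm G)) ^ (p ^ (n - 1)) = 1 := by
          rw [← hcoe, hone]
          rfl
        rw [hrep, HolAux.pow_eq_one_iff_params hp hodd hn hk t a] at h1
        exact ⟨a, t, k, hk, h1.1, h1.2, hrep⟩
    have hcardQH : Nat.card ↥QH = p ^ (3 * n - 3) := by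
      rw [Nat.card_congr (Subgroup.subgroupOfEquivOfLe (HolAux.Qsub_le_Hsub h)).toEquiv,
        HolAux.card_Qsub hp hn h]
    exact HolAux.transfer_subgroup e QH hset hcardQH
end

section
/- Let p be an odd prime and n ≥ 1. The automorphism group of the dihedral group DihedralGroup(p^n) of order 2p^n has order p^(2n-1)(p-1). -/
open DihedralGroup

namespace DihedralAux

variable {m : ℕ}

lemma r_pow (j : ZMod m) (t : ℕ) : (r j : DihedralGroup m) ^ t = r ((t : ZMod m) * j) := by
  induction t with
  | zero => simp
  | succ t ih => rw [pow_succ, ih, r_mul_r]; push_cast; ring_nf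

/-- The automorphism of the dihedral group determined by `a` and a unit `k`. -/
def autOf (a : ZMod m) (k : (ZMod m)ˣ) : MulAut (DihedralGroup m) where
  toFun x := match x with
    | r i => r (k * i)
    | sr i => sr (a + k * i)
  invFun x := match x with
    | r i => r ((k⁻¹ : (ZMod m)ˣ) * i)
    | sr i => sr ((k⁻¹ : (ZMod m)ˣ) * (i - a))
  left_inv x := by
    rcases x with i | i <;> simp [← mul_assoc, ← Units.val_mul]
  right_inv x := by
    rcases x with i | i <;> simp [← mul_assoc, ← Units.val_mul, mul_sub]
  map_mul' x y := by
    rcases x with i | i <;> rcases y with j | j <;>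
      simp only [r_mul_r, r_mul_sr, sr_mul_r, sr_mul_sr] <;> congr 1 <;> ring

lemma autOf_bijective (hm : Odd m) (hm3 : 3 ≤ m) :
    Function.Bijective (fun p : ZMod m × (ZMod m)ˣ => autOf p.1 p.2) := by
  have : NeZero m := ⟨by omega⟩
  constructor
  · rintro ⟨a, k⟩ ⟨b, l⟩ h
    simp only at h
    have h1 := DFunLike.congr_fun h (sr 0)
    have h2 := DFunLike.congr_fun h (r 1)
    simp only [autOf, MulEquiv.coe_mk, Equiv.coe_fn_mk, mul_zero, add_zero, mul_one] at h1 h2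
    injection h1 with ha
    injection h2 with hk
    exact Prod.ext (by simpa using ha) (Units.ext (by simpa using hk))
  · intro φ
    -- φ (r 1) is a rotation r c with c a unit
    have hord : orderOf (φ (r 1)) = m := by
      rw [MulEquiv.orderOf_eq, orderOf_r_one]
    obtain ⟨c, hc⟩ : ∃ c, φ (r 1) = r c := by
      rcases h : φ (r 1) with c | c
      · exact ⟨c, rfl⟩
      · rw [h, orderOf_sr] at hord; omega
    have hcop : Nat.Coprime c.val m := by
      rw [hc, orderOf_r] at hord
      have hg : Nat.gcd m c.val ∣ m := Nat.gcd_dvd_left _ _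
      have := (Nat.div_eq_self.mp hord).resolve_left (NeZero.ne m)
      exact Nat.coprime_comm.mp this
    set k : (ZMod m)ˣ := ZMod.unitOfCoprime c.val hcop with hk
    have hkc : (k : ZMod m) = c := by
      simp [hk, ZMod.unitOfCoprime, ZMod.natCast_val, ZMod.cast_id]
    -- φ (sr 0) is a reflection sr a
    obtain ⟨a, ha⟩ : ∃ a, φ (sr 0) = sr a := by
      rcases h : φ (sr 0) with a | a
      · exfalso
        have h2 : orderOf (φ (sr 0)) = 2 := by rw [MulEquiv.orderOf_eq, orderOf_sr]
        rw [h, orderOf_r] at h2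
        have : (2 : ℕ) ∣ m := ⟨Nat.gcd m a.val, by
          rw [← h2, Nat.div_mul_cancel (Nat.gcd_dvd_left _ _)]⟩
        exact (Nat.not_even_iff_odd.mpr hm) (even_iff_two_dvd.mpr this)
      · exact ⟨a, rfl⟩
    refine ⟨⟨a, k⟩, ?_⟩
    have hr : ∀ i : ZMod m, φ (r i) = r ((k : ZMod m) * i) := by
      intro i
      have : (r i : DihedralGroup m) = (r 1) ^ i.val := by
        rw [r_one_pow, ZMod.natCast_val, ZMod.cast_id]
      rw [this, map_pow, hc, r_pow, hkc]
      congr 1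
      rw [mul_comm, ZMod.natCast_val, ZMod.cast_id]
    refine MulEquiv.ext fun x => ?_
    rcases x with i | i
    · simpa [autOf] using (hr i).symm
    · have : (sr i : DihedralGroup m) = sr 0 * r i := by rw [sr_mul_r, zero_add]
      rw [this, map_mul, map_mul, ha, hr, sr_mul_r]
      simp [autOf]

end DihedralAux

/-- The automorphism group of the dihedral group of order `2 p ^ n` (`p` an odd prime,
`n ≥ 1`) has order `p ^ (2n - 1) * (p - 1)`. -/
theorem card_mulAut_dihedralGroup (p n : ℕ) (hp : p.Prime) (hodd : Odd p) (hn : 1 ≤ n) :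
    Nat.card (MulAut (DihedralGroup (p ^ n))) = p ^ (2 * n - 1) * (p - 1) := by
  have hp3 : 3 ≤ p := by
    rcases hodd with ⟨t, ht⟩
    have := hp.two_le
    omega
  have hm3 : 3 ≤ p ^ n :=
    le_trans hp3 (Nat.le_self_pow (by omega) p)
  have hmodd : Odd (p ^ n) := hodd.pow
  have : NeZero (p ^ n) := ⟨by omega⟩
  have hb := DihedralAux.autOf_bijective hmodd hm3
  have hcard : Nat.card (MulAut (DihedralGroup (p ^ n)))
      = Nat.card (ZMod (p ^ n) × (ZMod (p ^ n))ˣ) :=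
    (Nat.card_eq_of_bijective _ hb).symm
  rw [hcard, Nat.card_prod, Nat.card_eq_fintype_card, Nat.card_eq_fintype_card,
    ZMod.card, ZMod.card_units_eq_totient, Nat.totient_prime_pow hp hn]
  rw [← mul_assoc, ← pow_add]
  congr 2
  omega
end

section
/- Let p be an odd prime. The automorphism group of the generalized dihedral group (C_p × C_p) ⋊ C_2 of order 2p^2 has order p^3 (p+1)(p-1)^2. -/
/-- The inversion automorphism of `C_p × C_p` (written multiplicatively). -/
def invAut (p : ℕ) : MulAut (Multiplicative (ZMod p × ZMod p)) :=
  MulEquiv.inv (Multiplicative (ZMod p × ZMod p))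

/-- The action of `C_2` on `C_p × C_p` by inversion. -/
def invHom (p : ℕ) : Multiplicative (ZMod 2) →* MulAut (Multiplicative (ZMod p × ZMod p)) where
  toFun g := invAut p ^ (Multiplicative.toAdd g).val
  map_one' := by simp
  map_mul' g h := by
    have h2 : invAut p ^ 2 = 1 := by
      refine MulEquiv.ext fun x => ?_
      simp [invAut, sq]
    show invAut p ^ (Multiplicative.toAdd (g * h)).val = _
    rw [toAdd_mul, ZMod.val_add, ← pow_add]
    exact (pow_eq_pow_mod _ h2).symm

/-- The generalized dihedral group `(C_p × C_p) ⋊ C_2`: the semidirect product of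
`C_p × C_p` (written multiplicatively) by the group of order 2 acting by inversion. -/
abbrev GenDihedral (p : ℕ) : Type :=
  SemidirectProduct (Multiplicative (ZMod p × ZMod p)) (Multiplicative (ZMod 2)) (invHom p)

section Aux

abbrev AA (p : ℕ) := Multiplicative (ZMod p × ZMod p)

variable (p : ℕ)

lemma AA_pow_p (x : AA p) : x ^ p = 1 := by
  have h : p • (Multiplicative.toAdd x) = 0 := by
    ext <;> simp [nsmul_eq_mul, ZMod.natCast_self]
  rw [← ofAdd_toAdd (x ^ p), toAdd_pow, h]
  rfl

lemma two_cases (r : Multiplicative (ZMod 2)) :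
    r = 1 ∨ r = Multiplicative.ofAdd 1 := by
  have h : ∀ a : ZMod 2, a = 0 ∨ a = 1 := by decide
  rcases h (Multiplicative.toAdd r) with h1 | h1
  · left; rw [← ofAdd_toAdd r, h1]; rfl
  · right; rw [← ofAdd_toAdd r, h1]

lemma invHom_one_apply (x : AA p) : invHom p 1 x = x := by simp

lemma invHom_ofAdd_one (x : AA p) : invHom p (Multiplicative.ofAdd 1) x = x⁻¹ := by
  show (invAut p ^ (Multiplicative.toAdd (Multiplicative.ofAdd (1 : ZMod 2))).val) x = x⁻¹
  norm_num [ZMod.val_one, invAut]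

lemma gd_sq_eq_one (z : GenDihedral p) (hz : z.right ≠ 1) : z * z = 1 := by
  have hr : z.right = Multiplicative.ofAdd 1 := (two_cases z.right).resolve_left hz
  refine SemidirectProduct.ext ?_ ?_
  · rw [SemidirectProduct.mul_left, hr, invHom_ofAdd_one, mul_inv_cancel,
      SemidirectProduct.one_left]
  · rw [SemidirectProduct.mul_right, hr, SemidirectProduct.one_right]
    decide

lemma pow_p_eq_self (hodd : Odd p) (z : GenDihedral p) (hz : z.right ≠ 1) : z ^ p = z := by
  have h2 : z ^ 2 = 1 := by rw [sq]; exact gd_sq_eq_one p z hz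
  calc z ^ p = z ^ (p % 2) := pow_eq_pow_mod p h2
    _ = z := by rw [Nat.odd_iff.mp hodd, pow_one]

lemma pow_p_eq_one (z : GenDihedral p) (hz : z.right = 1) : z ^ p = 1 := by
  have hzl : z = SemidirectProduct.inl z.left := SemidirectProduct.ext rfl (by simp [hz])
  rw [hzl, ← map_pow, AA_pow_p, map_one]

lemma pow_p_iff (hodd : Odd p) (z : GenDihedral p) : z ^ p = 1 ↔ z.right = 1 := by
  constructor
  · intro h
    by_contra hz
    have := pow_p_eq_self p hodd z hz
    rw [h] at this
    exact hz (by rw [← this]; rfl)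
  · exact pow_p_eq_one p z

lemma aut_right (hodd : Odd p) (φ : GenDihedral p ≃* GenDihedral p) (z : GenDihedral p) :
    (φ z).right = 1 ↔ z.right = 1 := by
  rw [← pow_p_iff p hodd (φ z), ← pow_p_iff p hodd z, ← map_pow]
  exact EmbeddingLike.map_eq_one_iff

end Aux

lemma val_toAdd_one : (Multiplicative.toAdd (1 : Multiplicative (ZMod 2))).val = 0 := rfl

lemma val_toAdd_ofAdd_one :
    (Multiplicative.toAdd (Multiplicative.ofAdd (1 : ZMod 2))).val = 1 := rfl

lemma ofAdd_one_ne_one : (Multiplicative.ofAdd (1 : ZMod 2)) ≠ 1 :=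
  fun h => one_ne_zero (congrArg Multiplicative.toAdd h)

lemma ofAdd_one_mul_ofAdd_one :
    (Multiplicative.ofAdd (1 : ZMod 2)) * Multiplicative.ofAdd (1 : ZMod 2) = 1 := rfl

/-- The automorphism of the generalized dihedral group built from an automorphism of `A`
and an element of `A`. -/
def mkAut (p : ℕ) (σ : MulAut (AA p)) (a : AA p) : MulAut (GenDihedral p) where
  toFun z := ⟨σ z.left * a ^ (Multiplicative.toAdd z.right).val, z.right⟩
  invFun z := ⟨σ.symm (z.left * (a ^ (Multiplicative.toAdd z.right).val)⁻¹), z.right⟩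
  left_inv z := by
    refine SemidirectProduct.ext ?_ rfl
    show σ.symm (σ z.left * a ^ _ * (a ^ _)⁻¹) = z.left
    rw [mul_inv_cancel_right, MulEquiv.symm_apply_apply]
  right_inv z := by
    refine SemidirectProduct.ext ?_ rfl
    show σ (σ.symm (z.left * (a ^ _)⁻¹)) * a ^ _ = z.left
    rw [MulEquiv.apply_symm_apply, inv_mul_cancel_right]
  map_mul' z w := by
    refine SemidirectProduct.ext ?_ rfl
    show σ (z * w).left * a ^ (Multiplicative.toAdd (z * w).right).val
      = σ z.left * a ^ (Multiplicative.toAdd z.right).val *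
        (invHom p z.right) (σ w.left * a ^ (Multiplicative.toAdd w.right).val)
    rw [SemidirectProduct.mul_left, SemidirectProduct.mul_right]
    rcases two_cases z.right with hg | hg <;> rcases two_cases w.right with hh | hh <;>
      rw [hg, hh] <;>
      simp [val_toAdd_one, val_toAdd_ofAdd_one, ofAdd_one_mul_ofAdd_one,
        invHom_one_apply, invHom_ofAdd_one, mul_comm, mul_left_comm, mul_assoc]

/-- Restriction of an automorphism of the generalized dihedral group to `A`. -/
def resAut (p : ℕ) (hodd : Odd p) (φ : MulAut (GenDihedral p)) : MulAut (AA p) where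
  toFun x := (φ (SemidirectProduct.inl x)).left
  invFun x := (φ.symm (SemidirectProduct.inl x)).left
  left_inv x := by
    have h1 : φ (SemidirectProduct.inl x)
        = SemidirectProduct.inl ((φ (SemidirectProduct.inl x)).left) :=
      SemidirectProduct.ext rfl
        (by rw [SemidirectProduct.right_inl]
            exact (aut_right p hodd φ _).mpr (SemidirectProduct.right_inl x))
    show (φ.symm (SemidirectProduct.inl ((φ (SemidirectProduct.inl x)).left))).left = x
    rw [← h1, MulEquiv.symm_apply_apply, SemidirectProduct.left_inl]
  right_inv x := by
    have h1 : φ.symm (SemidirectProduct.inl x)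
        = SemidirectProduct.inl ((φ.symm (SemidirectProduct.inl x)).left) :=
      SemidirectProduct.ext rfl
        (by rw [SemidirectProduct.right_inl]
            exact (aut_right p hodd φ.symm _).mpr (SemidirectProduct.right_inl x))
    show (φ (SemidirectProduct.inl ((φ.symm (SemidirectProduct.inl x)).left))).left = x
    rw [← h1, MulEquiv.apply_symm_apply, SemidirectProduct.left_inl]
  map_mul' x y := by
    have hr : (φ (SemidirectProduct.inl x)).right = 1 :=
      (aut_right p hodd φ _).mpr (SemidirectProduct.right_inl x)
    show (φ (SemidirectProduct.inl (x * y))).left = _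
    rw [map_mul, map_mul, SemidirectProduct.mul_left, hr, map_one, MulAut.one_apply]

/-- The automorphism group of the generalized dihedral group is (as a set) in bijection
with `Aut(A) × A`. -/
def autEquiv (p : ℕ) (hodd : Odd p) :
    MulAut (GenDihedral p) ≃ MulAut (AA p) × AA p where
  toFun φ := (resAut p hodd φ, (φ ⟨1, Multiplicative.ofAdd 1⟩).left)
  invFun σa := mkAut p σa.1 σa.2
  left_inv φ := by
    apply MulEquiv.ext
    intro z
    have hinl : ∀ y : AA p, φ (SemidirectProduct.inl y)
        = SemidirectProduct.inl ((φ (SemidirectProduct.inl y)).left) := fun y =>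
      SemidirectProduct.ext rfl
        (by rw [SemidirectProduct.right_inl]
            exact (aut_right p hodd φ _).mpr (SemidirectProduct.right_inl y))
    have hr2 : (φ ⟨1, Multiplicative.ofAdd 1⟩).right = Multiplicative.ofAdd 1 := by
      refine (two_cases _).resolve_left fun h => ?_
      exact absurd ((aut_right p hodd φ _).mp h) ofAdd_one_ne_one
    obtain ⟨x, g⟩ := z
    rcases two_cases g with hg | hg <;> subst hg
    · have hx : (⟨x, 1⟩ : GenDihedral p) = SemidirectProduct.inl x := rfl
      rw [hx, hinl x]
      refine SemidirectProduct.ext ?_ rfl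
      show (φ (SemidirectProduct.inl x)).left *
          (φ ⟨1, Multiplicative.ofAdd 1⟩).left ^ (Multiplicative.toAdd (1 : Multiplicative (ZMod 2))).val
        = (φ (SemidirectProduct.inl x)).left
      rw [val_toAdd_one, pow_zero, mul_one]
    · have hsplit : (⟨x, Multiplicative.ofAdd 1⟩ : GenDihedral p)
          = SemidirectProduct.inl x * ⟨1, Multiplicative.ofAdd 1⟩ :=
        SemidirectProduct.ext (by simp) (by simp)
      have hφ : φ ⟨x, Multiplicative.ofAdd 1⟩
          = ⟨(φ (SemidirectProduct.inl x)).left * (φ ⟨1, Multiplicative.ofAdd 1⟩).left,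
              Multiplicative.ofAdd 1⟩ := by
        rw [hsplit, map_mul, hinl x]
        refine SemidirectProduct.ext ?_ ?_
        · rw [SemidirectProduct.mul_left, SemidirectProduct.left_inl,
            SemidirectProduct.right_inl, map_one, MulAut.one_apply]
        · rw [SemidirectProduct.mul_right, SemidirectProduct.right_inl, one_mul, hr2]
      rw [hφ]
      refine SemidirectProduct.ext ?_ rfl
      show (φ (SemidirectProduct.inl x)).left *
          (φ ⟨1, Multiplicative.ofAdd 1⟩).left ^
            (Multiplicative.toAdd (Multiplicative.ofAdd (1 : ZMod 2))).val = _
      rw [val_toAdd_ofAdd_one, pow_one]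
  right_inv σa := by
    obtain ⟨σ, a⟩ := σa
    refine Prod.ext ?_ ?_
    · apply MulEquiv.ext
      intro x
      show σ x * a ^ (Multiplicative.toAdd (1 : Multiplicative (ZMod 2))).val = σ x
      rw [val_toAdd_one, pow_zero, mul_one]
    · show σ 1 * a ^ (Multiplicative.toAdd (Multiplicative.ofAdd (1 : ZMod 2))).val = a
      rw [val_toAdd_ofAdd_one, pow_one, map_one, one_mul]

lemma card_AA (p : ℕ) : Nat.card (AA p) = p ^ 2 := by
  rw [Nat.card_congr (Multiplicative.toAdd (α := ZMod p × ZMod p))]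
  rw [Nat.card_prod, Nat.card_zmod, sq]

lemma card_mulAutAA (p : ℕ) (hp : p.Prime) :
    Nat.card (MulAut (AA p)) = (p ^ 2 - 1) * (p ^ 2 - p) := by
  haveI := Fact.mk hp
  have e1 : MulAut (AA p) ≃ AddAut (ZMod p × ZMod p) := AddEquiv.toMultiplicative.symm
  have e2 : AddAut (ZMod p × ZMod p) ≃ ((ZMod p × ZMod p) ≃ₗ[ZMod p] (ZMod p × ZMod p)) :=
    { toFun := fun f =>
        { f.toAddMonoidHom.toZModLinearMap p with
          invFun := f.symm, left_inv := f.left_inv, right_inv := f.right_inv }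
      invFun := fun g => g.toAddEquiv
      left_inv := fun f => by ext x <;> rfl
      right_inv := fun g => by ext x <;> rfl }
  let e : (Fin 2 → ZMod p) ≃ₗ[ZMod p] ZMod p × ZMod p := LinearEquiv.finTwoArrow (ZMod p) (ZMod p)
  have e3 : ((ZMod p × ZMod p) ≃ₗ[ZMod p] (ZMod p × ZMod p)) ≃
      ((Fin 2 → ZMod p) ≃ₗ[ZMod p] (Fin 2 → ZMod p)) :=
    { toFun := fun g => (e.trans g).trans e.symm
      invFun := fun h => (e.symm.trans h).trans e
      left_inv := fun g => by ext x <;> simp [e]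
      right_inv := fun h => by
        refine LinearEquiv.ext fun x => ?_
        have hx : ![x 0, x 1] = x := by funext i; fin_cases i <;> rfl
        have hy : ![h x 0, h x 1] = h x := by funext i; fin_cases i <;> rfl
        simp [e, hx, hy]
      }
  have e4 : GL (Fin 2) (ZMod p) ≃ ((Fin 2 → ZMod p) ≃ₗ[ZMod p] (Fin 2 → ZMod p)) :=
    (Matrix.GeneralLinearGroup.toLin.trans
      (LinearMap.GeneralLinearGroup.generalLinearEquiv (ZMod p) (Fin 2 → ZMod p))).toEquiv
  rw [Nat.card_congr e1, Nat.card_congr e2, Nat.card_congr e3, ← Nat.card_congr e4,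
    Matrix.card_GL_field, Fin.prod_univ_two]
  simp [ZMod.card]

/-- The automorphism group of the generalized dihedral group `(C_p × C_p) ⋊ C_2` of order
`2 p ^ 2` (`p` an odd prime) has order `p ^ 3 (p+1) (p-1) ^ 2`. -/
theorem card_mulAut_genDihedral (p : ℕ) (hp : p.Prime) (hodd : Odd p) :
    Nat.card (MulAut (GenDihedral p)) = p ^ 3 * (p + 1) * (p - 1) ^ 2 := by
  rw [Nat.card_congr (autEquiv p hodd), Nat.card_prod, card_mulAutAA p hp, card_AA]
  obtain ⟨k, rfl⟩ : ∃ k, p = k + 1 := ⟨p - 1, (Nat.succ_pred_eq_of_pos hp.pos).symm⟩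
  have h1 : (k + 1) ^ 2 - 1 = k ^ 2 + 2 * k := by
    have h : (k + 1) ^ 2 = (k ^ 2 + 2 * k) + 1 := by ring
    rw [h, Nat.add_sub_cancel]
  have h2 : (k + 1) ^ 2 - (k + 1) = k ^ 2 + k := by
    have h : (k + 1) ^ 2 = (k ^ 2 + k) + (k + 1) := by ring
    rw [h, Nat.add_sub_cancel]
  rw [h1, h2, Nat.add_sub_cancel]
  ring
end

section
/- Let p be an odd prime. Every Sylow p-subgroup of the holomorph Hol(ZMod p × DihedralGroup p) has order p^3 and is isomorphic to the elementary abelian group ZMod p × ZMod p × ZMod p. -/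
section HolAux

open DihedralGroup Multiplicative Equiv MulAction

variable {p : ℕ}

private lemma hol_two_ne_zero (hp : p.Prime) (hodd : Odd p) : (2 : ZMod p) ≠ 0 := by
  haveI : NeZero p := ⟨hp.ne_zero⟩
  intro h
  have h2 : ((2 : ℕ) : ZMod p) = 0 := by exact_mod_cast h
  have hdvd := (ZMod.natCast_eq_zero_iff 2 p).mp h2
  have hp2 : p = 2 := (Nat.prime_dvd_prime_iff_eq hp Nat.prime_two).mp hdvd
  rw [hp2] at hodd
  simp [Nat.odd_iff] at hodd

private lemma hol_half_eq_zero (hp : p.Prime) (hodd : Odd p) {a : ZMod p} (h : a + a = 0) :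
    a = 0 := by
  haveI := Fact.mk hp
  have h2 : (2 : ZMod p) * a = 0 := by rw [two_mul]; exact h
  rcases mul_eq_zero.mp h2 with h' | h'
  · exact absurd h' (hol_two_ne_zero hp hodd)
  · exact h'

private lemma hol_unit_pow (hp : p.Prime) {u : ZMod p} (hu : u ≠ 0) {k : ℕ}
    (h : u ^ p ^ k = 1) : u = 1 := by
  haveI := Fact.mk hp
  have h1 : orderOf u ∣ p ^ k := orderOf_dvd_of_pow_eq_one h
  have h2 : orderOf u ∣ p - 1 :=
    orderOf_dvd_of_pow_eq_one (ZMod.pow_card_sub_one_eq_one hu)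
  have hcop : Nat.Coprime (p ^ k) (p - 1) := by
    apply Nat.Coprime.pow_left
    rw [hp.coprime_iff_not_dvd]
    intro hdvd
    have h3 : 0 < p - 1 := by have := hp.two_le; omega
    have := Nat.le_of_dvd h3 hdvd
    omega
  have : orderOf u ∣ 1 := hcop ▸ Nat.dvd_gcd h1 h2
  rw [orderOf_eq_one_iff.mp (Nat.dvd_one.mp this)]


private lemma hol_key (hp : p.Prime) (hodd : Odd p)
    (f : Equiv.Perm (Multiplicative (ZMod p) × DihedralGroup p))
    (hmul : ∀ x y, f (x * y) = f x * f y) {k : ℕ} (hord : f ^ p ^ k = 1) :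
    ∃ t : ZMod p, (∀ (c : Multiplicative (ZMod p)) (i : ZMod p), f (c, r i) = (c, r i)) ∧
      (∀ (c : Multiplicative (ZMod p)) (i : ZMod p), f (c, sr i) = (c, sr (i + t))) := by
  haveI := Fact.mk hp
  haveI : NeZero p := ⟨hp.ne_zero⟩
  have hone : f 1 = 1 := by
    have h := hmul 1 1
    rw [mul_one] at h
    exact (left_eq_mul.mp h)
  have hinv : ∀ x : Multiplicative (ZMod p) × DihedralGroup p,
      x * x = 1 → x ≠ 1 → ∃ j, x = (1, sr j) := by
    rintro ⟨c, i | i⟩ hsq hne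
    · exfalso
      rw [Prod.mk_mul_mk, r_mul_r, Prod.mk_eq_one] at hsq
      obtain ⟨hc, hi⟩ := hsq
      rw [DihedralGroup.one_def, r.injEq] at hi
      have hc0 : toAdd c + toAdd c = 0 := by
        have := congrArg toAdd hc; simpa using this
      have hc1 : c = 1 := by
        have := hol_half_eq_zero hp hodd hc0
        rw [← ofAdd_toAdd c, this, ofAdd_zero]
      exact hne (by
        rw [hc1, hol_half_eq_zero hp hodd hi, ← DihedralGroup.one_def, Prod.mk_eq_one]
        exact ⟨rfl, rfl⟩)
    · refine ⟨i, ?_⟩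
      rw [Prod.mk_mul_mk, sr_mul_sr, Prod.mk_eq_one] at hsq
      obtain ⟨hc, -⟩ := hsq
      have hc0 : toAdd c + toAdd c = 0 := by
        have := congrArg toAdd hc; simpa using this
      have hc1 : c = 1 := by
        have := hol_half_eq_zero hp hodd hc0
        rw [← ofAdd_toAdd c, this, ofAdd_zero]
      rw [hc1]
  have hfinv : ∀ j : ZMod p, ∃ t, f (1, sr j) = (1, sr t) := by
    intro j
    apply hinv
    · rw [← hmul, Prod.mk_mul_mk, sr_mul_sr, sub_self, one_mul, ← DihedralGroup.one_def, ← Prod.one_eq_mk, hone]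
    · intro h
      rw [← hone] at h
      have h2 := f.injective h
      rw [Prod.ext_iff] at h2
      exact absurd h2.2 (by rw [Prod.snd_one, DihedralGroup.one_def]; intro h; cases h)
  obtain ⟨t0, ht0⟩ := hfinv 0
  obtain ⟨t1, ht1⟩ := hfinv 1
  have hm : f (1, r 1) = (1, r (t1 - t0)) := by
    have hs : ((1, r 1) : Multiplicative (ZMod p) × DihedralGroup p) = (1, sr 0) * (1, sr 1) := by
      rw [Prod.mk_mul_mk, sr_mul_sr, one_mul, sub_zero]
    rw [hs, hmul, ht0, ht1, Prod.mk_mul_mk, sr_mul_sr, one_mul]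
  set m := t1 - t0 with hmdef
  have hrn : ∀ n : ℕ, f (1, r (n : ZMod p)) = (1, r ((n : ZMod p) * m)) := by
    intro n
    induction n with
    | zero => simpa [Prod.one_eq_mk] using hone
    | succ n ih =>
      have hs : ((1, r ((n+1 : ℕ) : ZMod p)) : Multiplicative (ZMod p) × DihedralGroup p)
          = (1, r (n : ZMod p)) * (1, r 1) := by
        rw [Prod.mk_mul_mk, r_mul_r, one_mul]; push_cast; ring_nf
      rw [hs, hmul, ih, hm, Prod.mk_mul_mk, r_mul_r, one_mul]
      congr 2
      push_cast; ring
  have hri : ∀ i : ZMod p, f (1, r i) = (1, r (i * m)) := by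
    intro i
    have h := hrn i.val
    rwa [ZMod.natCast_zmod_val] at h
  have hit : ∀ (n : ℕ) (i : ZMod p), (f ^ n) (1, r i) = (1, r (i * m ^ n)) := by
    intro n
    induction n with
    | zero => intro i; simp
    | succ n ih =>
      intro i
      rw [pow_succ', Equiv.Perm.mul_apply, ih, hri]
      congr 2
      ring
  have hmpow : m ^ p ^ k = 1 := by
    have h := hit (p ^ k) 1
    rw [hord] at h
    simp only [Equiv.Perm.one_apply, one_mul, Prod.mk.injEq, r.injEq] at h
    exact h.2.symm
  have hm0 : m ≠ 0 := by
    intro h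
    rw [h, zero_pow (pow_ne_zero k hp.ne_zero)] at hmpow
    exact zero_ne_one hmpow
  have hm1 : m = 1 := hol_unit_pow hp hm0 hmpow
  have hri' : ∀ i : ZMod p, f (1, r i) = (1, r i) := by
    intro i; rw [hri, hm1, mul_one]
  -- central elements
  have hcen : ∀ c : Multiplicative (ZMod p), ∃ a, f (c, r 0) = (a, r 0) := by
    intro c
    have hcomm1 : f (c, r 0) * (1, r 1) = (1, r 1) * f (c, r 0) := by
      rw [← hri' 1, ← hmul, ← hmul]
      congr 1
      rw [Prod.mk_mul_mk, Prod.mk_mul_mk, r_mul_r, r_mul_r, one_mul, mul_one, add_comm]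
    have hcomm2 : f (c, r 0) * (1, sr t0) = (1, sr t0) * f (c, r 0) := by
      rw [← ht0, ← hmul, ← hmul]
      congr 1
      rw [Prod.mk_mul_mk, Prod.mk_mul_mk, r_mul_sr, sr_mul_r, one_mul, mul_one, sub_zero, add_zero]
    rcases hfc : f (c, r 0) with ⟨a, d | d⟩
    · rw [hfc, Prod.mk_mul_mk, Prod.mk_mul_mk, r_mul_sr, sr_mul_r, one_mul, mul_one] at hcomm2
      have h2 := (Prod.ext_iff.mp hcomm2).2
      rw [sr.injEq] at h2
      have hd0 : d + d = 0 := by linear_combination -h2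
      refine ⟨a, ?_⟩
      rw [hol_half_eq_zero hp hodd hd0]
    · exfalso
      rw [hfc, Prod.mk_mul_mk, Prod.mk_mul_mk, sr_mul_r, r_mul_sr, one_mul, mul_one] at hcomm1
      have h2 := (Prod.ext_iff.mp hcomm1).2
      rw [sr.injEq] at h2
      have : (2 : ZMod p) = 0 := by linear_combination h2
      exact hol_two_ne_zero hp hodd this
  obtain ⟨a1, ha1⟩ := hcen (ofAdd 1)
  set u := toAdd a1 with hudef
  have ha1' : f (ofAdd 1, r 0) = (ofAdd u, r 0) := by rw [ha1, ofAdd_toAdd]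
  have hna : ∀ n : ℕ, f (ofAdd (n : ZMod p), r 0) = (ofAdd ((n : ZMod p) * u), r 0) := by
    intro n
    induction n with
    | zero => simpa [Prod.one_eq_mk] using hone
    | succ n ih =>
      have hs : ((ofAdd ((n+1 : ℕ) : ZMod p), r 0) :
            Multiplicative (ZMod p) × DihedralGroup p)
          = (ofAdd (n : ZMod p), r 0) * (ofAdd 1, r 0) := by
        rw [Prod.mk_mul_mk, r_mul_r, add_zero, ← ofAdd_add]
        push_cast; ring_nf
      rw [hs, hmul, ih, ha1', Prod.mk_mul_mk, r_mul_r, add_zero, ← ofAdd_add]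
      congr 2
      push_cast; ring
  have hca : ∀ c : Multiplicative (ZMod p), f (c, r 0) = (ofAdd (toAdd c * u), r 0) := by
    intro c
    have h := hna (toAdd c).val
    rwa [ZMod.natCast_zmod_val, ofAdd_toAdd] at h
  have hitc : ∀ (n : ℕ) (c : Multiplicative (ZMod p)),
      (f ^ n) (c, r 0) = (ofAdd (toAdd c * u ^ n), r 0) := by
    intro n
    induction n with
    | zero => intro c; simp
    | succ n ih =>
      intro c
      rw [pow_succ', Equiv.Perm.mul_apply, ih, hca]
      congr 2
      rw [toAdd_ofAdd]
      ring
  have hupow : u ^ p ^ k = 1 := by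
    have h := hitc (p ^ k) (ofAdd 1)
    rw [hord] at h
    simp only [Equiv.Perm.one_apply, Prod.mk.injEq] at h
    have := h.1
    have h3 := congrArg toAdd this
    simp only [toAdd_ofAdd] at h3
    rw [one_mul] at h3
    exact h3.symm
  have hu0 : u ≠ 0 := by
    intro h
    have h1 := hca (ofAdd 1)
    rw [h, mul_zero, ofAdd_zero] at h1
    have h2 : f (ofAdd (1 : ZMod p), r 0) = f 1 := by rw [hone, h1]; rfl
    have h3 := f.injective h2
    have h4 := (Prod.ext_iff.mp h3).1
    have h5 := congrArg toAdd h4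
    simp only [toAdd_ofAdd, toAdd_one] at h5
    exact one_ne_zero h5
  have hu1 : u = 1 := hol_unit_pow hp hu0 hupow
  have hc1 : ∀ c : Multiplicative (ZMod p), f (c, r 0) = (c, r 0) := by
    intro c; rw [hca, hu1, mul_one, ofAdd_toAdd]
  have hcr : ∀ (c : Multiplicative (ZMod p)) (i : ZMod p), f (c, r i) = (c, r i) := by
    intro c i
    have hs : ((c, r i) : Multiplicative (ZMod p) × DihedralGroup p)
        = (c, r 0) * (1, r i) := by
      rw [Prod.mk_mul_mk, r_mul_r, mul_one, zero_add]
    rw [hs, hmul, hc1, hri', Prod.mk_mul_mk, r_mul_r, mul_one, zero_add]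
  have hcs : ∀ (c : Multiplicative (ZMod p)) (i : ZMod p), f (c, sr i) = (c, sr (i + t0)) := by
    intro c i
    have hs : ((c, sr i) : Multiplicative (ZMod p) × DihedralGroup p)
        = (c, r (-i)) * (1, sr 0) := by
      rw [Prod.mk_mul_mk, r_mul_sr, mul_one, zero_sub, neg_neg]
    rw [hs, hmul, hcr, ht0, Prod.mk_mul_mk, r_mul_sr, mul_one, sub_neg_eq_add, add_comm]
  exact ⟨t0, hcr, hcs⟩

private lemma hol_fix_one_mul {X : Type*} [Group X] {f : Equiv.Perm X} (hf : f ∈ Hol X)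
    (h1 : f 1 = 1) : ∀ x y : X, f (x * y) = f x * f y := by
  intro x y
  rw [Hol, Subgroup.mem_normalizer_iff] at hf
  have hx : MulAction.toPermHom X X x ∈ (MulAction.toPermHom X X).range := ⟨x, rfl⟩
  obtain ⟨z, hz⟩ := (hf _).mp hx
  have happ : ∀ w, z * w = f (x * f⁻¹ w) := by
    intro w
    have h := congrArg (fun (g : Equiv.Perm X) => g w) hz
    simpa [Equiv.Perm.mul_apply, smul_eq_mul] using h
  have hfinv1 : (f⁻¹ : Equiv.Perm X) 1 = 1 := by
    conv_lhs => rw [← h1]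
    exact Equiv.symm_apply_apply f 1
  have hz1 := happ 1
  rw [mul_one, hfinv1, mul_one] at hz1
  have h2 := happ (f y)
  rw [show f⁻¹ (f y) = y from Equiv.symm_apply_apply f y, hz1] at h2
  exact h2.symm

private def holPerm (p : ℕ) (v : ZMod p × ZMod p × ZMod p) :
    Equiv.Perm (Multiplicative (ZMod p) × DihedralGroup p) :=
  (Equiv.mulLeft ((ofAdd v.1, r v.2.1) : Multiplicative (ZMod p) × DihedralGroup p)).trans
    (Equiv.mulRight ((1, r v.2.2) : Multiplicative (ZMod p) × DihedralGroup p))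

private lemma holPerm_apply (p : ℕ) (v : ZMod p × ZMod p × ZMod p)
    (x : Multiplicative (ZMod p) × DihedralGroup p) :
    holPerm p v x = (ofAdd v.1, r v.2.1) * x * (1, r v.2.2) := rfl

private lemma prod_mk_one_one : ((1 : Multiplicative (ZMod p)), r (0 : ZMod p))
    = (1 : Multiplicative (ZMod p) × DihedralGroup p) := by
  rw [← DihedralGroup.one_def]
  rfl

private def holPsi (p : ℕ) :
    Multiplicative (ZMod p × ZMod p × ZMod p) →*
      Equiv.Perm (Multiplicative (ZMod p) × DihedralGroup p) where
  toFun v := holPerm p (toAdd v)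
  map_one' := by
    apply Equiv.ext
    intro x
    rw [Equiv.Perm.one_apply, holPerm_apply]
    simp only [toAdd_one, Prod.fst_zero, Prod.snd_zero, ofAdd_zero]
    rw [prod_mk_one_one, one_mul, mul_one]
  map_mul' v w := by
    apply Equiv.ext
    intro x
    show holPerm p (toAdd (v * w)) x = (holPerm p (toAdd v) * holPerm p (toAdd w)) x
    rw [Equiv.Perm.mul_apply, holPerm_apply, holPerm_apply, holPerm_apply, toAdd_mul]
    have h1 : ((ofAdd ((toAdd v + toAdd w).1) : Multiplicative (ZMod p)),
          r ((toAdd v + toAdd w).2.1))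
        = (ofAdd (toAdd v).1, r (toAdd v).2.1) * (ofAdd (toAdd w).1, r (toAdd w).2.1) := by
      rw [Prod.mk_mul_mk, r_mul_r, ← ofAdd_add, Prod.fst_add, Prod.snd_add, Prod.fst_add]
    have h2 : ((1 : Multiplicative (ZMod p)), r ((toAdd v + toAdd w).2.2))
        = ((1 : Multiplicative (ZMod p)), r ((toAdd w).2.2)) * (1, r ((toAdd v).2.2)) := by
      rw [Prod.mk_mul_mk, r_mul_r, one_mul, Prod.snd_add, Prod.snd_add, add_comm]
    rw [h1, h2]
    simp only [mul_assoc]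

private lemma holPerm_inv (p : ℕ) (v : ZMod p × ZMod p × ZMod p) :
    (holPerm p v)⁻¹ = holPerm p (-v) := by
  have h := ((holPsi p).map_inv (ofAdd v)).symm
  simpa [holPsi, toAdd_ofAdd] using h

private lemma holPerm_conj (p : ℕ) (v : ZMod p × ZMod p × ZMod p)
    (g : Multiplicative (ZMod p) × DihedralGroup p) :
    holPerm p v * MulAction.toPermHom _ _ g * (holPerm p v)⁻¹
      = MulAction.toPermHom _ _
          ((ofAdd v.1, r v.2.1) * g * ((ofAdd v.1, r v.2.1) : _)⁻¹) := by
  apply Equiv.ext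
  intro x
  rw [Equiv.Perm.mul_apply, Equiv.Perm.mul_apply, holPerm_inv, holPerm_apply p (-v) x]
  simp only [MulAction.toPermHom_apply, MulAction.toPerm_apply, smul_eq_mul]
  rw [holPerm_apply]
  have hA : ((ofAdd ((-v).1) : Multiplicative (ZMod p)), r ((-v).2.1))
      = ((ofAdd v.1, r v.2.1) : Multiplicative (ZMod p) × DihedralGroup p)⁻¹ := by
    rw [Prod.inv_mk]
    have : (r v.2.1 : DihedralGroup p)⁻¹ = r (-v.2.1) :=
      inv_eq_of_mul_eq_one_right (by rw [r_mul_r, add_neg_cancel, ← DihedralGroup.one_def])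
    rw [this]
    rfl
  have hC : ((1 : Multiplicative (ZMod p)), r ((-v).2.2))
      = (((1 : Multiplicative (ZMod p)), r v.2.2) : Multiplicative (ZMod p) × DihedralGroup p)⁻¹ := by
    rw [Prod.inv_mk]
    have : (r v.2.2 : DihedralGroup p)⁻¹ = r (-v.2.2) :=
      inv_eq_of_mul_eq_one_right (by rw [r_mul_r, add_neg_cancel, ← DihedralGroup.one_def])
    rw [this, inv_one]
    rfl
  rw [hA, hC]
  group

private lemma holPsi_mem (p : ℕ) (v : Multiplicative (ZMod p × ZMod p × ZMod p)) :
    holPsi p v ∈ Hol (Multiplicative (ZMod p) × DihedralGroup p) := by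
  rw [Hol, Subgroup.mem_normalizer_iff]
  intro h
  constructor
  · rintro ⟨g, rfl⟩
    exact ⟨_, (holPerm_conj p (toAdd v) g).symm⟩
  · rintro ⟨g, hg⟩
    have hh : h = (holPerm p (toAdd v))⁻¹ * MulAction.toPermHom _ _ g
        * ((holPerm p (toAdd v))⁻¹)⁻¹ := by
      have : holPsi p v = holPerm p (toAdd v) := rfl
      rw [this] at hg
      rw [hg]
      group
    rw [hh, holPerm_inv]
    exact ⟨_, (holPerm_conj p (-(toAdd v)) g).symm⟩

private lemma holPsi_injective (hp : p.Prime) (hodd : Odd p) :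
    Function.Injective (holPsi p) := by
  haveI := Fact.mk hp
  rw [injective_iff_map_eq_one]
  intro v hv
  have hv' : ∀ x, holPerm p (toAdd v) x = x := by
    intro x
    have h := congrArg (fun (g : Equiv.Perm _) => g x) hv
    simpa [holPsi] using h
  have e1 := hv' 1
  rw [holPerm_apply, mul_one, Prod.mk_mul_mk, r_mul_r, mul_one] at e1
  have haf := congrArg Prod.fst e1
  have hbf := congrArg Prod.snd e1
  simp only [Prod.fst_one, Prod.snd_one] at haf hbf
  have ha : (toAdd v).1 = 0 := by
    have := congrArg toAdd haf
    simpa using this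
  have hbc : (toAdd v).2.1 + (toAdd v).2.2 = 0 := by
    rw [DihedralGroup.one_def, r.injEq] at hbf
    exact hbf
  have e2 := hv' (1, sr 0)
  rw [holPerm_apply, Prod.mk_mul_mk, Prod.mk_mul_mk, r_mul_sr, sr_mul_r, mul_one, mul_one] at e2
  have e2' := congrArg Prod.snd e2
  simp only at e2'
  rw [sr.injEq] at e2'
  -- e2' : 0 - (toAdd v).2.1 + (toAdd v).2.2 = 0
  have hb : (toAdd v).2.1 = 0 := by
    apply hol_half_eq_zero hp hodd
    linear_combination hbc - e2'
  have hc : (toAdd v).2.2 = 0 := by linear_combination hbc - hb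
  have : toAdd v = 0 := by
    apply Prod.ext ha
    apply Prod.ext hb hc
  rw [← ofAdd_toAdd v, this, ofAdd_zero]

private def holExt (p : ℕ) : Multiplicative (ZMod p) × DihedralGroup p → ZMod p
  | (_, DihedralGroup.r _) => 0
  | (_, DihedralGroup.sr j) => j

private lemma hol_ub (hp : p.Prime) (hodd : Odd p)
    (Q : Subgroup ↥(Hol (Multiplicative (ZMod p) × DihedralGroup p)))
    (hQ : IsPGroup p Q) : Nat.card Q ≤ p ^ 3 := by
  haveI := Fact.mk hp
  haveI : NeZero p := ⟨hp.ne_zero⟩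
  haveI : Fintype ↥Q := Fintype.ofFinite _
  haveI : Fintype (orbit ↥Q (1 : Multiplicative (ZMod p) × DihedralGroup p)) := Fintype.ofFinite _
  haveI : Fintype (stabilizer ↥Q (1 : Multiplicative (ZMod p) × DihedralGroup p)) :=
    Fintype.ofFinite _
  have key := MulAction.card_orbit_mul_card_stabilizer_eq_card_group ↥Q
    (1 : Multiplicative (ZMod p) × DihedralGroup p)
  -- data for each stabilizer element
  have hdata : ∀ q : stabilizer ↥Q (1 : Multiplicative (ZMod p) × DihedralGroup p),
      ∃ t : ZMod p,
        (∀ (c : Multiplicative (ZMod p)) (i : ZMod p),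
          (((q : ↥Q) : ↥(Hol (Multiplicative (ZMod p) × DihedralGroup p))) : Equiv.Perm (Multiplicative (ZMod p) × DihedralGroup p))
            (c, r i) = (c, r i)) ∧
        (∀ (c : Multiplicative (ZMod p)) (i : ZMod p),
          (((q : ↥Q) : ↥(Hol (Multiplicative (ZMod p) × DihedralGroup p))) : Equiv.Perm (Multiplicative (ZMod p) × DihedralGroup p))
            (c, sr i) = (c, sr (i + t))) := by
    intro q
    set σ : Equiv.Perm (Multiplicative (ZMod p) × DihedralGroup p) :=
      (((q : ↥Q) : ↥(Hol (Multiplicative (ZMod p) × DihedralGroup p))) : Equiv.Perm (Multiplicative (ZMod p) × DihedralGroup p)) with hσ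
    have hσHol : σ ∈ Hol (Multiplicative (ZMod p) × DihedralGroup p) :=
      ((q : ↥Q) : ↥(Hol (Multiplicative (ZMod p) × DihedralGroup p))).2
    have hσ1 : σ 1 = 1 := q.2
    obtain ⟨k, hk⟩ := IsPGroup.iff_orderOf.mp hQ (q : ↥Q)
    have hσord : σ ^ p ^ k = 1 := by
      have h : (q : ↥Q) ^ p ^ k = 1 := by
        rw [← hk]; exact pow_orderOf_eq_one _
      calc σ ^ p ^ k = ((((q : ↥Q) ^ p ^ k : ↥Q) :
          ↥(Hol (Multiplicative (ZMod p) × DihedralGroup p))) : Equiv.Perm (Multiplicative (ZMod p) × DihedralGroup p)) := by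
            rw [hσ]; norm_cast
        _ = 1 := by rw [h]; rfl
    exact hol_key hp hodd σ (hol_fix_one_mul hσHol hσ1) hσord
  have hstab : Fintype.card
      (stabilizer ↥Q (1 : Multiplicative (ZMod p) × DihedralGroup p)) ≤ p := by
    have hinj : Function.Injective
        (fun q : stabilizer ↥Q (1 : Multiplicative (ZMod p) × DihedralGroup p) =>
          holExt p
            ((((q : ↥Q) : ↥(Hol (Multiplicative (ZMod p) × DihedralGroup p))) : Equiv.Perm (Multiplicative (ZMod p) × DihedralGroup p))
              (1, sr 0))) := by
      intro q q' h
      obtain ⟨t, hr, hs⟩ := hdata q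
      obtain ⟨t', hr', hs'⟩ := hdata q'
      have hval : holExt p
          ((((q : ↥Q) : ↥(Hol (Multiplicative (ZMod p) × DihedralGroup p))) : Equiv.Perm (Multiplicative (ZMod p) × DihedralGroup p))
            (1, sr 0)) = t := by rw [hs 1 0, holExt]; rw [zero_add]
      have hval' : holExt p
          ((((q' : ↥Q) : ↥(Hol (Multiplicative (ZMod p) × DihedralGroup p))) : Equiv.Perm (Multiplicative (ZMod p) × DihedralGroup p))
            (1, sr 0)) = t' := by rw [hs' 1 0, holExt]; rw [zero_add]
      have htt : t = t' := by rw [← hval, ← hval']; exact h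
      have hperm : (((q : ↥Q) : ↥(Hol (Multiplicative (ZMod p) × DihedralGroup p))) :
            Equiv.Perm (Multiplicative (ZMod p) × DihedralGroup p))
          = (((q' : ↥Q) : ↥(Hol (Multiplicative (ZMod p) × DihedralGroup p))) :
            Equiv.Perm (Multiplicative (ZMod p) × DihedralGroup p)) := by
        apply Equiv.ext
        rintro ⟨c, i | i⟩
        · rw [hr, hr']
        · rw [hs, hs', htt]
      exact Subtype.ext (Subtype.ext (Subtype.ext hperm))
    calc Fintype.card (stabilizer ↥Q (1 : Multiplicative (ZMod p) × DihedralGroup p))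
        ≤ Fintype.card (ZMod p) := Fintype.card_le_of_injective _ hinj
      _ = p := ZMod.card p
  have horb : Fintype.card
      (orbit ↥Q (1 : Multiplicative (ZMod p) × DihedralGroup p)) ≤ p ^ 2 := by
    have hdvd : Fintype.card (orbit ↥Q (1 : Multiplicative (ZMod p) × DihedralGroup p))
        ∣ Fintype.card ↥Q :=
      ⟨Fintype.card (stabilizer ↥Q (1 : Multiplicative (ZMod p) × DihedralGroup p)), key.symm⟩
    obtain ⟨n, hn⟩ := IsPGroup.iff_card.mp hQ
    rw [Nat.card_eq_fintype_card] at hn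
    rw [hn] at hdvd
    obtain ⟨j, hj, hcard⟩ := (Nat.dvd_prime_pow hp).mp hdvd
    have hle : Fintype.card (orbit ↥Q (1 : Multiplicative (ZMod p) × DihedralGroup p))
        ≤ Fintype.card (Multiplicative (ZMod p) × DihedralGroup p) :=
      Fintype.card_le_of_injective _ Subtype.val_injective
    have hX : Fintype.card (Multiplicative (ZMod p) × DihedralGroup p) = 2 * p ^ 2 := by
      rw [Fintype.card_prod, Fintype.card_multiplicative, ZMod.card, DihedralGroup.card]
      ring
    have hp3 : 3 ≤ p := by
      have h2 := hp.two_le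
      rcases Nat.lt_or_ge p 3 with h | h
      · interval_cases p
        · simp [Nat.odd_iff] at hodd
      · exact h
    have h23 : 2 * p ^ 2 < p ^ 3 := by nlinarith
    have hjlt : p ^ j < p ^ 3 := by
      calc p ^ j = Fintype.card (orbit ↥Q (1 : Multiplicative (ZMod p) × DihedralGroup p)) :=
            hcard.symm
        _ ≤ 2 * p ^ 2 := hX ▸ hle
        _ < p ^ 3 := h23
    have hj3 : j < 3 := (Nat.pow_lt_pow_iff_right hp.one_lt).mp hjlt
    calc Fintype.card (orbit ↥Q (1 : Multiplicative (ZMod p) × DihedralGroup p)) = p ^ j :=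
          hcard
      _ ≤ p ^ 2 := Nat.pow_le_pow_right hp.pos (by omega)
  calc Nat.card ↥Q = Fintype.card ↥Q := Nat.card_eq_fintype_card
    _ = Fintype.card (orbit ↥Q (1 : Multiplicative (ZMod p) × DihedralGroup p))
        * Fintype.card (stabilizer ↥Q (1 : Multiplicative (ZMod p) × DihedralGroup p)) :=
        key.symm
    _ ≤ p ^ 2 * p := Nat.mul_le_mul horb hstab
    _ = p ^ 3 := by ring

end HolAux

open DihedralGroup Multiplicative Equiv MulAction in
/-- Every Sylow `p`-subgroup of `Hol(ZMod p × DihedralGroup p)` (`p` an odd prime) has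
order `p ^ 3` and is elementary abelian, i.e. isomorphic to `C_p × C_p × C_p`. -/
theorem sylow_hol_cyclic_prod_dihedral (p : ℕ) (hp : p.Prime) (hodd : Odd p)
    (P : Sylow p ↥(Hol (Multiplicative (ZMod p) × DihedralGroup p))) :
    Nat.card ↥P.toSubgroup = p ^ 3 ∧
    Nonempty (↥P.toSubgroup ≃* Multiplicative (ZMod p × ZMod p × ZMod p)) := by
  haveI := Fact.mk hp
  haveI : NeZero p := ⟨hp.ne_zero⟩
  set ψ' : Multiplicative (ZMod p × ZMod p × ZMod p) →*
      ↥(Hol (Multiplicative (ZMod p) × DihedralGroup p)) :=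
    (holPsi p).codRestrict (Hol (Multiplicative (ZMod p) × DihedralGroup p))
      (holPsi_mem p) with hψ'
  have hψ'inj : Function.Injective ψ' := by
    intro a b hab
    apply holPsi_injective hp hodd
    have := congrArg Subtype.val hab
    simpa [hψ'] using this
  set e0 : Multiplicative (ZMod p × ZMod p × ZMod p) ≃* ψ'.range :=
    MonoidHom.ofInjective hψ'inj with he0
  have hcardS : Nat.card ψ'.range = p ^ 3 := by
    rw [← Nat.card_congr e0.toEquiv]
    simp [Nat.card_eq_fintype_card, Fintype.card_multiplicative, ZMod.card]
    ring
  have hSp : IsPGroup p ψ'.range := IsPGroup.of_card hcardS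
  obtain ⟨Q, hQ⟩ := hSp.exists_le_sylow
  have hQcard : Nat.card Q.toSubgroup = p ^ 3 :=
    le_antisymm (hol_ub hp hodd Q.toSubgroup Q.2)
      (hcardS ▸ Subgroup.card_le_of_le hQ)
  have hSQ : ψ'.range = Q.toSubgroup :=
    Subgroup.eq_of_le_of_card_ge hQ (le_of_eq (hQcard.trans hcardS.symm))
  let e1 : ↥P.toSubgroup ≃* ↥Q.toSubgroup := Sylow.equiv P Q
  constructor
  · rw [← hQcard]
    exact Nat.card_congr e1.toEquiv
  · exact ⟨e1.trans ((MulEquiv.subgroupCongr hSQ.symm).trans e0.symm)⟩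
end

section
/- Let p be an odd prime. Every Sylow p-subgroup of the holomorph Hol(ZMod p × ZMod (2p)) has order p^3, is nonabelian, and has exponent p (it is isomorphic to the Heisenberg group of order p^3). -/
set_option linter.unusedSectionVars false

namespace SylowHolAux

open Multiplicative

variable (p : ℕ)

local notation "A" => (ZMod p × ZMod (2 * p))
local notation "X" => Multiplicative (ZMod p × ZMod (2 * p))

/-- The canonical ring hom `ZMod (2p) → ZMod p`. -/
def cm : ZMod (2 * p) →+* ZMod p := ZMod.castHom (dvd_mul_left p 2) (ZMod p)

/-- The embedding of `ZMod p` into the `p`-torsion of `ZMod (2p)`. -/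
def jm (v : ZMod p) : ZMod (2 * p) := ((2 * v.val : ℕ) : ZMod (2 * p))

/-- An element of the Heisenberg-type subgroup of the holomorph. -/
def hperm (u w : ZMod p) (t : ZMod (2 * p)) : Equiv.Perm X where
  toFun x := ofAdd (x.toAdd.1 + u + w * cm p x.toAdd.2, x.toAdd.2 + t)
  invFun x := ofAdd (x.toAdd.1 - u - w * cm p (x.toAdd.2 - t), x.toAdd.2 - t)
  left_inv x := by
    simp only [toAdd_ofAdd, add_sub_cancel_right]
    rw [show x.toAdd.1 + u + w * cm p x.toAdd.2 - u - w * cm p x.toAdd.2 = x.toAdd.1 by ring]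
    rfl
  right_inv x := by
    simp only [toAdd_ofAdd, sub_add_cancel]
    rw [show x.toAdd.1 - u - w * cm p (x.toAdd.2 - t) + u + w * cm p (x.toAdd.2 - t)
        = x.toAdd.1 by ring]
    rfl

variable {p}

lemma hperm_apply (u w : ZMod p) (t : ZMod (2 * p)) (x : X) :
    hperm p u w t x = ofAdd (x.toAdd.1 + u + w * cm p x.toAdd.2, x.toAdd.2 + t) := rfl

lemma hperm_mul (u u' w w' : ZMod p) (t t' : ZMod (2 * p)) :
    hperm p u w t * hperm p u' w' t' =
      hperm p (u + u' + w * cm p t') (w + w') (t + t') := by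
  refine Equiv.ext fun x => ?_
  simp only [Equiv.Perm.mul_apply, hperm_apply, toAdd_ofAdd, map_add]
  refine congrArg ofAdd (Prod.ext ?_ ?_) <;> simp <;> ring

lemma hperm_one : hperm p 0 0 0 = 1 := by
  refine Equiv.ext fun x => ?_
  simp [hperm_apply]

lemma hperm_inv (u w : ZMod p) (t : ZMod (2 * p)) :
    (hperm p u w t)⁻¹ = hperm p (-u + w * cm p t) (-w) (-t) := by
  refine inv_eq_of_mul_eq_one_right ?_
  rw [hperm_mul]
  rw [show u + (-u + w * cm p t) + w * cm p (-t) = 0 by rw [map_neg]; ring]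
  simp [hperm_one]

section NeZeroP

variable [NeZero p]

lemma jm_add (v v' : ZMod p) : jm p (v + v') = jm p v + jm p v' := by
  unfold jm
  have h := ZMod.val_add v v'
  set s := v.val + v'.val with hs
  have key : (2 * (s % p) + 2 * p * (s / p) : ℕ) = 2 * s := by
    rw [mul_assoc, ← Nat.left_distrib, Nat.mod_add_div]
  have hcast := congrArg (Nat.cast : ℕ → ZMod (2 * p)) key
  have h2p : ((2 : ZMod (2 * p)) * (p : ℕ)) = 0 := by
    have := ZMod.natCast_self (2 * p)
    push_cast at this
    linear_combination this
  have hs' : ((s : ℕ) : ZMod (2 * p)) = (v.val : ZMod (2 * p)) + (v'.val : ZMod (2 * p)) := by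
    rw [hs]; push_cast; ring
  rw [h]
  push_cast at hcast ⊢
  linear_combination hcast - ((s / p : ℕ) : ZMod (2 * p)) * h2p + 2 * hs'

lemma jm_zero : jm p 0 = 0 := by
  simp [jm, ZMod.val_zero]

lemma jm_neg (v : ZMod p) : jm p (-v) = -jm p v := by
  have := jm_add v (-v)
  rw [add_neg_cancel, jm_zero] at this
  linear_combination -this

lemma cm_jm (v : ZMod p) : cm p (jm p v) = 2 * v := by
  unfold cm jm
  rw [map_natCast]
  push_cast
  rw [ZMod.natCast_val, ZMod.cast_id]

lemma hperm_pow (u w : ZMod p) (t : ZMod (2 * p)) (n : ℕ) :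
    (hperm p u w t) ^ n =
      hperm p ((n : ZMod p) * u + ((n.choose 2 : ℕ) : ZMod p) * (w * cm p t))
        ((n : ZMod p) * w) ((n : ZMod (2 * p)) * t) := by
  induction n with
  | zero => simp [hperm_one]
  | succ n ih =>
    rw [pow_succ, ih, hperm_mul]
    have hch : ((n + 1).choose 2 : ℕ) = n.choose 2 + n := by
      simp [Nat.choose_succ_succ, Nat.add_comm]
    rw [hch]
    push_cast
    ring_nf

variable (p) in
/-- The Heisenberg-type subgroup of `Equiv.Perm X`. -/
def HH : Subgroup (Equiv.Perm X) where
  carrier := { σ | ∃ u w v : ZMod p, σ = hperm p u w (jm p v) }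
  mul_mem' := by
    rintro _ _ ⟨u, w, v, rfl⟩ ⟨u', w', v', rfl⟩
    exact ⟨u + u' + w * cm p (jm p v'), w + w', v + v', by rw [hperm_mul, jm_add]⟩
  one_mem' := ⟨0, 0, 0, by rw [jm_zero, hperm_one]⟩
  inv_mem' := by
    rintro _ ⟨u, w, v, rfl⟩
    exact ⟨-u + w * cm p (jm p v), -w, -v, by rw [hperm_inv, jm_neg]⟩

lemma hperm_inj {u w u' w' : ZMod p} {t t' : ZMod (2 * p)}
    (h : hperm p u w t = hperm p u' w' t') : u = u' ∧ w = w' ∧ t = t' := by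
  have h0 := congrArg (fun σ : Equiv.Perm X => σ (ofAdd (0, 0))) h
  have h1 := congrArg (fun σ : Equiv.Perm X => σ (ofAdd (0, 1))) h
  simp only [hperm_apply, toAdd_ofAdd, map_zero, map_one, mul_zero, mul_one,
    add_zero, zero_add] at h0 h1
  rw [EmbeddingLike.apply_eq_iff_eq, Prod.mk.injEq] at h0 h1
  obtain ⟨hu, ht⟩ := h0
  obtain ⟨huw, -⟩ := h1
  rw [hu] at huw
  exact ⟨hu, add_left_cancel huw, ht⟩

section Prime

variable [Fact p.Prime]

lemma p_ne_two (hodd : Odd p) : p ≠ 2 := by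
  rintro rfl
  simp [Nat.odd_iff] at hodd

lemma two_ne_zero' (hodd : Odd p) : (2 : ZMod p) ≠ 0 := by
  intro h
  have h2 : ((2 : ℕ) : ZMod p) = 0 := by exact_mod_cast h
  rw [ZMod.natCast_eq_zero_iff] at h2
  exact p_ne_two hodd ((Nat.prime_dvd_prime_iff_eq Fact.out Nat.prime_two).mp h2)

lemma jm_inj (hodd : Odd p) : Function.Injective (jm p) := by
  intro v v' h
  have := congrArg (cm p) h
  rw [cm_jm, cm_jm] at this
  exact mul_left_cancel₀ (two_ne_zero' hodd) this

lemma hperm_pow_p (hodd : Odd p) (u w : ZMod p) (v : ZMod p) :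
    (hperm p u w (jm p v)) ^ p = 1 := by
  rw [hperm_pow]
  have h1 : ((p : ℕ) : ZMod p) = 0 := ZMod.natCast_self p
  have h2 : ((p.choose 2 : ℕ) : ZMod p) = 0 := by
    rw [ZMod.natCast_eq_zero_iff]
    refine Nat.Prime.dvd_choose_self Fact.out (by norm_num) ?_
    exact lt_of_le_of_ne (Fact.out : p.Prime).two_le (Ne.symm (p_ne_two hodd))
  have h3 : ((p : ℕ) : ZMod (2 * p)) * jm p v = 0 := by
    unfold jm
    rw [← Nat.cast_mul, show p * (2 * v.val) = (2 * p) * v.val by ring,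
      Nat.cast_mul, ZMod.natCast_self, zero_mul]
  rw [h1, h2, h3]
  simp [hperm_one]

lemma hperm_lambda (u w : ZMod p) (t : ZMod (2 * p)) (g : X) :
    hperm p u w t * (MulAction.toPermHom X X) g =
      (MulAction.toPermHom X X) (ofAdd (g.toAdd.1 + w * cm p g.toAdd.2, g.toAdd.2)) *
        hperm p u w t := by
  refine Equiv.ext fun x => ?_
  simp only [Equiv.Perm.mul_apply, MulAction.toPermHom_apply, MulAction.toPerm_apply,
    smul_eq_mul, hperm_apply]
  apply Multiplicative.toAdd.injective
  simp only [toAdd_mul, toAdd_ofAdd, Prod.fst_add, Prod.snd_add, map_add]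
  refine Prod.ext ?_ ?_ <;> simp <;> ring

lemma hperm_conj (u w : ZMod p) (t : ZMod (2 * p)) (g : X) :
    hperm p u w t * (MulAction.toPermHom X X) g * (hperm p u w t)⁻¹ =
      (MulAction.toPermHom X X) (ofAdd (g.toAdd.1 + w * cm p g.toAdd.2, g.toAdd.2)) :=
  mul_inv_eq_iff_eq_mul.mpr (hperm_lambda u w t g)

lemma hperm_mem_hol (u w : ZMod p) (t : ZMod (2 * p)) : hperm p u w t ∈ Hol X := by
  rw [Hol, Subgroup.mem_normalizer_iff]
  intro h
  constructor
  · rintro ⟨g, rfl⟩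
    exact ⟨_, (hperm_conj u w t g).symm⟩
  · rintro ⟨g, hg⟩
    have hh : h = (hperm p u w t)⁻¹ * ((MulAction.toPermHom X X) g) * ((hperm p u w t)⁻¹)⁻¹ := by
      rw [inv_inv, hg]
      group
    rw [hperm_inv] at hh
    rw [hh, hperm_conj]
    exact ⟨_, rfl⟩

lemma HH_le_hol : HH (p := p) ≤ Hol X := by
  rintro _ ⟨u, w, v, rfl⟩
  exact hperm_mem_hol u w (jm p v)

lemma card_HH (hodd : Odd p) : Nat.card (HH (p := p)) = p ^ 3 := by
  have hbij : Function.Bijective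
      (fun x : ZMod p × ZMod p × ZMod p =>
        (⟨hperm p x.1 x.2.1 (jm p x.2.2), ⟨x.1, x.2.1, x.2.2, rfl⟩⟩ : HH p)) := by
    constructor
    · rintro ⟨u, w, v⟩ ⟨u', w', v'⟩ h
      rw [Subtype.ext_iff] at h
      obtain ⟨h1, h2, h3⟩ := hperm_inj h
      exact Prod.ext h1 (Prod.ext h2 (jm_inj hodd h3))
    · rintro ⟨σ, u, w, v, rfl⟩
      exact ⟨(u, w, v), rfl⟩
  rw [← Nat.card_eq_of_bijective _ hbij]
  simp [Nat.card_prod, Nat.card_zmod]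
  ring

lemma pow_p_eq_one (hodd : Odd p) (g : HH p) : g ^ p = 1 := by
  obtain ⟨σ, u, w, v, rfl⟩ := g
  rw [Subtype.ext_iff]
  simp only [SubmonoidClass.coe_pow, OneMemClass.coe_one]
  exact hperm_pow_p hodd u w v

lemma isPGroup_HH (hodd : Odd p) : IsPGroup p (HH (p := p)) :=
  fun g => ⟨1, by rw [pow_one]; exact pow_p_eq_one hodd g⟩

lemma nonabelian_HH (hodd : Odd p) :
    ∃ a b : (HH (p := p)), a * b ≠ b * a := by
  refine ⟨⟨hperm p 0 1 (jm p 0), ⟨0, 1, 0, rfl⟩⟩, ⟨hperm p 0 0 (jm p 1), ⟨0, 0, 1, rfl⟩⟩, ?_⟩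
  intro h
  rw [Subtype.ext_iff] at h
  simp only [Subgroup.coe_mul] at h
  rw [hperm_mul, hperm_mul] at h
  obtain ⟨h1, -, -⟩ := hperm_inj h
  simp only [cm_jm, jm_zero, map_zero, mul_zero, mul_one, zero_add, add_zero] at h1
  exact two_ne_zero' hodd (by linear_combination h1)

lemma exponent_HH (hodd : Odd p) : Monoid.exponent (HH (p := p)) = p := by
  have hdvd : Monoid.exponent (HH (p := p)) ∣ p :=
    Monoid.exponent_dvd_of_forall_pow_eq_one (pow_p_eq_one hodd)
  rcases (Nat.Prime.eq_one_or_self_of_dvd Fact.out _ hdvd) with h1 | h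
  · exfalso
    obtain ⟨a, b, hab⟩ := nonabelian_HH hodd
    have hone : ∀ g : (HH (p := p)), g = 1 := fun g => by
      have hg := Monoid.pow_exponent_eq_one g
      rwa [h1, pow_one] at hg
    exact hab (by rw [hone a, hone b])
  · exact h

local notation "V" => (ZMod p × ZMod p)
local notation "B" => ((ZMod p × ZMod p) × ZMod 2)

lemma psmul_zmodp (a : ZMod p) : p • a = 0 := by
  rw [nsmul_eq_mul, ZMod.natCast_self, zero_mul]

lemma two_smul_zmodp_eq_zero (hodd : Odd p) {a : ZMod p} (h : (2 : ℕ) • a = 0) : a = 0 := by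
  rw [nsmul_eq_mul, Nat.cast_ofNat] at h
  rcases mul_eq_zero.mp h with h2 | h
  · exact absurd h2 (two_ne_zero' hodd)
  · exact h

lemma natCast_p_zmod_two (hodd : Odd p) : ((p : ℕ) : ZMod 2) = 1 := by
  have h := Nat.odd_iff.mp hodd
  rw [← ZMod.natCast_mod, h, Nat.cast_one]

lemma torsion_snd (hodd : Odd p) (f : B ≃+ B) (v : ZMod p × ZMod p) : (f (v, 0)).2 = 0 := by
  have h0 : (p : ℕ) • ((v, (0 : ZMod 2)) : B) = 0 := by
    refine Prod.ext ?_ ?_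
    · refine Prod.ext ?_ ?_ <;> simp [psmul_zmodp]
    · simp
  have h1 : (p : ℕ) • f (v, 0) = 0 := by rw [← map_nsmul, h0, map_zero]
  have h2 : (p : ℕ) • (f (v, 0)).2 = 0 := by rw [← Prod.smul_snd, h1]; rfl
  rwa [nsmul_eq_mul, natCast_p_zmod_two hodd, one_mul] at h2

lemma two_torsion_fix (hodd : Odd p) (f : B ≃+ B) (c : ZMod 2) : f (0, c) = (0, c) := by
  have h0 : (2 : ℕ) • ((0, c) : B) = 0 := by
    refine Prod.ext (by simp) ?_
    rw [Prod.smul_snd, nsmul_eq_mul]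
    rw [show ((2 : ℕ) : ZMod 2) = 0 from by exact_mod_cast ZMod.natCast_self 2, zero_mul]
    rfl
  have h1 : (2 : ℕ) • f (0, c) = 0 := by rw [← map_nsmul, h0, map_zero]
  have hfst : (f (0, c)).1 = 0 := by
    have h2 : (2 : ℕ) • (f (0, c)).1 = 0 := by rw [← Prod.smul_fst, h1]; rfl
    refine Prod.ext ?_ ?_
    · apply two_smul_zmodp_eq_zero hodd
      rw [← Prod.smul_fst, h2]; rfl
    · apply two_smul_zmodp_eq_zero hodd
      rw [← Prod.smul_snd, h2]; rfl
  have hzmod2 : ∀ z : ZMod 2, z = 0 ∨ z = 1 := by decide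
  rcases hzmod2 c with rfl | rfl
  · have : ((0 : ZMod p × ZMod p), (0 : ZMod 2)) = (0 : B) := rfl
    rw [this, map_zero]
  · have hsnd : (f (0, 1)).2 = 1 := by
      rcases hzmod2 (f (0, 1)).2 with h | h
      · exfalso
        have hzero : f (0, 1) = 0 := by
          refine Prod.ext hfst h
        have := f.injective (by rw [hzero, map_zero] : f (0, 1) = f 0)
        rw [Prod.ext_iff] at this
        have h01 : (1 : ZMod 2) = 0 := this.2
        exact absurd h01 (by decide)
      · exact h
    exact Prod.ext hfst hsnd

/-- Restriction of an additive automorphism of `B` to the `p`-torsion part. -/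
def phiAux (hodd : Odd p) (f : B ≃+ B) : (ZMod p × ZMod p) ≃+ (ZMod p × ZMod p) where
  toFun v := (f (v, 0)).1
  invFun v := (f.symm (v, 0)).1
  left_inv v := by
    have h : ((f (v, 0)).1, (0 : ZMod 2)) = f (v, 0) :=
      Prod.ext rfl (torsion_snd hodd f v).symm
    show (f.symm ((f (v, 0)).1, 0)).1 = v
    rw [h, AddEquiv.symm_apply_apply]
  right_inv v := by
    have h : ((f.symm (v, 0)).1, (0 : ZMod 2)) = f.symm (v, 0) :=
      Prod.ext rfl (torsion_snd hodd f.symm v).symm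
    show (f ((f.symm (v, 0)).1, 0)).1 = v
    rw [h, AddEquiv.apply_symm_apply]
  map_add' v v' := by
    have h : ((v + v' : ZMod p × ZMod p), (0 : ZMod 2)) = ((v, 0) : B) + (v', 0) := by
      refine Prod.ext rfl (by simp)
    show (f (v + v', 0)).1 = (f (v, 0)).1 + (f (v', 0)).1
    rw [h, map_add]
    rfl

/-- The composition group structure on `AddAut M`. -/
instance addAutCompGroup (M : Type*) [Add M] : Group (AddAut M) where
  mul g h := AddEquiv.trans h g
  one := AddEquiv.refl _
  inv := AddEquiv.symm
  mul_assoc _ _ _ := rfl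
  one_mul _ := rfl
  mul_one _ := rfl
  inv_mul_cancel := AddEquiv.self_trans_symm

/-- The restriction homomorphism `AddAut B →* AddAut V`. -/
def phi (hodd : Odd p) : AddAut B →* AddAut (ZMod p × ZMod p) where
  toFun f := phiAux hodd f
  map_one' := by
    refine DFunLike.ext _ _ fun v => ?_
    rfl
  map_mul' f g := by
    refine DFunLike.ext _ _ fun v => ?_
    show (f ((g (v, 0) : B))).1 = (f ((phiAux hodd g v, 0) : B)).1
    have h : ((phiAux hodd g v, (0 : ZMod 2)) : B) = g (v, 0) :=
      Prod.ext rfl (torsion_snd hodd g v).symm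
    rw [h]
  
lemma phi_inj (hodd : Odd p) : Function.Injective (phi (p := p) hodd) := by
  rw [injective_iff_map_eq_one]
  intro f hf
  refine DFunLike.ext _ _ fun x => ?_
  obtain ⟨v, c⟩ := x
  have h1 : f (v, 0) = ((v, 0) : B) := by
    refine Prod.ext ?_ (torsion_snd hodd f v)
    exact congrArg (fun e : AddAut (ZMod p × ZMod p) => e v) hf
  have h2 : f (0, c) = ((0, c) : B) := two_torsion_fix hodd f c
  have h3 : ((v, c) : B) = (v, 0) + (0, c) := by
    refine Prod.ext (by simp) (by simp)
  rw [h3, map_add, h1, h2]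
  rfl

/-- `V ≃+ (Fin 2 → ZMod p)`. -/
def eVF : (ZMod p × ZMod p) ≃+ (Fin 2 → ZMod p) where
  toFun v := ![v.1, v.2]
  invFun g := (g 0, g 1)
  left_inv v := by simp
  right_inv g := by
    funext i
    fin_cases i <;> simp
  map_add' v v' := by
    funext i
    fin_cases i <;> simp

/-- `AddAut (Fin 2 → ZMod p)` as linear automorphisms. -/
def eAutLin [Fact p.Prime] :
    AddAut (Fin 2 → ZMod p) ≃* ((Fin 2 → ZMod p) ≃ₗ[ZMod p] (Fin 2 → ZMod p)) where
  toFun f := AddEquiv.toLinearEquiv f (fun c x => ZMod.map_smul f c x)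
  invFun e := e.toAddEquiv
  left_inv f := by ext x; rfl
  right_inv e := by ext x; rfl
  map_mul' f g := by ext x; rfl

lemma card_addAut_V [Fact p.Prime] :
    Nat.card (AddAut (ZMod p × ZMod p)) = (p ^ 2 - 1) * (p ^ 2 - p) := by
  haveI : NeZero p := ⟨(Fact.out : p.Prime).ne_zero⟩
  have e : AddAut (ZMod p × ZMod p) ≃* GL (Fin 2) (ZMod p) :=
    ((MulEquiv.mk' (AddAut.congr (eVF (p := p))).toEquiv
      (fun f g => (AddAut.congr (eVF (p := p))).map_add f g)).trans (eAutLin (p := p))).trans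
      ((LinearMap.GeneralLinearGroup.generalLinearEquiv (ZMod p) (Fin 2 → ZMod p)).symm.trans
        (Matrix.GeneralLinearGroup.toLin).symm)
  rw [Nat.card_congr e.toEquiv, Matrix.card_GL_field, Fin.prod_univ_two]
  simp [ZMod.card]

lemma card_mulAut_dvd [Fact p.Prime] (hodd : Odd p) :
    Nat.card (MulAut X) ∣ (p ^ 2 - 1) * (p ^ 2 - p) := by
  haveI : NeZero p := ⟨(Fact.out : p.Prime).ne_zero⟩
  have e5 : MulAut X ≃* AddAut (ZMod p × ZMod (2 * p)) := by
    refine MulEquiv.mk' (Equiv.mk (fun f => AddEquiv.toMultiplicative.symm f)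
      (fun g => AddEquiv.toMultiplicative g) (fun f => rfl) (fun g => rfl)) ?_
    intro f g
    rfl
  have crt : ZMod (2 * p) ≃+ (ZMod 2 × ZMod p) :=
    (ZMod.chineseRemainder ((Nat.coprime_two_left).mpr hodd)).toAddEquiv
  have shuffle : (ZMod p × (ZMod 2 × ZMod p)) ≃+ B :=
    { toFun := fun x => ((x.1, x.2.2), x.2.1)
      invFun := fun y => (y.1.1, (y.2, y.1.2))
      left_inv := fun _ => rfl
      right_inv := fun _ => rfl
      map_add' := fun _ _ => rfl }
  have eAB : (ZMod p × ZMod (2 * p)) ≃+ B :=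
    (AddEquiv.prodCongr (AddEquiv.refl (ZMod p)) crt).trans shuffle
  haveI : Finite (AddAut B) :=
    Finite.of_injective (fun f : AddAut B => (f : B → B)) DFunLike.coe_injective
  haveI : Finite (AddAut (ZMod p × ZMod p)) :=
    Finite.of_injective
      (fun f : AddAut (ZMod p × ZMod p) => (f : (ZMod p × ZMod p) → (ZMod p × ZMod p)))
      DFunLike.coe_injective
  have h1 : Nat.card (MulAut X) = Nat.card (AddAut B) := by
    refine Nat.card_congr (e5.toEquiv.trans (AddAut.congr eAB).toEquiv)
  rw [h1, ← card_addAut_V (p := p)]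
  exact Subgroup.card_dvd_of_injective (phi (p := p) hodd) (phi_inj hodd)

lemma hol_apply_mul (σ : Equiv.Perm X) (hσ : σ ∈ Hol X) (x y : X) :
    σ (x * y) = σ x * (σ 1)⁻¹ * σ y := by
  obtain ⟨g, hg⟩ := (Subgroup.mem_normalizer_iff.mp hσ ((MulAction.toPermHom X X) x)).mp ⟨x, rfl⟩
  have h1 : ∀ z : X, g * σ z = σ (x * z) := fun z => by
    have := congrArg (fun τ : Equiv.Perm X => τ (σ z)) hg
    simpa [MulAction.toPermHom_apply, MulAction.toPerm_apply, smul_eq_mul,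
      Equiv.Perm.mul_apply] using this
  have h2 := h1 1
  rw [mul_one] at h2
  have h3 := h1 y
  rw [← h3, ← h2]
  group

lemma hol_apply_inv (σ : Equiv.Perm X) (hσ : σ ∈ Hol X) (x : X) :
    σ x⁻¹ = σ 1 * (σ x)⁻¹ * σ 1 := by
  have h := hol_apply_mul σ hσ x x⁻¹
  rw [mul_inv_cancel] at h
  calc σ x⁻¹ = (σ x * (σ 1)⁻¹)⁻¹ * (σ x * (σ 1)⁻¹ * σ x⁻¹) := by group
  _ = (σ x * (σ 1)⁻¹)⁻¹ * σ 1 := by rw [← h]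
  _ = σ 1 * (σ x)⁻¹ * σ 1 := by rw [mul_inv_rev, inv_inv]

variable (p) in
/-- The automorphism of `X` induced by an element of the holomorph. -/
def thetaAux (σ : ↥(Hol X)) : X ≃* X where
  toFun x := σ.1 x * (σ.1 1)⁻¹
  invFun y := σ.1.symm (y * σ.1 1)
  left_inv x := by simp [inv_mul_cancel_right]
  right_inv y := by simp [mul_inv_cancel_right]
  map_mul' x y := by
    show σ.1 (x * y) * (σ.1 1)⁻¹ = (σ.1 x * (σ.1 1)⁻¹) * (σ.1 y * (σ.1 1)⁻¹)
    rw [hol_apply_mul σ.1 σ.2 x y]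
    exact mul_assoc _ _ _

variable (p) in
/-- The homomorphism from the holomorph to the automorphism group. -/
def theta : ↥(Hol X) →* MulAut X where
  toFun := thetaAux p
  map_one' := by
    refine DFunLike.ext _ _ fun x => ?_
    show (1 : Equiv.Perm X) x * ((1 : Equiv.Perm X) 1)⁻¹ = x
    simp
  map_mul' σ τ := by
    refine DFunLike.ext _ _ fun x => ?_
    show (σ.1 * τ.1 : Equiv.Perm X) x * ((σ.1 * τ.1 : Equiv.Perm X) 1)⁻¹
      = σ.1 (τ.1 x * (τ.1 1)⁻¹) * (σ.1 1)⁻¹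
    simp only [Equiv.Perm.mul_apply]
    rw [hol_apply_mul σ.1 σ.2 (τ.1 x) ((τ.1 1)⁻¹), hol_apply_inv σ.1 σ.2 (τ.1 1)]
    group

lemma ker_theta_le :
    (theta p).ker ≤ ((MulAction.toPermHom X X).range).subgroupOf (Hol X) := by
  intro σ hσ
  rw [MonoidHom.mem_ker] at hσ
  show σ.1 ∈ (MulAction.toPermHom X X).range
  refine ⟨σ.1 1, ?_⟩
  refine Equiv.ext fun x => ?_
  simp only [MulAction.toPermHom_apply, MulAction.toPerm_apply, smul_eq_mul]
  have hx : σ.1 x * (σ.1 1)⁻¹ = x := DFunLike.congr_fun hσ x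
  calc σ.1 1 * x = x * σ.1 1 := mul_comm _ _
  _ = (σ.1 x * (σ.1 1)⁻¹) * σ.1 1 := by rw [hx]
  _ = σ.1 x := inv_mul_cancel_right _ _

lemma card_range_lambda :
    Nat.card (((MulAction.toPermHom X X).range).subgroupOf (Hol X)) = p * (2 * p) := by
  have hinj : Function.Injective (MulAction.toPermHom X X) := fun g g' h => by
    have := congrArg (fun f : Equiv.Perm X => f 1) h
    simpa [MulAction.toPermHom_apply, MulAction.toPerm_apply, smul_eq_mul] using this
  have e1 : (((MulAction.toPermHom X X).range).subgroupOf (Hol X)) ≃*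
      (MulAction.toPermHom X X).range :=
    Subgroup.subgroupOfEquivOfLe Subgroup.le_normalizer
  have e2 : X ≃* (MulAction.toPermHom X X).range := MonoidHom.ofInjective hinj
  rw [Nat.card_congr e1.toEquiv, Nat.card_congr e2.toEquiv.symm,
    Nat.card_congr (Multiplicative.toAdd (α := ZMod p × ZMod (2 * p))),
    Nat.card_prod, Nat.card_zmod, Nat.card_zmod]

lemma card_hol_dvd (hodd : Odd p) :
    Nat.card ↥(Hol X) ∣ ((p ^ 2 - 1) * (p ^ 2 - p)) * (p * (2 * p)) := by
  rw [Subgroup.card_eq_card_quotient_mul_card_subgroup (theta p).ker]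
  refine mul_dvd_mul ?_ ?_
  · rw [Nat.card_congr (QuotientGroup.quotientKerEquivRange (theta p)).toEquiv]
    exact (Subgroup.card_subgroup_dvd_card _).trans (card_mulAut_dvd hodd)
  · exact (Subgroup.card_dvd_of_le (ker_theta_le (p := p))).trans
      (dvd_of_eq (card_range_lambda (p := p)))

end Prime

end NeZeroP

end SylowHolAux

/-- Every Sylow `p`-subgroup of `Hol(ZMod p × ZMod (2p))` (`p` an odd prime) has order
`p ^ 3`, is nonabelian, and has exponent `p` (it is a Heisenberg group of order `p ^ 3`). -/
theorem sylow_hol_abelian_type (p : ℕ) (hp : p.Prime) (hodd : Odd p)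
    (P : Sylow p ↥(Hol (Multiplicative (ZMod p × ZMod (2 * p))))) :
    Nat.card ↥P.toSubgroup = p ^ 3 ∧
    (∃ a b : ↥P.toSubgroup, a * b ≠ b * a) ∧
    Monoid.exponent ↥P.toSubgroup = p := by
  haveI : Fact p.Prime := ⟨hp⟩
  haveI : NeZero p := ⟨hp.ne_zero⟩
  haveI : NeZero (2 * p) := ⟨Nat.mul_ne_zero two_ne_zero hp.ne_zero⟩
  set G := ↥(Hol (Multiplicative (ZMod p × ZMod (2 * p)))) with hG
  have hH3 : Nat.card (SylowHolAux.HH p) = p ^ 3 := SylowHolAux.card_HH hodd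
  have hle : SylowHolAux.HH p ≤ Hol (Multiplicative (ZMod p × ZMod (2 * p))) :=
    SylowHolAux.HH_le_hol
  set H' : Subgroup G :=
    (SylowHolAux.HH p).subgroupOf (Hol (Multiplicative (ZMod p × ZMod (2 * p)))) with hH'
  have eH' : H' ≃* (SylowHolAux.HH p) := Subgroup.subgroupOfEquivOfLe hle
  have hcardH' : Nat.card H' = p ^ 3 := by rw [Nat.card_congr eH'.toEquiv, hH3]
  have hPG : IsPGroup p H' := fun g => ⟨1, by
    rw [pow_one]
    apply eH'.injective
    rw [map_pow, map_one]
    exact SylowHolAux.pow_p_eq_one hodd (eH' g)⟩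
  obtain ⟨Q, hQ⟩ := hPG.exists_le_sylow
  have hN0 : Nat.card G ≠ 0 := Nat.card_pos.ne'
  have hdvd3 : p ^ 3 ∣ Nat.card G := hcardH' ▸ Subgroup.card_subgroup_dvd_card H'
  have hdvdM : Nat.card G ∣ ((p ^ 2 - 1) * (p ^ 2 - p)) * (p * (2 * p)) :=
    SylowHolAux.card_hol_dvd hodd
  have hfact : (Nat.card G).factorization p = 3 := by
    have h3le : 3 ≤ (Nat.card G).factorization p :=
      (Nat.Prime.pow_dvd_iff_le_factorization hp hN0).mp hdvd3
    have h4 : ¬ p ^ 4 ∣ Nat.card G := by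
      intro h4
      have h4M : p ^ 4 ∣ ((p ^ 2 - 1) * (p ^ 2 - p)) * (p * (2 * p)) := h4.trans hdvdM
      have hM : ((p ^ 2 - 1) * (p ^ 2 - p)) * (p * (2 * p))
          = p ^ 3 * ((p ^ 2 - 1) * ((p - 1) * 2)) := by
        have hsub : p ^ 2 - p = p * (p - 1) := by
          rw [Nat.mul_sub, mul_one, pow_two]
        rw [hsub]
        ring
      rw [hM, show p ^ 4 = p ^ 3 * p from by ring] at h4M
      have hppos : 0 < p ^ 3 := pow_pos hp.pos 3
      have hpd : p ∣ (p ^ 2 - 1) * ((p - 1) * 2) :=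
        (Nat.mul_dvd_mul_iff_left hppos).mp h4M
      have hple : 1 ≤ p := hp.one_lt.le
      rcases hp.dvd_mul.mp hpd with h | h
      · have hp2 : p ∣ p ^ 2 := dvd_pow_self p two_ne_zero
        have h1 : p ∣ p ^ 2 - (p ^ 2 - 1) := Nat.dvd_sub hp2 h
        rw [Nat.sub_sub_self (Nat.one_le_pow 2 p hp.pos)] at h1
        exact hp.one_lt.ne' (Nat.dvd_one.mp h1)
      · rcases hp.dvd_mul.mp h with h | h
        · have h1 : p ∣ p - (p - 1) := Nat.dvd_sub dvd_rfl h
          rw [Nat.sub_sub_self hple] at h1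
          exact hp.one_lt.ne' (Nat.dvd_one.mp h1)
        · exact SylowHolAux.p_ne_two hodd
            ((Nat.prime_dvd_prime_iff_eq hp Nat.prime_two).mp h)
    have h4le : (Nat.card G).factorization p ≤ 3 := by
      by_contra hgt
      push_neg at hgt
      exact h4 ((Nat.Prime.pow_dvd_iff_le_factorization hp hN0).mpr hgt)
    omega
  have hQcard : Nat.card Q.toSubgroup = p ^ 3 := by
    have := Sylow.card_eq_multiplicity Q
    rw [hfact] at this
    exact this
  have hHQ : H' = Q.toSubgroup := by
    refine Subgroup.eq_of_le_of_card_ge hQ ?_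
    rw [hQcard, hcardH']
  have e : ↥P.toSubgroup ≃* ↥(SylowHolAux.HH p) :=
    ((Sylow.equiv P Q).trans (MulEquiv.subgroupCongr hHQ.symm)).trans eH'
  refine ⟨?_, ?_, ?_⟩
  · have := Sylow.card_eq_multiplicity P
    rw [hfact] at this
    exact this
  · obtain ⟨a, b, hab⟩ := SylowHolAux.nonabelian_HH (p := p) hodd
    refine ⟨e.symm a, e.symm b, fun h => hab ?_⟩
    have := congrArg e h
    simpa [map_mul, MulEquiv.apply_symm_apply] using this
  · exact (Monoid.exponent_eq_of_mulEquiv e).trans (SylowHolAux.exponent_HH hodd)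
end
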